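/- arXiv:0907.1572 — 4 statements merged into one kernel-verified Lean document; each statement's English description precedes it below -/
import Mathlib

section
/- Let W be a standard Brownian motion, 0 < a < b, M ∈ ℝ, and Ψ(x) = ∫_x^∞ e^{−u²/2} du/√(2π). Then P(inf_{a≤t≤b} |W(t)−M| > 0) = ∫_ℝ [1 − 2Ψ(|v|/√(b−a))] · e^{−(M+v)²/(2a)}/√(2πa) dv. -/
set_option linter.unusedSectionVars false
set_option linter.unusedVariables false


open MeasureTheory ProbabilityTheory Real Set

/-- A standard one-dimensional Brownian motion on `[0,∞)`:
almost surely starts at `0`, has a.s. continuous paths, Gaussian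
increments of the right variance, and independent increments. -/
structure IsStdBrownianMotion {Ω : Type*} [MeasurableSpace Ω]
    (P : Measure Ω) (W : ℝ → Ω → ℝ) : Prop where
  isProb : IsProbabilityMeasure P
  meas : ∀ t, Measurable (W t)
  init : ∀ᵐ ω ∂P, W 0 ω = 0
  cont : ∀ᵐ ω ∂P, Continuous fun t => W t ω
  gauss : ∀ s t : ℝ, 0 ≤ s → s ≤ t →
    Measure.map (fun ω => W t ω - W s ω) P = gaussianReal 0 (t - s).toNNReal
  indep : ∀ (n : ℕ) (t : Fin (n + 1) → ℝ), (∀ i, 0 ≤ t i) → Monotone t →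
    iIndepFun
      (fun (i : Fin n) ω => W (t i.succ) ω - W (t i.castSucc) ω) P

/-- The upper tail of the standard Gaussian distribution. -/
noncomputable def gaussTail (x : ℝ) : ℝ :=
  ∫ u in Set.Ioi x, Real.exp (-u ^ 2 / 2) / Real.sqrt (2 * Real.pi)

open scoped ENNReal NNReal Topology

namespace BM4

lemma stdPDF_eq (x : ℝ) :
    gaussianPDFReal 0 1 x = Real.exp (-x ^ 2 / 2) / Real.sqrt (2 * Real.pi) := by
  simp [gaussianPDFReal, div_eq_inv_mul, mul_comm]

lemma gaussTail_eq_integral (d : ℝ) :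
    gaussTail d = ∫ x in Set.Ioi d, gaussianPDFReal 0 1 x := by
  simp only [gaussTail, stdPDF_eq]

lemma integrable_stdPDF : Integrable (fun u : ℝ => Real.exp (-u ^ 2 / 2) / Real.sqrt (2 * Real.pi)) := by
  have h := integrable_gaussianPDFReal 0 1
  refine h.congr (ae_of_all _ fun x => (stdPDF_eq x))

lemma stdPDF_nonneg (u : ℝ) : 0 ≤ Real.exp (-u ^ 2 / 2) / Real.sqrt (2 * Real.pi) := by
  positivity

lemma gaussTail_nonneg (x : ℝ) : 0 ≤ gaussTail x :=
  setIntegral_nonneg measurableSet_Ioi fun u _ => stdPDF_nonneg u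

lemma gaussTail_le_one (x : ℝ) : gaussTail x ≤ 1 := by
  rw [gaussTail_eq_integral]
  calc ∫ u in Set.Ioi x, gaussianPDFReal 0 1 u
      ≤ ∫ u, gaussianPDFReal 0 1 u :=
        setIntegral_le_integral (integrable_gaussianPDFReal 0 1)
          (ae_of_all _ fun u => gaussianPDFReal_nonneg 0 1 u)
    _ = 1 := integral_gaussianPDFReal_eq_one 0 one_ne_zero

lemma gaussTail_anti : Antitone gaussTail := by
  intro x y hxy
  exact setIntegral_mono_set integrable_stdPDF.integrableOn
    (ae_of_all _ fun u => stdPDF_nonneg u) (HasSubset.Subset.eventuallyLE (Set.Ioi_subset_Ioi hxy))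

lemma measurable_gaussTail : Measurable gaussTail := gaussTail_anti.measurable

/-- Change of variables for the Gaussian tail. -/
lemma gaussianReal_Ioi (v : ℝ≥0) (hv : v ≠ 0) (d : ℝ) :
    gaussianReal 0 v (Set.Ioi d) = ENNReal.ofReal (gaussTail (d / Real.sqrt v)) := by
  have hvpos : (0:ℝ) < (v:ℝ) := by positivity
  have hs : (0:ℝ) < Real.sqrt v := Real.sqrt_pos.2 hvpos
  rw [gaussianReal_apply_eq_integral 0 hv _]
  congr 1
  have key : ∀ x : ℝ, gaussianPDFReal 0 v (Real.sqrt v * x)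
      = (Real.sqrt v)⁻¹ * (Real.exp (-x ^ 2 / 2) / Real.sqrt (2 * Real.pi)) := by
    intro x
    simp only [gaussianPDFReal, sub_zero]
    have h2 : Real.sqrt (2 * Real.pi * v) = Real.sqrt (2 * Real.pi) * Real.sqrt v := by
      rw [Real.sqrt_mul (by positivity)]
    have h3 : (Real.sqrt v * x) ^ 2 = v * x ^ 2 := by
      rw [mul_pow, Real.sq_sqrt hvpos.le]
    rw [h2, h3]
    have h4 : -(v * x ^ 2) / (2 * v) = -x ^ 2 / 2 := by
      field_simp
    rw [h4]
    field_simp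
  have := MeasureTheory.integral_comp_mul_left_Ioi
    (fun x => gaussianPDFReal 0 v x) (d / Real.sqrt v) hs
  rw [mul_div_cancel₀ _ hs.ne'] at this
  -- this : ∫ x in Ioi (d / √v), pdf (√v * x) = (√v)⁻¹ • ∫ x in Ioi d, pdf x
  have h5 : ∫ x in Set.Ioi (d / Real.sqrt v), gaussianPDFReal 0 v (Real.sqrt v * x)
      = (Real.sqrt v)⁻¹ * gaussTail (d / Real.sqrt v) := by
    rw [show (fun x => gaussianPDFReal 0 v (Real.sqrt v * x))
        = fun x => (Real.sqrt v)⁻¹ * (Real.exp (-x ^ 2 / 2) / Real.sqrt (2 * Real.pi)) from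
        funext key] at this ⊢
    rw [integral_const_mul]
    rfl
  rw [h5] at this
  have h6 : (Real.sqrt v)⁻¹ • (∫ x in Set.Ioi d, gaussianPDFReal 0 v x)
      = (Real.sqrt v)⁻¹ * ∫ x in Set.Ioi d, gaussianPDFReal 0 v x := rfl
  rw [h6] at this
  have h7 := mul_left_cancel₀ (inv_ne_zero hs.ne') this.symm
  exact h7

lemma gaussianReal_map_neg (v : ℝ≥0) :
    (gaussianReal 0 v).map (fun x : ℝ => -x) = gaussianReal 0 v := by
  have hfun : (fun x : ℝ => -x) = (fun x : ℝ => (-1 : ℝ) * x) := by funext x; ring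
  rw [hfun, gaussianReal_map_const_mul]
  congr 1
  · ring
  · apply NNReal.coe_injective
    push_cast
    norm_num

lemma gaussianReal_Iio (v : ℝ≥0) (hv : v ≠ 0) (d : ℝ) :
    gaussianReal 0 v (Set.Iio (-d)) = ENNReal.ofReal (gaussTail (d / Real.sqrt v)) := by
  have h := gaussianReal_map_neg v
  have h2 : (gaussianReal 0 v).map (fun x : ℝ => -x) (Set.Ioi d)
      = gaussianReal 0 v (Set.Iio (-d)) := by
    rw [Measure.map_apply measurable_neg measurableSet_Ioi]
    congr 1
    ext x
    simp [lt_neg]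
  rw [← gaussianReal_Ioi v hv d, ← h2, h]

lemma gaussianReal_singleton (v : ℝ≥0) (hv : v ≠ 0) (x : ℝ) :
    gaussianReal 0 v {x} = 0 :=
  gaussianReal_absolutelyContinuous 0 hv (volume_singleton)

lemma gaussianReal_Icc_le (v : ℝ≥0) (hv : v ≠ 0) (u r : ℝ) :
    gaussianReal 0 v (Set.Icc u (u + r)) ≤ ENNReal.ofReal (r / Real.sqrt (2 * Real.pi * v)) := by
  have hvpos : (0:ℝ) < (v:ℝ) := by positivity
  rw [gaussianReal_apply _ hv]
  have hb : ∀ x : ℝ, gaussianPDF 0 v x ≤ ENNReal.ofReal ((Real.sqrt (2 * Real.pi * v))⁻¹) := by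
    intro x
    refine ENNReal.ofReal_le_ofReal ?_
    simp only [gaussianPDFReal, sub_zero]
    have : Real.exp (-x ^ 2 / (2 * v)) ≤ 1 := by
      rw [Real.exp_le_one_iff]
      apply div_nonpos_of_nonpos_of_nonneg (neg_nonpos.mpr (sq_nonneg x)) (by positivity)
    calc (Real.sqrt (2 * Real.pi * v))⁻¹ * Real.exp (-x ^ 2 / (2 * v))
        ≤ (Real.sqrt (2 * Real.pi * v))⁻¹ * 1 := by
          apply mul_le_mul_of_nonneg_left this (by positivity)
      _ = (Real.sqrt (2 * Real.pi * v))⁻¹ := mul_one _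
  calc ∫⁻ x in Set.Icc u (u + r), gaussianPDF 0 v x
      ≤ ∫⁻ _ in Set.Icc u (u + r), ENNReal.ofReal ((Real.sqrt (2 * Real.pi * v))⁻¹) :=
        lintegral_mono fun x => hb x
    _ = ENNReal.ofReal ((Real.sqrt (2 * Real.pi * v))⁻¹) * volume (Set.Icc u (u + r)) := by
        rw [setLIntegral_const]
    _ = ENNReal.ofReal ((Real.sqrt (2 * Real.pi * v))⁻¹) * ENNReal.ofReal r := by
        rw [Real.volume_Icc, add_sub_cancel_left]
    _ = ENNReal.ofReal ((Real.sqrt (2 * Real.pi * v))⁻¹ * r) := by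
        rw [ENNReal.ofReal_mul (by positivity)]
    _ = ENNReal.ofReal (r / Real.sqrt (2 * Real.pi * v)) := by
        rw [div_eq_mul_inv, mul_comm]

lemma gaussTail_le_exp {y : ℝ} (hy : 1 ≤ y) : gaussTail y ≤ Real.exp (-y ^ 2 / 2) := by
  have h1 : ∀ u ∈ Set.Ioi y, Real.exp (-u ^ 2 / 2) / Real.sqrt (2 * Real.pi)
      ≤ u * Real.exp (-u ^ 2 / 2) := by
    intro u hu
    have hu1 : (1:ℝ) ≤ u := hy.trans (le_of_lt hu)
    have hsqrt : (1:ℝ) ≤ Real.sqrt (2 * Real.pi) := by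
      rw [show (1:ℝ) = Real.sqrt 1 from (Real.sqrt_one).symm]
      apply Real.sqrt_le_sqrt
      nlinarith [Real.pi_gt_three]
    calc Real.exp (-u ^ 2 / 2) / Real.sqrt (2 * Real.pi)
        ≤ Real.exp (-u ^ 2 / 2) / 1 := by
          apply div_le_div_of_nonneg_left (by positivity) one_pos hsqrt
      _ = Real.exp (-u ^ 2 / 2) := div_one _
      _ ≤ u * Real.exp (-u ^ 2 / 2) := le_mul_of_one_le_left (by positivity) hu1
  have hderiv : ∀ x ∈ Set.Ici y, HasDerivAt (fun u : ℝ => -Real.exp (-u ^ 2 / 2))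
      (x * Real.exp (-x ^ 2 / 2)) x := by
    intro x _
    have h : HasDerivAt (fun u : ℝ => -u ^ 2 / 2) (-x) x := by
      have h0 := ((hasDerivAt_pow 2 x).neg).div_const (2:ℝ)
      exact h0.congr_deriv (by norm_num; ring)
    have h1 := ((Real.hasDerivAt_exp (-x ^ 2 / 2)).comp x h).neg
    exact h1.congr_deriv (by ring)
  have hint : IntegrableOn (fun x : ℝ => x * Real.exp (-x ^ 2 / 2)) (Set.Ioi y) := by
    have : IntegrableOn (fun x : ℝ => x * Real.exp (-(1/2) * x ^ 2)) (Set.Ioi y) := by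
      exact (integrable_mul_exp_neg_mul_sq (b := (1/2 : ℝ)) (by norm_num)).integrableOn
    refine this.congr_fun (fun x _ => by ring_nf) measurableSet_Ioi
  have htends : Filter.Tendsto (fun u : ℝ => -Real.exp (-u ^ 2 / 2)) Filter.atTop (𝓝 0) := by
    have hsq : Filter.Tendsto (fun u : ℝ => u ^ 2 / 2) Filter.atTop Filter.atTop :=
      Filter.Tendsto.atTop_div_const two_pos (Filter.tendsto_pow_atTop two_ne_zero)
    have hneg : Filter.Tendsto (fun u : ℝ => -u ^ 2 / 2) Filter.atTop Filter.atBot := by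
      have := Filter.tendsto_neg_atTop_atBot.comp hsq
      refine this.congr fun u => ?_
      simp [Function.comp]
      ring
    rw [show (0:ℝ) = -0 from (neg_zero).symm]
    exact (Real.tendsto_exp_atBot.comp hneg).neg
  have hval : ∫ x in Set.Ioi y, x * Real.exp (-x ^ 2 / 2)
      = 0 - (-Real.exp (-y ^ 2 / 2)) :=
    integral_Ioi_of_hasDerivAt_of_tendsto' hderiv hint htends
  have hle : gaussTail y ≤ ∫ x in Set.Ioi y, x * Real.exp (-x ^ 2 / 2) := by
    rw [gaussTail]
    apply setIntegral_mono_on integrable_stdPDF.integrableOn hint measurableSet_Ioi h1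
  rw [hval] at hle
  simpa using hle

/-! ### Dyadic grid -/

noncomputable def grid (a b : ℝ) (n k : ℕ) : ℝ := a + (b - a) * k / 2 ^ n

lemma grid_zero (a b : ℝ) (n : ℕ) : grid a b n 0 = a := by simp [grid]

lemma grid_last (a b : ℝ) (n : ℕ) : grid a b n (2 ^ n) = b := by
  have h : ((2:ℝ)) ^ n ≠ 0 := by positivity
  unfold grid; push_cast; field_simp; ring

lemma grid_mono {a b : ℝ} (hab : a ≤ b) (n : ℕ) : Monotone (grid a b n) := by
  intro k k' h
  unfold grid
  have h2 : (0:ℝ) < 2 ^ n := by positivity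
  have hk : (k:ℝ) ≤ (k':ℝ) := by exact_mod_cast h
  have : (b - a) * k ≤ (b - a) * k' := mul_le_mul_of_nonneg_left hk (by linarith)
  have := (div_le_div_iff_of_pos_right h2).mpr this
  linarith

lemma grid_mem {a b : ℝ} (hab : a ≤ b) {n k : ℕ} (hk : k ≤ 2 ^ n) :
    grid a b n k ∈ Set.Icc a b := by
  constructor
  · have h0 : (0:ℝ) ≤ (b - a) * k / 2 ^ n :=
      div_nonneg (mul_nonneg (by linarith) (Nat.cast_nonneg k)) (by positivity)
    unfold grid
    linarith
  · have := grid_mono hab n hk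
    rwa [grid_last] at this

lemma grid_lt_b {a b : ℝ} (hab : a < b) {n k : ℕ} (hk : k < 2 ^ n) :
    grid a b n k < b := by
  unfold grid
  have h2 : (0:ℝ) < 2 ^ n := by positivity
  have hk' : (k:ℝ) < 2 ^ n := by exact_mod_cast hk
  have h3 : (b - a) * k / 2 ^ n < (b - a) * 2 ^ n / 2 ^ n := by
    apply (div_lt_div_iff_of_pos_right h2).mpr
    exact mul_lt_mul_of_pos_left hk' (by linarith)
  have h4 : (b - a) * 2 ^ n / 2 ^ n = b - a := by
    field_simp
  rw [h4] at h3
  linarith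

lemma grid_succ (a b : ℝ) (n k : ℕ) : grid a b n k = grid a b (n + 1) (2 * k) := by
  unfold grid
  have h2 : (0:ℝ) < 2 ^ n := by positivity
  congr 1
  rw [pow_succ]
  push_cast
  field_simp

lemma grid_step (a b : ℝ) (n : ℕ) {k : ℕ} (hk : 1 ≤ k) :
    grid a b n k - grid a b n (k - 1) = (b - a) / 2 ^ n := by
  unfold grid
  have h2 : (0:ℝ) < 2 ^ n := by positivity
  have : ((k - 1 : ℕ) : ℝ) = (k:ℝ) - 1 := by
    have : (1:ℕ) ≤ k := hk
    push_cast [Nat.cast_sub this]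
    ring
  rw [this]
  field_simp
  ring

/-! ### Events -/

variable {Ω : Type*} [MeasurableSpace Ω]

def stay (W : ℝ → Ω → ℝ) (u a b : ℝ) (n : ℕ) : Set Ω :=
  {ω | ∀ k ≤ 2 ^ n, u ≤ W (grid a b n k) ω - W 0 ω}

def Cp (W : ℝ → Ω → ℝ) (u a b : ℝ) : Set Ω := ⋂ n, stay W u a b n

def cross (W : ℝ → Ω → ℝ) (u a b : ℝ) (n k : ℕ) : Set Ω :=
  {ω | (∀ j < k, u ≤ W (grid a b n j) ω - W 0 ω) ∧ W (grid a b n k) ω - W 0 ω < u}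

def base (W : ℝ → Ω → ℝ) (u a : ℝ) : Set Ω := {ω | u ≤ W a ω - W 0 ω}

def Rset (W : ℝ → Ω → ℝ) (u a b : ℝ) : Set Ω :=
  {ω | u ≤ W a ω - W 0 ω ∧ W b ω - W 0 ω < u}

def Estep (W : ℝ → Ω → ℝ) (a b : ℝ) (n : ℕ) (δ : ℝ) : Set Ω :=
  ⋃ k ∈ Finset.Icc 1 (2 ^ n), {ω | δ < |W (grid a b n k) ω - W (grid a b n (k - 1)) ω|}

def Bd (W : ℝ → Ω → ℝ) (b u δ : ℝ) : Set Ω := {ω | W b ω - W 0 ω ∈ Set.Icc (u - δ) u}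

section EventLemmas

variable {W : ℝ → Ω → ℝ} {u a b : ℝ} {n : ℕ}

lemma measurable_inc (hm : ∀ t, Measurable (W t)) (s t : ℝ) :
    Measurable (fun ω => W t ω - W s ω) := (hm t).sub (hm s)

lemma stay_measurable (hm : ∀ t, Measurable (W t)) : MeasurableSet (stay W u a b n) := by
  have : stay W u a b n = ⋂ k, ⋂ (_ : k ≤ 2 ^ n),
      (fun ω => W (grid a b n k) ω - W 0 ω) ⁻¹' (Set.Ici u) := by
    ext ω; simp [stay]
  rw [this]
  exact MeasurableSet.iInter fun k => MeasurableSet.iInter fun _ =>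
    (measurable_inc hm 0 _) measurableSet_Ici

lemma Cp_measurable (hm : ∀ t, Measurable (W t)) : MeasurableSet (Cp W u a b) :=
  MeasurableSet.iInter fun _ => stay_measurable hm

lemma cross_measurable (hm : ∀ t, Measurable (W t)) {k : ℕ} :
    MeasurableSet (cross W u a b n k) := by
  have : cross W u a b n k = (⋂ j, ⋂ (_ : j < k),
      (fun ω => W (grid a b n j) ω - W 0 ω) ⁻¹' (Set.Ici u)) ∩
      ((fun ω => W (grid a b n k) ω - W 0 ω) ⁻¹' (Set.Iio u)) := by
    ext ω; simp [cross]
  rw [this]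
  exact MeasurableSet.inter
    (MeasurableSet.iInter fun j => MeasurableSet.iInter fun _ =>
      (measurable_inc hm 0 _) measurableSet_Ici)
    ((measurable_inc hm 0 _) measurableSet_Iio)

lemma base_measurable (hm : ∀ t, Measurable (W t)) : MeasurableSet (base W u a) :=
  (measurable_inc hm 0 a) measurableSet_Ici

lemma Rset_measurable (hm : ∀ t, Measurable (W t)) : MeasurableSet (Rset W u a b) :=
  MeasurableSet.inter ((measurable_inc hm 0 a) measurableSet_Ici)
    ((measurable_inc hm 0 b) measurableSet_Iio)

lemma Estep_measurable (hm : ∀ t, Measurable (W t)) {δ : ℝ} :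
    MeasurableSet (Estep W a b n δ) := by
  refine Set.Finite.measurableSet_biUnion (Finset.finite_toSet _) fun k _ => ?_
  exact measurableSet_lt measurable_const ((measurable_inc hm _ _).abs)

lemma Bd_measurable (hm : ∀ t, Measurable (W t)) {δ : ℝ} :
    MeasurableSet (Bd W b u δ) :=
  (measurable_inc hm 0 b) measurableSet_Icc

lemma stay_antitone (a b : ℝ) (u : ℝ) : Antitone (stay W u a b) := by
  apply antitone_nat_of_succ_le
  intro n ω hω k hk
  have h2k : 2 * k ≤ 2 ^ (n + 1) := by
    rw [pow_succ, mul_comm (2 ^ n) 2]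
    omega
  have := hω (2 * k) h2k
  rwa [← grid_succ] at this

lemma stay_mono_u {u u' : ℝ} (h : u ≤ u') (n : ℕ) : stay W u' a b n ⊆ stay W u a b n :=
  fun ω hω k hk => le_trans h (hω k hk)

lemma stay_subset_base : stay W u a b n ⊆ base W u a := by
  intro ω hω
  have := hω 0 (Nat.zero_le _)
  rwa [grid_zero] at this

lemma base_diff_stay :
    base W u a \ stay W u a b n = ⋃ k ∈ Finset.Icc 1 (2 ^ n), cross W u a b n k := by
  classical
  ext ω
  simp only [base, stay, cross, Set.mem_diff, Set.mem_setOf_eq, Set.mem_iUnion,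
    Finset.mem_Icc, exists_prop]
  constructor
  · rintro ⟨hb, hns⟩
    push_neg at hns
    obtain ⟨k, hk, hlt⟩ := hns
    have hex : ∃ j, j ≤ 2 ^ n ∧ W (grid a b n j) ω - W 0 ω < u := ⟨k, hk, hlt⟩
    obtain ⟨hk0le, hk0lt⟩ := Nat.find_spec hex
    have hk01 : 1 ≤ Nat.find hex := by
      by_contra h
      have h0 : Nat.find hex = 0 := by omega
      rw [h0, grid_zero] at hk0lt
      exact absurd hb (not_le.2 hk0lt)
    refine ⟨Nat.find hex, ⟨hk01, hk0le⟩, fun j hj => ?_, hk0lt⟩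
    by_contra hc
    push_neg at hc
    exact Nat.find_min hex hj ⟨le_trans hj.le hk0le, hc⟩
  · rintro ⟨k, ⟨hk1, hk2⟩, hcr, hlt⟩
    refine ⟨?_, ?_⟩
    · have := hcr 0 (by omega)
      rwa [grid_zero] at this
    · intro hstay
      exact absurd (hstay k hk2) (not_le.2 hlt)

lemma cross_pairwise :
    ((Finset.Icc 1 (2 ^ n) : Finset ℕ) : Set ℕ).PairwiseDisjoint (cross W u a b n) := by
  intro k _ k' _ hne
  rcases lt_or_gt_of_ne hne with h | h
  · apply Set.disjoint_left.mpr
    intro ω hω hω'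
    exact absurd (hω'.1 k h) (not_le.2 hω.2)
  · apply Set.disjoint_left.mpr
    intro ω hω hω'
    exact absurd (hω.1 k' h) (not_le.2 hω'.2)

lemma cross_Dneg_subset_R {k : ℕ} (hk1 : 1 ≤ k) :
    cross W u a b n k ∩ {ω | W b ω - W (grid a b n k) ω < 0} ⊆ Rset W u a b := by
  rintro ω ⟨⟨hcr, hlt⟩, hD⟩
  have h0 := hcr 0 hk1
  rw [grid_zero] at h0
  simp only [Set.mem_setOf_eq] at hD ⊢
  exact ⟨h0, by linarith⟩

lemma cross_last_subset_R : cross W u a b n (2 ^ n) ⊆ Rset W u a b := by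
  rintro ω ⟨hcr, hlt⟩
  have h0 := hcr 0 (Nat.one_le_two_pow)
  rw [grid_zero] at h0
  rw [grid_last] at hlt
  exact ⟨h0, hlt⟩

lemma cross_last_subset_EB {δ : ℝ} :
    cross W u a b n (2 ^ n) ⊆ Estep W a b n δ ∪ Bd W b u δ := by
  rintro ω ⟨hcr, hlt⟩
  by_cases hE : δ < |W (grid a b n (2 ^ n)) ω - W (grid a b n (2 ^ n - 1)) ω|
  · left
    refine Set.mem_biUnion (Finset.mem_Icc.2 ⟨Nat.one_le_two_pow, le_refl _⟩) hE
  · right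
    push_neg at hE
    have hprev := hcr (2 ^ n - 1) (by have := Nat.one_le_two_pow (n := n); omega)
    have habs := abs_le.mp hE
    have hgl : grid a b n (2 ^ n) = b := grid_last a b n
    rw [hgl] at hlt habs
    show W b ω - W 0 ω ∈ Set.Icc (u - δ) u
    rw [Set.mem_Icc]
    exact ⟨by linarith [habs.1, hprev], by linarith [hlt]⟩

lemma cross_R_subset_EB {δ : ℝ} {k : ℕ} (hk1 : 1 ≤ k) (hk2 : k ≤ 2 ^ n) :
    (cross W u a b n k ∩ Rset W u a b) \ {ω | W b ω - W (grid a b n k) ω < 0}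
      ⊆ Estep W a b n δ ∪ Bd W b u δ := by
  rintro ω ⟨⟨⟨hcr, hlt⟩, hR⟩, hD⟩
  simp only [Set.mem_setOf_eq, not_lt] at hD
  by_cases hE : δ < |W (grid a b n k) ω - W (grid a b n (k - 1)) ω|
  · left
    exact Set.mem_biUnion (Finset.mem_Icc.2 ⟨hk1, hk2⟩) hE
  · right
    push_neg at hE
    have hprev := hcr (k - 1) (by omega)
    have habs := abs_le.mp hE
    obtain ⟨hR1, hR2⟩ := hR
    show W b ω - W 0 ω ∈ Set.Icc (u - δ) u
    rw [Set.mem_Icc]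
    exact ⟨by linarith [habs.1, hprev, hD], by linarith [hR2]⟩

end EventLemmas

/-! ### Reflection step -/

noncomputable def gridTau (a b : ℝ) (n : ℕ) (i : ℕ) : ℝ :=
  if i = 0 then 0 else grid a b n (i - 1)

lemma gridTau_succ (a b : ℝ) (n i : ℕ) : gridTau a b n (i + 1) = grid a b n i := by
  simp [gridTau]

lemma gridTau_zero (a b : ℝ) (n : ℕ) : gridTau a b n 0 = 0 := rfl

lemma grid_ge_a {a b : ℝ} (hab : a ≤ b) (n k : ℕ) : a ≤ grid a b n k := by
  have h0 : (0:ℝ) ≤ (b - a) * k / 2 ^ n :=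
    div_nonneg (mul_nonneg (by linarith) (Nat.cast_nonneg k)) (by positivity)
  unfold grid
  linarith

lemma gridTau_nonneg {a b : ℝ} (ha : 0 ≤ a) (hab : a ≤ b) (n i : ℕ) :
    0 ≤ gridTau a b n i := by
  unfold gridTau
  split
  · exact le_refl 0
  · exact ha.trans (grid_ge_a hab n _)

lemma gridTau_mono {a b : ℝ} (ha : 0 ≤ a) (hab : a ≤ b) (n : ℕ) :
    Monotone (gridTau a b n) := by
  intro i j hij
  rcases Nat.eq_zero_or_pos i with h0 | hpos
  · rw [h0, gridTau_zero]
    exact gridTau_nonneg ha hab n j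
  · have hj : j ≠ 0 := by omega
    have hi : i ≠ 0 := by omega
    unfold gridTau
    rw [if_neg hi, if_neg hj]
    exact grid_mono hab n (by omega)

section Reflection

variable {P : Measure Ω} {W : ℝ → Ω → ℝ}

set_option maxHeartbeats 1000000 in
lemma reflection (hW : IsStdBrownianMotion P W) {a b : ℝ} (ha : 0 ≤ a) (hab : a < b)
    (u : ℝ) (n : ℕ) {k : ℕ} (hk1 : 1 ≤ k) (hkm : k < 2 ^ n) :
    P (cross W u a b n k ∩ {ω | W b ω - W (grid a b n k) ω < 0})
      = P (cross W u a b n k ∩ {ω | 0 < W b ω - W (grid a b n k) ω})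
    ∧ P (cross W u a b n k ∩ {ω | W b ω - W (grid a b n k) ω = 0}) = 0 := by
  classical
  set m := 2 ^ n with hm
  have hm1 : 1 ≤ m := Nat.one_le_two_pow
  have hkm' : k ≤ m := le_of_lt hkm
  have hτ0 : ∀ i : Fin (m + 1 + 1), 0 ≤ (fun i : Fin (m + 1 + 1) => gridTau a b n ↑i) i :=
    fun i => gridTau_nonneg ha hab.le n i
  have hτmono : Monotone (fun i : Fin (m + 1 + 1) => gridTau a b n ↑i) :=
    fun i j hij => gridTau_mono ha hab.le n (Fin.le_iff_val_le_val.mp hij)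
  have hindep := hW.indep (m + 1) (fun i => gridTau a b n ↑i) hτ0 hτmono
  set J : Fin (m + 1) → Ω → ℝ := fun i ω =>
    W ((fun i : Fin (m + 1 + 1) => gridTau a b n ↑i) i.succ) ω
      - W ((fun i : Fin (m + 1 + 1) => gridTau a b n ↑i) i.castSucc) ω with hJdef
  have hJval : ∀ (i : Fin (m + 1)) (ω : Ω),
      J i ω = W (gridTau a b n (↑i + 1)) ω - W (gridTau a b n ↑i) ω := by
    intro i ω
    simp only [hJdef, Fin.val_succ, Fin.coe_castSucc]
  have hJmeas : ∀ i, Measurable (J i) := fun i => (hW.meas _).sub (hW.meas _)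
  -- partial-sum identities
  have hsum : ∀ j : ℕ, j ≤ m → ∀ ω,
      (∑ i : Fin (m + 1), if (i : ℕ) ≤ j then J i ω else 0)
        = W (grid a b n j) ω - W 0 ω := by
    intro j hj ω
    have h1 : (∑ i : Fin (m + 1), if (i : ℕ) ≤ j then J i ω else 0)
        = ∑ i ∈ Finset.range (m + 1),
            (if i ≤ j then W (gridTau a b n (i + 1)) ω - W (gridTau a b n i) ω else 0) := by
      rw [← Fin.sum_univ_eq_sum_range
        (fun i => if i ≤ j then W (gridTau a b n (i + 1)) ω - W (gridTau a b n i) ω else 0)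
        (m + 1)]
      refine Finset.sum_congr rfl fun i _ => ?_
      rw [hJval]
    rw [h1]
    have hsub : Finset.range (j + 1) ⊆ Finset.range (m + 1) :=
      Finset.range_subset_range.mpr (by omega)
    rw [← Finset.sum_subset hsub (fun x _ hx => by
      rw [if_neg]
      simp only [Finset.mem_range] at hx
      omega)]
    have h2 : ∑ i ∈ Finset.range (j + 1),
        (if i ≤ j then W (gridTau a b n (i + 1)) ω - W (gridTau a b n i) ω else 0)
        = ∑ i ∈ Finset.range (j + 1),
            (W (gridTau a b n (i + 1)) ω - W (gridTau a b n i) ω) := by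
      refine Finset.sum_congr rfl fun i hi => ?_
      rw [if_pos]
      simp only [Finset.mem_range] at hi
      omega
    rw [h2, Finset.sum_range_sub (fun i => W (gridTau a b n i) ω) (j + 1),
      gridTau_succ, gridTau_zero]
  have hsumT : ∀ ω,
      (∑ i : Fin (m + 1), if k < (i : ℕ) then J i ω else 0)
        = W b ω - W (grid a b n k) ω := by
    intro ω
    have h1 : (∑ i : Fin (m + 1), if k < (i : ℕ) then J i ω else 0)
        = ∑ i ∈ Finset.range (m + 1),
            (if k < i then W (gridTau a b n (i + 1)) ω - W (gridTau a b n i) ω else 0) := by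
      rw [← Fin.sum_univ_eq_sum_range
        (fun i => if k < i then W (gridTau a b n (i + 1)) ω - W (gridTau a b n i) ω else 0)
        (m + 1)]
      refine Finset.sum_congr rfl fun i _ => ?_
      rw [hJval]
    rw [h1]
    have hsub : Finset.Ico (k + 1) (m + 1) ⊆ Finset.range (m + 1) := by
      intro x hx
      simp only [Finset.mem_Ico] at hx
      simp only [Finset.mem_range]
      omega
    rw [← Finset.sum_subset hsub (fun x _ hx => by
      rw [if_neg]
      simp only [Finset.mem_Ico, not_and, not_lt] at hx
      simp only [Finset.mem_range] at *
      omega)]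
    have h2 : ∑ i ∈ Finset.Ico (k + 1) (m + 1),
        (if k < i then W (gridTau a b n (i + 1)) ω - W (gridTau a b n i) ω else 0)
        = ∑ i ∈ Finset.Ico (k + 1) (m + 1),
            (W (gridTau a b n (i + 1)) ω - W (gridTau a b n i) ω) := by
      refine Finset.sum_congr rfl fun i hi => ?_
      rw [if_pos]
      simp only [Finset.mem_Ico] at hi
      omega
    rw [h2, Finset.sum_Ico_eq_sub _ (by omega : k + 1 ≤ m + 1),
      Finset.sum_range_sub (fun i => W (gridTau a b n i) ω),
      Finset.sum_range_sub (fun i => W (gridTau a b n i) ω),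
      gridTau_succ, gridTau_succ, gridTau_zero]
    rw [hm] at *
    rw [grid_last]
    ring
  -- grouping
  set S : Finset (Fin (m + 1)) := Finset.univ.filter (fun i => (i : ℕ) ≤ k) with hS
  set T : Finset (Fin (m + 1)) := Finset.univ.filter (fun i => k < (i : ℕ)) with hT
  have hST : Disjoint S T := by
    rw [Finset.disjoint_left]
    intro i hi hi'
    simp only [hS, hT, Finset.mem_filter] at hi hi'
    omega
  have hIF := hindep.indepFun_finset S T hST hJmeas
  set D : Ω → ℝ := fun ω => W b ω - W (grid a b n k) ω with hDdef
  set sumT : ({ x // x ∈ T } → ℝ) → ℝ := fun z => ∑ i, z i with hsTdef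
  have hsumTmeas : Measurable sumT :=
    Finset.measurable_sum _ (fun i _ => measurable_pi_apply i)
  have hDeq : D = sumT ∘ (fun ω (i : { x // x ∈ T }) => J ↑i ω) := by
    funext ω
    simp only [Function.comp_apply, hsTdef]
    have h1 : (∑ i : { x // x ∈ T }, J ↑i ω) = ∑ i ∈ T, J i ω :=
      Finset.sum_coe_sort T (fun i => J i ω)
    rw [h1, hT, Finset.sum_filter]
    exact (hsumT ω).symm
  have hIndep2 : IndepFun (fun ω (i : { x // x ∈ S }) => J ↑i ω) D P := by
    have hid : Measurable (id : ({ x // x ∈ S } → ℝ) → ({ x // x ∈ S } → ℝ)) := measurable_id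
    have := hIF.comp hid hsumTmeas
    rw [hDeq]
    exact this
  -- the crossing event as a preimage
  set psum : ℕ → ({ x // x ∈ S } → ℝ) → ℝ :=
    fun j z => ∑ i : { x // x ∈ S }, (if ((i : Fin (m + 1)) : ℕ) ≤ j then z i else 0)
    with hpsum
  have hpsmeas : ∀ j, Measurable (psum j) := by
    intro j
    apply Finset.measurable_sum
    intro i _
    by_cases h : ((i : Fin (m + 1)) : ℕ) ≤ j
    · simpa [h] using measurable_pi_apply i
    · simpa [h] using measurable_const
  set C : Set ({ x // x ∈ S } → ℝ) :=
    {z | (∀ j < k, u ≤ psum j z) ∧ psum k z < u} with hC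
  have hCmeas : MeasurableSet C := by
    have : C = (⋂ j, ⋂ (_ : j < k), (psum j) ⁻¹' (Set.Ici u)) ∩ ((psum k) ⁻¹' (Set.Iio u)) := by
      ext z
      simp [hC]
    rw [this]
    exact MeasurableSet.inter
      (MeasurableSet.iInter fun j => MeasurableSet.iInter fun _ =>
        (hpsmeas j) measurableSet_Ici)
      ((hpsmeas k) measurableSet_Iio)
  have hps_eval : ∀ j : ℕ, j ≤ k → ∀ ω,
      psum j (fun i : { x // x ∈ S } => J ↑i ω) = W (grid a b n j) ω - W 0 ω := by
    intro j hj ω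
    have h1 : psum j (fun i : { x // x ∈ S } => J ↑i ω)
        = ∑ i ∈ S, (if (i : ℕ) ≤ j then J i ω else 0) :=
      Finset.sum_coe_sort S (fun i => if (i : ℕ) ≤ j then J i ω else 0)
    rw [h1, hS, Finset.sum_filter]
    have h2 : ∀ i : Fin (m + 1),
        (if (i : ℕ) ≤ k then (if (i : ℕ) ≤ j then J i ω else 0) else 0)
          = (if (i : ℕ) ≤ j then J i ω else 0) := by
      intro i
      by_cases hij : (i : ℕ) ≤ j
      · have hik : (i : ℕ) ≤ k := by omega
        simp [hij, hik]
      · by_cases hik : (i : ℕ) ≤ k <;> simp [hij, hik]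
    rw [Finset.sum_congr rfl (fun i _ => h2 i)]
    exact hsum j (by omega) ω
  have hpre : cross W u a b n k = (fun ω (i : { x // x ∈ S }) => J ↑i ω) ⁻¹' C := by
    ext ω
    simp only [cross, Set.mem_setOf_eq, Set.mem_preimage, hC]
    constructor
    · rintro ⟨h1, h2⟩
      refine ⟨fun j hj => ?_, ?_⟩
      · rw [hps_eval j (le_of_lt hj)]
        exact h1 j hj
      · rw [hps_eval k le_rfl]
        exact h2
    · rintro ⟨h1, h2⟩
      refine ⟨fun j hj => ?_, ?_⟩
      · have := h1 j hj
        rwa [hps_eval j (le_of_lt hj)] at this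
      · have := h2
        rwa [hps_eval k le_rfl] at this
  have hprod : ∀ B : Set ℝ, MeasurableSet B →
      P (cross W u a b n k ∩ D ⁻¹' B) = P (cross W u a b n k) * P (D ⁻¹' B) := by
    intro B hB
    rw [hpre]
    exact hIndep2.measure_inter_preimage_eq_mul C B hCmeas hB
  -- law of D
  have hDmeas : Measurable D := (hW.meas b).sub (hW.meas _)
  have hgmem := grid_mem (le_of_lt hab) (n := n) (k := k) hkm'
  have hDlaw : Measure.map D P = gaussianReal 0 (b - grid a b n k).toNNReal :=
    hW.gauss (grid a b n k) b (ha.trans hgmem.1) hgmem.2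
  have hvar : (b - grid a b n k).toNNReal ≠ 0 := by
    have := grid_lt_b hab hkm
    simp only [ne_eq, Real.toNNReal_eq_zero, not_le]
    linarith
  have hPD : ∀ B : Set ℝ, MeasurableSet B →
      P (D ⁻¹' B) = gaussianReal 0 (b - grid a b n k).toNNReal B := by
    intro B hB
    rw [← hDlaw, Measure.map_apply hDmeas hB]
  constructor
  · have e1 : {ω | W b ω - W (grid a b n k) ω < 0} = D ⁻¹' (Set.Iio 0) := rfl
    have e2 : {ω | 0 < W b ω - W (grid a b n k) ω} = D ⁻¹' (Set.Ioi 0) := rfl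
    rw [e1, e2, hprod _ measurableSet_Iio, hprod _ measurableSet_Ioi,
      hPD _ measurableSet_Iio, hPD _ measurableSet_Ioi]
    congr 1
    have : Set.Iio (0:ℝ) = Set.Iio (-(0:ℝ)) := by norm_num
    rw [this, gaussianReal_Iio _ hvar, gaussianReal_Ioi _ hvar]
  · have e3 : {ω | W b ω - W (grid a b n k) ω = 0} = D ⁻¹' ({0} : Set ℝ) := rfl
    rw [e3, hprod _ (measurableSet_singleton 0), hPD _ (measurableSet_singleton 0),
      gaussianReal_singleton _ hvar, mul_zero]

lemma hit_upper (hW : IsStdBrownianMotion P W) {a b : ℝ} (ha : 0 ≤ a) (hab : a < b)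
    (u : ℝ) (n : ℕ) :
    P (⋃ k ∈ Finset.Icc 1 (2 ^ n), cross W u a b n k) ≤ 2 * P (Rset W u a b) := by
  classical
  set F : ℕ → Set Ω := fun k =>
    if k = 2 ^ n then cross W u a b n k
    else cross W u a b n k ∩ {ω | W b ω - W (grid a b n k) ω < 0} with hF
  have hFsub : ∀ k, F k ⊆ cross W u a b n k := by
    intro k
    by_cases h : k = 2 ^ n <;> simp [hF, h, Set.inter_subset_left]
  have hFmeas : ∀ k ∈ Finset.Icc 1 (2 ^ n), MeasurableSet (F k) := by
    intro k _
    by_cases h : k = 2 ^ n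
    · simp only [hF, if_pos h]
      exact cross_measurable hW.meas
    · simp only [hF, if_neg h]
      exact (cross_measurable hW.meas).inter
        (measurableSet_lt (measurable_inc hW.meas _ b) measurable_const)
  have hFdisj : ((Finset.Icc 1 (2 ^ n) : Finset ℕ) : Set ℕ).PairwiseDisjoint F := by
    intro k hk k' hk' hne
    exact (cross_pairwise hk hk' hne).mono (hFsub k) (hFsub k')
  have hFR : ∀ k ∈ Finset.Icc 1 (2 ^ n), F k ⊆ Rset W u a b := by
    intro k hk
    rw [Finset.mem_Icc] at hk
    by_cases h : k = 2 ^ n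
    · simp only [hF, if_pos h]
      rw [h]
      exact cross_last_subset_R
    · simp only [hF, if_neg h]
      exact cross_Dneg_subset_R hk.1
  have hkey : ∀ k ∈ Finset.Icc 1 (2 ^ n), P (cross W u a b n k) ≤ 2 * P (F k) := by
    intro k hk
    rw [Finset.mem_Icc] at hk
    by_cases h : k = 2 ^ n
    · simp only [hF, if_pos h]
      calc P (cross W u a b n k) = 1 * P (cross W u a b n k) := (one_mul _).symm
        _ ≤ 2 * P (cross W u a b n k) := mul_le_mul_left one_le_two _
    · simp only [hF, if_neg h]
      have hrefl := reflection hW ha hab u n hk.1 (lt_of_le_of_ne hk.2 h)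
      have hcover : cross W u a b n k ⊆
          (cross W u a b n k ∩ {ω | W b ω - W (grid a b n k) ω < 0}) ∪
          ((cross W u a b n k ∩ {ω | 0 < W b ω - W (grid a b n k) ω}) ∪
           (cross W u a b n k ∩ {ω | W b ω - W (grid a b n k) ω = 0})) := by
        intro ω hω
        rcases lt_trichotomy (W b ω - W (grid a b n k) ω) 0 with h1 | h1 | h1
        · exact Or.inl ⟨hω, h1⟩
        · exact Or.inr (Or.inr ⟨hω, h1⟩)
        · exact Or.inr (Or.inl ⟨hω, h1⟩)
      calc P (cross W u a b n k)
          ≤ P (cross W u a b n k ∩ {ω | W b ω - W (grid a b n k) ω < 0}) +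
            (P (cross W u a b n k ∩ {ω | 0 < W b ω - W (grid a b n k) ω}) +
             P (cross W u a b n k ∩ {ω | W b ω - W (grid a b n k) ω = 0})) := by
            refine le_trans (measure_mono hcover) ?_
            refine le_trans (measure_union_le _ _) ?_
            exact add_le_add_right (measure_union_le _ _) _
        _ = P (cross W u a b n k ∩ {ω | W b ω - W (grid a b n k) ω < 0}) +
            (P (cross W u a b n k ∩ {ω | W b ω - W (grid a b n k) ω < 0}) + 0) := by
            rw [← hrefl.1, hrefl.2]
        _ = 2 * P (cross W u a b n k ∩ {ω | W b ω - W (grid a b n k) ω < 0}) := by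
            ring
  calc P (⋃ k ∈ Finset.Icc 1 (2 ^ n), cross W u a b n k)
      = ∑ k ∈ Finset.Icc 1 (2 ^ n), P (cross W u a b n k) :=
        measure_biUnion_finset cross_pairwise (fun k _ => cross_measurable hW.meas)
    _ ≤ ∑ k ∈ Finset.Icc 1 (2 ^ n), 2 * P (F k) := Finset.sum_le_sum hkey
    _ = 2 * ∑ k ∈ Finset.Icc 1 (2 ^ n), P (F k) := by rw [Finset.mul_sum]
    _ = 2 * P (⋃ k ∈ Finset.Icc 1 (2 ^ n), F k) := by
        rw [measure_biUnion_finset hFdisj hFmeas]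
    _ ≤ 2 * P (Rset W u a b) :=
        mul_le_mul_right (measure_mono (Set.iUnion₂_subset fun k hk => hFR k hk)) 2

lemma hit_lower (hW : IsStdBrownianMotion P W) {a b : ℝ} (ha : 0 ≤ a) (hab : a < b)
    (u δ : ℝ) (n : ℕ) :
    2 * P (Rset W u a b) ≤ P (⋃ k ∈ Finset.Icc 1 (2 ^ n), cross W u a b n k)
      + 2 * (P (Estep W a b n δ) + P (Bd W b u δ)) := by
  classical
  have hRsub : Rset W u a b ⊆ ⋃ k ∈ Finset.Icc 1 (2 ^ n), cross W u a b n k := by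
    have h1 : Rset W u a b ⊆ base W u a \ stay W u a b n := by
      rintro ω ⟨h1, h2⟩
      refine ⟨h1, fun hst => ?_⟩
      have := hst (2 ^ n) (le_refl _)
      rw [grid_last] at this
      exact absurd this (not_le.2 h2)
    rw [base_diff_stay] at h1
    exact h1
  have hGdisj : ((Finset.Icc 1 (2 ^ n) : Finset ℕ) : Set ℕ).PairwiseDisjoint
      (fun k => cross W u a b n k ∩ Rset W u a b) := by
    intro k hk k' hk' hne
    exact (cross_pairwise hk hk' hne).mono Set.inter_subset_left Set.inter_subset_left
  have hdecomp : P (Rset W u a b)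
      = ∑ k ∈ Finset.Icc 1 (2 ^ n), P (cross W u a b n k ∩ Rset W u a b) := by
    have hU : Rset W u a b = ⋃ k ∈ Finset.Icc 1 (2 ^ n), (cross W u a b n k ∩ Rset W u a b) := by
      ext ω
      constructor
      · intro hω
        obtain ⟨k, hk, hck⟩ := Set.mem_iUnion₂.mp (hRsub hω)
        exact Set.mem_iUnion₂.mpr ⟨k, hk, hck, hω⟩
      · intro hω
        obtain ⟨k, hk, _, hck⟩ := Set.mem_iUnion₂.mp hω
        exact hck
    conv_lhs => rw [hU]
    exact measure_biUnion_finset hGdisj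
      (fun k _ => (cross_measurable hW.meas).inter (Rset_measurable hW.meas))
  have hsplitk : ∀ k ∈ Finset.Icc 1 (2 ^ n),
      P (cross W u a b n k ∩ Rset W u a b)
        ≤ P (cross W u a b n k ∩ {ω | W b ω - W (grid a b n k) ω < 0})
          + P ((cross W u a b n k ∩ Rset W u a b) \ {ω | W b ω - W (grid a b n k) ω < 0}) := by
    intro k _
    refine le_trans (measure_mono ?_) (measure_union_le _ _)
    intro ω hω
    by_cases h : W b ω - W (grid a b n k) ω < 0
    · exact Or.inl ⟨hω.1, h⟩
    · exact Or.inr ⟨hω, h⟩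
  have hEB : ∑ k ∈ Finset.Icc 1 (2 ^ n),
      P ((cross W u a b n k ∩ Rset W u a b) \ {ω | W b ω - W (grid a b n k) ω < 0})
        ≤ P (Estep W a b n δ) + P (Bd W b u δ) := by
    have hdisj2 : ((Finset.Icc 1 (2 ^ n) : Finset ℕ) : Set ℕ).PairwiseDisjoint
        (fun k => (cross W u a b n k ∩ Rset W u a b) \ {ω | W b ω - W (grid a b n k) ω < 0}) := by
      intro k hk k' hk' hne
      exact (cross_pairwise hk hk' hne).mono
        ((Set.diff_subset).trans Set.inter_subset_left)
        ((Set.diff_subset).trans Set.inter_subset_left)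
    have hmeas2 : ∀ k ∈ Finset.Icc 1 (2 ^ n), MeasurableSet
        ((cross W u a b n k ∩ Rset W u a b) \ {ω | W b ω - W (grid a b n k) ω < 0}) := by
      intro k _
      exact (((cross_measurable hW.meas).inter (Rset_measurable hW.meas)).diff
        (measurableSet_lt (measurable_inc hW.meas _ b) measurable_const))
    calc ∑ k ∈ Finset.Icc 1 (2 ^ n),
        P ((cross W u a b n k ∩ Rset W u a b) \ {ω | W b ω - W (grid a b n k) ω < 0})
        = P (⋃ k ∈ Finset.Icc 1 (2 ^ n),
            ((cross W u a b n k ∩ Rset W u a b) \ {ω | W b ω - W (grid a b n k) ω < 0})) :=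
          (measure_biUnion_finset hdisj2 hmeas2).symm
      _ ≤ P (Estep W a b n δ ∪ Bd W b u δ) := by
          refine measure_mono (Set.iUnion₂_subset fun k hk => ?_)
          rw [Finset.mem_Icc] at hk
          exact cross_R_subset_EB hk.1 hk.2
      _ ≤ P (Estep W a b n δ) + P (Bd W b u δ) := measure_union_le _ _
  have hdbl : ∀ k ∈ Finset.Icc 1 (2 ^ n),
      2 * P (cross W u a b n k ∩ {ω | W b ω - W (grid a b n k) ω < 0})
        ≤ P (cross W u a b n k) := by
    intro k hk
    rw [Finset.mem_Icc] at hk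
    by_cases h : k = 2 ^ n
    · have hempty : {ω : Ω | W b ω - W (grid a b n k) ω < 0} = ∅ := by
        rw [h, grid_last]
        ext ω
        simp
      rw [hempty]
      simp
    · have hrefl := reflection hW ha hab u n hk.1 (lt_of_le_of_ne hk.2 h)
      have hdisj3 : Disjoint (cross W u a b n k ∩ {ω | W b ω - W (grid a b n k) ω < 0})
          (cross W u a b n k ∩ {ω | 0 < W b ω - W (grid a b n k) ω}) := by
        apply Set.disjoint_left.mpr
        rintro ω ⟨_, h1⟩ ⟨_, h2⟩
        simp only [Set.mem_setOf_eq] at h1 h2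
        linarith
      have hmeas3 : MeasurableSet (cross W u a b n k ∩ {ω | 0 < W b ω - W (grid a b n k) ω}) :=
        (cross_measurable hW.meas).inter
          (measurableSet_lt measurable_const (measurable_inc hW.meas _ b))
      calc 2 * P (cross W u a b n k ∩ {ω | W b ω - W (grid a b n k) ω < 0})
          = P (cross W u a b n k ∩ {ω | W b ω - W (grid a b n k) ω < 0})
            + P (cross W u a b n k ∩ {ω | 0 < W b ω - W (grid a b n k) ω}) := by
            rw [two_mul, hrefl.1]
        _ = P ((cross W u a b n k ∩ {ω | W b ω - W (grid a b n k) ω < 0})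
            ∪ (cross W u a b n k ∩ {ω | 0 < W b ω - W (grid a b n k) ω})) :=
            (measure_union hdisj3 hmeas3).symm
        _ ≤ P (cross W u a b n k) := by
            refine measure_mono ?_
            rintro ω (⟨hc, _⟩ | ⟨hc, _⟩) <;> exact hc
  calc 2 * P (Rset W u a b)
      = 2 * ∑ k ∈ Finset.Icc 1 (2 ^ n), P (cross W u a b n k ∩ Rset W u a b) := by
        rw [hdecomp]
    _ ≤ 2 * (∑ k ∈ Finset.Icc 1 (2 ^ n),
          P (cross W u a b n k ∩ {ω | W b ω - W (grid a b n k) ω < 0})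
        + ∑ k ∈ Finset.Icc 1 (2 ^ n),
          P ((cross W u a b n k ∩ Rset W u a b) \ {ω | W b ω - W (grid a b n k) ω < 0})) := by
        rw [← Finset.sum_add_distrib]
        exact mul_le_mul_right (Finset.sum_le_sum hsplitk) 2
    _ ≤ 2 * ∑ k ∈ Finset.Icc 1 (2 ^ n),
          P (cross W u a b n k ∩ {ω | W b ω - W (grid a b n k) ω < 0})
        + 2 * (P (Estep W a b n δ) + P (Bd W b u δ)) := by
        rw [mul_add]
        exact add_le_add_right (mul_le_mul_right hEB 2) _
    _ ≤ ∑ k ∈ Finset.Icc 1 (2 ^ n), P (cross W u a b n k)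
        + 2 * (P (Estep W a b n δ) + P (Bd W b u δ)) := by
        refine add_le_add_left ?_ _
        rw [Finset.mul_sum]
        exact Finset.sum_le_sum hdbl
    _ = P (⋃ k ∈ Finset.Icc 1 (2 ^ n), cross W u a b n k)
        + 2 * (P (Estep W a b n δ) + P (Bd W b u δ)) := by
        rw [measure_biUnion_finset cross_pairwise (fun k _ => cross_measurable hW.meas)]

lemma Bd_bound (hW : IsStdBrownianMotion P W) {b : ℝ} (hb : 0 < b) (u δ : ℝ) :
    P (Bd W b u δ) ≤ ENNReal.ofReal (δ / Real.sqrt (2 * Real.pi * b)) := by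
  have hlaw : Measure.map (fun ω => W b ω - W 0 ω) P = gaussianReal 0 b.toNNReal := by
    have := hW.gauss 0 b le_rfl hb.le
    rwa [sub_zero] at this
  have hpre : Bd W b u δ = (fun ω => W b ω - W 0 ω) ⁻¹' (Set.Icc (u - δ) u) := rfl
  rw [hpre, ← Measure.map_apply (measurable_inc hW.meas 0 b) measurableSet_Icc, hlaw]
  have h1 : Set.Icc (u - δ) u = Set.Icc (u - δ) ((u - δ) + δ) := by
    rw [sub_add_cancel]
  rw [h1]
  have hb' : b.toNNReal ≠ 0 := by
    simp only [ne_eq, Real.toNNReal_eq_zero, not_le]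
    linarith
  have h2 := gaussianReal_Icc_le b.toNNReal hb' (u - δ) δ
  rwa [Real.coe_toNNReal b hb.le] at h2

lemma Estep_bound (hW : IsStdBrownianMotion P W) {a b : ℝ} (ha : 0 ≤ a) (hab : a < b)
    (δ : ℝ) (n : ℕ) :
    P (Estep W a b n δ)
      ≤ ENNReal.ofReal ((2 ^ n : ℝ) * (2 * gaussTail (δ / Real.sqrt ((b - a) / 2 ^ n)))) := by
  have hT : (0:ℝ) < (b - a) / 2 ^ n := by
    have : (0:ℝ) < 2 ^ n := by positivity
    apply div_pos (by linarith) this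
  have hv : ((b - a) / 2 ^ n).toNNReal ≠ 0 := by
    simp only [ne_eq, Real.toNNReal_eq_zero, not_le]
    exact hT
  have hsingle : ∀ k ∈ Finset.Icc 1 (2 ^ n),
      P {ω | δ < |W (grid a b n k) ω - W (grid a b n (k - 1)) ω|}
        ≤ 2 * ENNReal.ofReal (gaussTail (δ / Real.sqrt ((b - a) / 2 ^ n))) := by
    intro k hk
    rw [Finset.mem_Icc] at hk
    have hmono : grid a b n (k - 1) ≤ grid a b n k := grid_mono hab.le n (by omega)
    have hlaw : Measure.map (fun ω => W (grid a b n k) ω - W (grid a b n (k - 1)) ω) P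
        = gaussianReal 0 ((b - a) / 2 ^ n).toNNReal := by
      have := hW.gauss (grid a b n (k - 1)) (grid a b n k)
        (ha.trans (grid_ge_a hab.le n _)) hmono
      rwa [grid_step a b n hk.1] at this
    have hpre : {ω | δ < |W (grid a b n k) ω - W (grid a b n (k - 1)) ω|}
        = (fun ω => W (grid a b n k) ω - W (grid a b n (k - 1)) ω) ⁻¹' {x : ℝ | δ < |x|} := rfl
    have hmeasS : MeasurableSet {x : ℝ | δ < |x|} :=
      measurableSet_lt measurable_const measurable_abs
    rw [hpre, ← Measure.map_apply (measurable_inc hW.meas _ _) hmeasS, hlaw]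
    have hsub : {x : ℝ | δ < |x|} ⊆ Set.Iio (-δ) ∪ Set.Ioi δ := by
      intro x hx
      simp only [Set.mem_setOf_eq] at hx
      rcases le_or_gt 0 x with h | h
      · right
        rwa [abs_of_nonneg h] at hx
      · left
        rw [abs_of_neg h] at hx
        simp only [Set.mem_Iio]
        linarith
    calc gaussianReal 0 ((b - a) / 2 ^ n).toNNReal {x : ℝ | δ < |x|}
        ≤ gaussianReal 0 ((b - a) / 2 ^ n).toNNReal (Set.Iio (-δ) ∪ Set.Ioi δ) :=
          measure_mono hsub
      _ ≤ gaussianReal 0 ((b - a) / 2 ^ n).toNNReal (Set.Iio (-δ))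
          + gaussianReal 0 ((b - a) / 2 ^ n).toNNReal (Set.Ioi δ) := measure_union_le _ _
      _ = 2 * ENNReal.ofReal (gaussTail (δ / Real.sqrt ((b - a) / 2 ^ n))) := by
          rw [gaussianReal_Iio _ hv, gaussianReal_Ioi _ hv,
            Real.coe_toNNReal _ hT.le, two_mul]
  calc P (Estep W a b n δ)
      ≤ ∑ k ∈ Finset.Icc 1 (2 ^ n),
          P {ω | δ < |W (grid a b n k) ω - W (grid a b n (k - 1)) ω|} :=
        measure_biUnion_finset_le _ _
    _ ≤ ∑ _k ∈ Finset.Icc 1 (2 ^ n),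
          2 * ENNReal.ofReal (gaussTail (δ / Real.sqrt ((b - a) / 2 ^ n))) :=
        Finset.sum_le_sum hsingle
    _ = (2 ^ n : ℕ) * (2 * ENNReal.ofReal (gaussTail (δ / Real.sqrt ((b - a) / 2 ^ n)))) := by
        rw [Finset.sum_const, Nat.card_Icc]
        simp [nsmul_eq_mul]
    _ = ENNReal.ofReal ((2 ^ n : ℝ) * (2 * gaussTail (δ / Real.sqrt ((b - a) / 2 ^ n)))) := by
        rw [ENNReal.ofReal_mul (by positivity), ENNReal.ofReal_mul (by norm_num : (0:ℝ) ≤ 2)]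
        congr 1
        · rw [← ENNReal.ofReal_natCast (2 ^ n)]
          congr 1
          push_cast
          ring
        · congr 1
          exact (ENNReal.ofReal_ofNat 2).symm

lemma Estep_toReal_tendsto (hW : IsStdBrownianMotion P W) {a b : ℝ} (ha : 0 ≤ a) (hab : a < b)
    {δ : ℝ} (hδ : 0 < δ) :
    Filter.Tendsto (fun n => (P (Estep W a b n δ)).toReal) Filter.atTop (𝓝 0) := by
  set T : ℝ := b - a with hT
  have hT0 : 0 < T := by simp [hT]; linarith
  set r : ℝ := Real.exp (-δ ^ 2 / (2 * T)) with hr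
  have hr0 : 0 < r := Real.exp_pos _
  have hr1 : r < 1 := by
    rw [hr, Real.exp_lt_one_iff]
    have : (0:ℝ) < δ ^ 2 := by positivity
    have h2T : (0:ℝ) < 2 * T := by linarith
    exact div_neg_of_neg_of_pos (by linarith) h2T
  -- eventual pointwise domination of the tail
  have hev : ∀ᶠ n : ℕ in Filter.atTop,
      gaussTail (δ / Real.sqrt (T / 2 ^ n)) ≤ r ^ (2 ^ n) := by
    have htends : Filter.Tendsto (fun n : ℕ => T / 2 ^ n) Filter.atTop (𝓝 0) := by
      have : (fun n : ℕ => T / 2 ^ n) = fun n : ℕ => T * (1 / 2 : ℝ) ^ n := by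
        funext n
        rw [div_pow, one_pow]
        ring
      rw [this]
      have := tendsto_pow_atTop_nhds_zero_of_lt_one (by norm_num : (0:ℝ) ≤ 1/2)
        (by norm_num : (1/2:ℝ) < 1)
      simpa using this.const_mul T
    have hlt : ∀ᶠ n : ℕ in Filter.atTop, T / 2 ^ n < δ ^ 2 :=
      htends.eventually_lt_const (by positivity)
    filter_upwards [hlt] with n hn
    have hTn : (0:ℝ) < T / 2 ^ n := by
      have : (0:ℝ) < 2 ^ n := by positivity
      exact div_pos hT0 this
    have hs : Real.sqrt (T / 2 ^ n) ≤ δ := by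
      have := Real.sqrt_le_sqrt hn.le
      rwa [Real.sqrt_sq hδ.le] at this
    have hspos : 0 < Real.sqrt (T / 2 ^ n) := Real.sqrt_pos.2 hTn
    have h1le : 1 ≤ δ / Real.sqrt (T / 2 ^ n) := (one_le_div hspos).mpr hs
    have h2 := gaussTail_le_exp h1le
    have h3 : (δ / Real.sqrt (T / 2 ^ n)) ^ 2 = δ ^ 2 * 2 ^ n / T := by
      rw [div_pow, Real.sq_sqrt hTn.le]
      field_simp
    rw [h3] at h2
    have h4 : -(δ ^ 2 * 2 ^ n / T) / 2 = (2 ^ n : ℕ) * (-δ ^ 2 / (2 * T)) := by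
      push_cast
      field_simp
    rw [h4, Real.exp_nat_mul] at h2
    exact h2
  -- the dominating sequence tends to zero
  have hdom : Filter.Tendsto (fun n : ℕ => 2 * (((2 ^ n : ℕ) : ℝ) * r ^ (2 ^ n)))
      Filter.atTop (𝓝 0) := by
    have hsummable : Summable (fun i : ℕ => (i : ℝ) ^ 1 * r ^ i) := by
      apply summable_pow_mul_geometric_of_norm_lt_one
      rw [Real.norm_eq_abs, abs_of_pos hr0]
      exact hr1
    have htz := hsummable.tendsto_atTop_zero
    have hpow : Filter.Tendsto (fun n : ℕ => 2 ^ n) Filter.atTop Filter.atTop :=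
        tendsto_pow_atTop_atTop_of_one_lt one_lt_two
    have hcomp := htz.comp hpow
    have : (fun n : ℕ => ((2 ^ n : ℕ) : ℝ) ^ 1 * r ^ (2 ^ n))
        = (fun i : ℕ => (i : ℝ) ^ 1 * r ^ i) ∘ (fun n : ℕ => 2 ^ n) := rfl
    have h5 : Filter.Tendsto (fun n : ℕ => ((2 ^ n : ℕ) : ℝ) ^ 1 * r ^ (2 ^ n))
        Filter.atTop (𝓝 0) := by
      rw [this]
      exact hcomp
    have h6 := h5.const_mul (2:ℝ)
    simp only [mul_zero] at h6
    refine h6.congr fun n => ?_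
    rw [pow_one]
  -- squeeze
  refine squeeze_zero' (Filter.Eventually.of_forall fun n => ENNReal.toReal_nonneg) ?_ hdom
  · filter_upwards [hev] with n hn
    have h1 : (P (Estep W a b n δ)).toReal
        ≤ (2 ^ n : ℝ) * (2 * gaussTail (δ / Real.sqrt (T / 2 ^ n))) := by
      apply ENNReal.toReal_le_of_le_ofReal
      · have := gaussTail_nonneg (δ / Real.sqrt (T / 2 ^ n))
        positivity
      · exact Estep_bound hW ha hab δ n
    refine h1.trans ?_
    have h2 : (2 ^ n : ℝ) * (2 * gaussTail (δ / Real.sqrt (T / 2 ^ n)))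
        ≤ (2 ^ n : ℝ) * (2 * r ^ (2 ^ n)) := by
      apply mul_le_mul_of_nonneg_left _ (by positivity)
      apply mul_le_mul_of_nonneg_left hn (by norm_num)
    refine h2.trans (le_of_eq ?_)
    push_cast
    ring

lemma oneSided (hW : IsStdBrownianMotion P W) {a b : ℝ} (ha : 0 ≤ a) (hab : a < b) (u : ℝ) :
    (P (Cp W u a b)).toReal
      = (P (base W u a)).toReal - 2 * (P (Rset W u a b)).toReal := by
  haveI := hW.isProb
  have hb : 0 < b := lt_of_le_of_lt ha hab
  have hlim : Filter.Tendsto (fun n => P (stay W u a b n)) Filter.atTop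
      (𝓝 (P (Cp W u a b))) :=
    tendsto_measure_iInter_atTop (μ := P)
      (fun n => (stay_measurable hW.meas).nullMeasurableSet)
      (stay_antitone a b u) ⟨0, measure_ne_top P _⟩
  have hlim' : Filter.Tendsto (fun n => (P (stay W u a b n)).toReal) Filter.atTop
      (𝓝 (P (Cp W u a b)).toReal) :=
    (ENNReal.tendsto_toReal (measure_ne_top P _)).comp hlim
  have hsplit : ∀ n, (P (base W u a)).toReal
      = (P (stay W u a b n)).toReal
        + (P (⋃ k ∈ Finset.Icc 1 (2 ^ n), cross W u a b n k)).toReal := by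
    intro n
    have hdisj : Disjoint (stay W u a b n) (base W u a \ stay W u a b n) :=
      disjoint_sdiff_self_right
    have hmeasd : MeasurableSet (base W u a \ stay W u a b n) :=
      (base_measurable hW.meas).diff (stay_measurable hW.meas)
    have hu := measure_union (μ := P) hdisj hmeasd
    rw [Set.union_diff_cancel stay_subset_base] at hu
    rw [hu, base_diff_stay, ENNReal.toReal_add (measure_ne_top P _) (measure_ne_top P _)]
  have hHlim : Filter.Tendsto
      (fun n => (P (⋃ k ∈ Finset.Icc 1 (2 ^ n), cross W u a b n k)).toReal)
      Filter.atTop (𝓝 ((P (base W u a)).toReal - (P (Cp W u a b)).toReal)) := by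
    have heq : (fun n => (P (⋃ k ∈ Finset.Icc 1 (2 ^ n), cross W u a b n k)).toReal)
        = fun n => (P (base W u a)).toReal - (P (stay W u a b n)).toReal := by
      funext n
      rw [hsplit n]
      ring
    rw [heq]
    exact tendsto_const_nhds.sub hlim'
  have hub : (P (base W u a)).toReal - (P (Cp W u a b)).toReal
      ≤ 2 * (P (Rset W u a b)).toReal := by
    refine le_of_tendsto hHlim (Filter.Eventually.of_forall fun n => ?_)
    have h := hit_upper hW ha hab u n
    have h2 := ENNReal.toReal_mono
      (ENNReal.mul_ne_top (by norm_num) (measure_ne_top P _)) h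
    rwa [ENNReal.toReal_mul, ENNReal.toReal_ofNat] at h2
  have hlb : ∀ δ : ℝ, 0 < δ →
      2 * (P (Rset W u a b)).toReal
        ≤ ((P (base W u a)).toReal - (P (Cp W u a b)).toReal)
          + 2 * (δ / Real.sqrt (2 * Real.pi * b)) := by
    intro δ hδ
    have hBd' : (P (Bd W b u δ)).toReal ≤ δ / Real.sqrt (2 * Real.pi * b) :=
      ENNReal.toReal_le_of_le_ofReal (by positivity) (Bd_bound hW hb u δ)
    have hE := Estep_toReal_tendsto hW ha hab hδ
    have hseq : Filter.Tendsto (fun n =>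
        (P (⋃ k ∈ Finset.Icc 1 (2 ^ n), cross W u a b n k)).toReal
          + 2 * ((P (Estep W a b n δ)).toReal + (P (Bd W b u δ)).toReal))
        Filter.atTop (𝓝 (((P (base W u a)).toReal - (P (Cp W u a b)).toReal)
          + 2 * (0 + (P (Bd W b u δ)).toReal))) := by
      apply hHlim.add
      apply Filter.Tendsto.const_mul
      exact hE.add tendsto_const_nhds
    have hge : ∀ n, 2 * (P (Rset W u a b)).toReal
        ≤ (P (⋃ k ∈ Finset.Icc 1 (2 ^ n), cross W u a b n k)).toReal
          + 2 * ((P (Estep W a b n δ)).toReal + (P (Bd W b u δ)).toReal) := by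
      intro n
      have h := hit_lower hW ha hab u δ n
      have hfin : P (⋃ k ∈ Finset.Icc 1 (2 ^ n), cross W u a b n k)
          + 2 * (P (Estep W a b n δ) + P (Bd W b u δ)) ≠ ⊤ := by
        refine ENNReal.add_ne_top.2 ⟨measure_ne_top P _, ?_⟩
        exact ENNReal.mul_ne_top (by norm_num)
          (ENNReal.add_ne_top.2 ⟨measure_ne_top P _, measure_ne_top P _⟩)
      have h2 := ENNReal.toReal_mono hfin h
      rwa [ENNReal.toReal_mul, ENNReal.toReal_ofNat,
        ENNReal.toReal_add (measure_ne_top P _) (ENNReal.mul_ne_top (by norm_num)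
          (ENNReal.add_ne_top.2 ⟨measure_ne_top P _, measure_ne_top P _⟩)),
        ENNReal.toReal_mul, ENNReal.toReal_ofNat,
        ENNReal.toReal_add (measure_ne_top P _) (measure_ne_top P _)] at h2
    have := ge_of_tendsto hseq (Filter.Eventually.of_forall hge)
    calc 2 * (P (Rset W u a b)).toReal
        ≤ ((P (base W u a)).toReal - (P (Cp W u a b)).toReal)
          + 2 * (0 + (P (Bd W b u δ)).toReal) := this
      _ ≤ ((P (base W u a)).toReal - (P (Cp W u a b)).toReal)
          + 2 * (δ / Real.sqrt (2 * Real.pi * b)) := by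
          have : 2 * (0 + (P (Bd W b u δ)).toReal) ≤ 2 * (δ / Real.sqrt (2 * Real.pi * b)) := by
            rw [zero_add]
            linarith
          linarith
  have hlb' : 2 * (P (Rset W u a b)).toReal
      ≤ (P (base W u a)).toReal - (P (Cp W u a b)).toReal := by
    apply le_of_forall_pos_le_add
    intro ε hε
    have hsq : 0 < Real.sqrt (2 * Real.pi * b) := Real.sqrt_pos.2 (by positivity)
    have hδ : (0:ℝ) < ε * Real.sqrt (2 * Real.pi * b) / 2 := by positivity
    have := hlb _ hδ
    have heq : 2 * ((ε * Real.sqrt (2 * Real.pi * b) / 2) / Real.sqrt (2 * Real.pi * b)) = ε := by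
      field_simp
    linarith [this, heq.le]
  linarith [hub, hlb']

lemma interval_small (hW : IsStdBrownianMotion P W) {t : ℝ} (ht : 0 < t) (v : ℝ) {c : ℝ}
    (hc : 0 ≤ c) :
    (P {ω | W t ω - W 0 ω ∈ Set.Icc v (v + c)}).toReal ≤ c / Real.sqrt (2 * Real.pi * t) := by
  have h : {ω | W t ω - W 0 ω ∈ Set.Icc v (v + c)} = Bd W t (v + c) c := by
    unfold Bd
    ext ω
    simp only [Set.mem_setOf_eq, add_sub_cancel_right]
  rw [h]
  exact ENNReal.toReal_le_of_le_ofReal (by positivity) (Bd_bound hW ht _ c)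

lemma Climit (hW : IsStdBrownianMotion P W) {a b : ℝ} (ha : 0 < a) (hab : a < b) (M : ℝ) :
    (P (⋃ m : ℕ, Cp W (M + 1 / (m + 1)) a b)).toReal
      = (P {ω | M < W a ω - W 0 ω}).toReal
        - 2 * (P {ω | M < W a ω - W 0 ω ∧ W b ω - W 0 ω < M}).toReal := by
  haveI := hW.isProb
  have hb : 0 < b := ha.trans hab
  set c : ℕ → ℝ := fun m => 1 / (m + 1) with hc
  have hcpos : ∀ m, 0 < c m := fun m => by positivity
  have hctends : Filter.Tendsto c Filter.atTop (𝓝 0) :=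
    tendsto_one_div_add_atTop_nhds_zero_nat
  have hmono : Monotone (fun m : ℕ => Cp W (M + c m) a b) := by
    intro m m' hmm'
    have hle : c m' ≤ c m := by
      apply div_le_div_of_nonneg_left one_pos.le (by positivity)
      have : (m:ℝ) ≤ (m':ℝ) := by exact_mod_cast hmm'
      linarith
    show Cp W (M + c m) a b ⊆ Cp W (M + c m') a b
    exact Set.iInter_mono fun n => stay_mono_u (by linarith) n
  have hUlim : Filter.Tendsto (fun m => (P (Cp W (M + c m) a b)).toReal) Filter.atTop
      (𝓝 (P (⋃ m : ℕ, Cp W (M + c m) a b)).toReal) :=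
    (ENNReal.tendsto_toReal (measure_ne_top P _)).comp (tendsto_measure_iUnion_atTop hmono)
  set B0 : Set Ω := {ω | M < W a ω - W 0 ω} with hB0
  set R0 : Set Ω := {ω | M < W a ω - W 0 ω ∧ W b ω - W 0 ω < M} with hR0
  have hB0meas : MeasurableSet B0 := measurableSet_lt measurable_const (measurable_inc hW.meas 0 a)
  have hKa : (0:ℝ) < Real.sqrt (2 * Real.pi * a) := Real.sqrt_pos.2 (by positivity)
  have hKb : (0:ℝ) < Real.sqrt (2 * Real.pi * b) := Real.sqrt_pos.2 (by positivity)
  -- base convergence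
  have hbase_sandwich : ∀ m,
      (P B0).toReal - c m / Real.sqrt (2 * Real.pi * a)
        ≤ (P (base W (M + c m) a)).toReal
      ∧ (P (base W (M + c m) a)).toReal ≤ (P B0).toReal := by
    intro m
    have hsub : base W (M + c m) a ⊆ B0 := by
      intro ω hω
      simp only [hB0, Set.mem_setOf_eq]
      have := hcpos m
      simp only [base, Set.mem_setOf_eq] at hω
      linarith
    have hdiff : B0 \ base W (M + c m) a ⊆ {ω | W a ω - W 0 ω ∈ Set.Icc M (M + c m)} := by
      rintro ω ⟨h1, h2⟩
      simp only [base, Set.mem_setOf_eq, not_le] at h2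
      simp only [hB0, Set.mem_setOf_eq] at h1
      exact ⟨le_of_lt h1, le_of_lt h2⟩
    constructor
    · have h1 : P B0 ≤ P (base W (M + c m) a) + P {ω | W a ω - W 0 ω ∈ Set.Icc M (M + c m)} := by
        refine le_trans (measure_mono ?_) (measure_union_le _ _)
        intro ω hω
        by_cases h : ω ∈ base W (M + c m) a
        · exact Or.inl h
        · exact Or.inr (hdiff ⟨hω, h⟩)
      have h2 := ENNReal.toReal_mono
        (ENNReal.add_ne_top.2 ⟨measure_ne_top P _, measure_ne_top P _⟩) h1
      rw [ENNReal.toReal_add (measure_ne_top P _) (measure_ne_top P _)] at h2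
      have h3 := interval_small hW ha M (hcpos m).le
      linarith
    · exact ENNReal.toReal_mono (measure_ne_top P _) (measure_mono hsub)
  have hbase_lim : Filter.Tendsto (fun m => (P (base W (M + c m) a)).toReal) Filter.atTop
      (𝓝 (P B0).toReal) := by
    have hlow : Filter.Tendsto (fun m => (P B0).toReal - c m / Real.sqrt (2 * Real.pi * a))
        Filter.atTop (𝓝 ((P B0).toReal - 0 / Real.sqrt (2 * Real.pi * a))) :=
      tendsto_const_nhds.sub (hctends.div_const _)
    rw [zero_div, sub_zero] at hlow
    exact tendsto_of_tendsto_of_tendsto_of_le_of_le hlow tendsto_const_nhds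
      (fun m => (hbase_sandwich m).1) (fun m => (hbase_sandwich m).2)
  -- R convergence
  have hR_sandwich : ∀ m,
      ((P R0).toReal - c m / Real.sqrt (2 * Real.pi * a)
        ≤ (P (Rset W (M + c m) a b)).toReal)
      ∧ ((P (Rset W (M + c m) a b)).toReal
        ≤ (P R0).toReal + c m / Real.sqrt (2 * Real.pi * b)) := by
    intro m
    have hd1 : Rset W (M + c m) a b \ R0 ⊆ {ω | W b ω - W 0 ω ∈ Set.Icc M (M + c m)} := by
      rintro ω ⟨⟨h1, h2⟩, h3⟩
      simp only [hR0, Set.mem_setOf_eq, not_and, not_lt] at h3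
      have hx : M < W a ω - W 0 ω := by
        have := hcpos m
        linarith
      have hy := h3 hx
      exact ⟨hy, by linarith⟩
    have hd2 : R0 \ Rset W (M + c m) a b ⊆ {ω | W a ω - W 0 ω ∈ Set.Icc M (M + c m)} := by
      rintro ω ⟨⟨h1, h2⟩, h3⟩
      simp only [Rset, Set.mem_setOf_eq, not_and, not_lt] at h3
      by_cases h : M + c m ≤ W a ω - W 0 ω
      · exact absurd (h3 h) (by linarith [h2, hcpos m] : ¬ M + c m ≤ W b ω - W 0 ω)
      · push_neg at h
        exact ⟨le_of_lt h1, le_of_lt h⟩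
    constructor
    · have h1 : P R0 ≤ P (Rset W (M + c m) a b)
          + P {ω | W a ω - W 0 ω ∈ Set.Icc M (M + c m)} := by
        refine le_trans (measure_mono ?_) (measure_union_le _ _)
        intro ω hω
        by_cases h : ω ∈ Rset W (M + c m) a b
        · exact Or.inl h
        · exact Or.inr (hd2 ⟨hω, h⟩)
      have h2 := ENNReal.toReal_mono
        (ENNReal.add_ne_top.2 ⟨measure_ne_top P _, measure_ne_top P _⟩) h1
      rw [ENNReal.toReal_add (measure_ne_top P _) (measure_ne_top P _)] at h2
      have h3 := interval_small hW ha M (hcpos m).le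
      linarith
    · have h1 : P (Rset W (M + c m) a b) ≤ P R0
          + P {ω | W b ω - W 0 ω ∈ Set.Icc M (M + c m)} := by
        refine le_trans (measure_mono ?_) (measure_union_le _ _)
        intro ω hω
        by_cases h : ω ∈ R0
        · exact Or.inl h
        · exact Or.inr (hd1 ⟨hω, h⟩)
      have h2 := ENNReal.toReal_mono
        (ENNReal.add_ne_top.2 ⟨measure_ne_top P _, measure_ne_top P _⟩) h1
      rw [ENNReal.toReal_add (measure_ne_top P _) (measure_ne_top P _)] at h2
      have h3 := interval_small hW hb M (hcpos m).le
      linarith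
  have hR_lim : Filter.Tendsto (fun m => (P (Rset W (M + c m) a b)).toReal) Filter.atTop
      (𝓝 (P R0).toReal) := by
    have hlow : Filter.Tendsto (fun m => (P R0).toReal - c m / Real.sqrt (2 * Real.pi * a))
        Filter.atTop (𝓝 ((P R0).toReal - 0 / Real.sqrt (2 * Real.pi * a))) :=
      tendsto_const_nhds.sub (hctends.div_const _)
    have hup : Filter.Tendsto (fun m => (P R0).toReal + c m / Real.sqrt (2 * Real.pi * b))
        Filter.atTop (𝓝 ((P R0).toReal + 0 / Real.sqrt (2 * Real.pi * b))) :=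
      tendsto_const_nhds.add (hctends.div_const _)
    rw [zero_div, sub_zero] at hlow
    rw [zero_div, add_zero] at hup
    exact tendsto_of_tendsto_of_tendsto_of_le_of_le hlow hup
      (fun m => (hR_sandwich m).1) (fun m => (hR_sandwich m).2)
  -- combine
  have hcomb : Filter.Tendsto (fun m => (P (Cp W (M + c m) a b)).toReal) Filter.atTop
      (𝓝 ((P B0).toReal - 2 * (P R0).toReal)) := by
    have : (fun m => (P (Cp W (M + c m) a b)).toReal)
        = fun m => (P (base W (M + c m) a)).toReal - 2 * (P (Rset W (M + c m) a b)).toReal := by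
      funext m
      exact oneSided hW ha.le hab (M + c m)
    rw [this]
    exact hbase_lim.sub ((hR_lim.const_mul 2))
  exact tendsto_nhds_unique hUlim hcomb

lemma neg_BM (hW : IsStdBrownianMotion P W) : IsStdBrownianMotion P (fun t ω => -W t ω) where
  isProb := hW.isProb
  meas t := (hW.meas t).neg
  init := hW.init.mono fun ω h => by simp [h]
  cont := hW.cont.mono fun ω h => h.neg
  gauss s t hs hst := by
    have h := hW.gauss s t hs hst
    have heq : (fun ω => -W t ω - -W s ω) = (fun x : ℝ => -x) ∘ (fun ω => W t ω - W s ω) := by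
      funext ω
      simp only [Function.comp_apply]
      ring
    rw [heq, ← Measure.map_map (g := fun x : ℝ => -x) (f := fun ω => W t ω - W s ω) measurable_neg ((hW.meas t).sub (hW.meas s)), h,
      gaussianReal_map_neg]
  indep n t ht hmono := by
    have h := hW.indep n t ht hmono
    have h2 := h.comp (fun _ => fun x : ℝ => -x) (fun _ => measurable_neg)
    have heq : (fun (i : Fin n) ω => -W (t i.succ) ω - -W (t i.castSucc) ω)
        = fun (i : Fin n) => (fun x : ℝ => -x) ∘ (fun ω => W (t i.succ) ω - W (t i.castSucc) ω) := by
      funext i ω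
      simp only [Function.comp_apply]
      ring
    rw [heq]
    exact h2

section PairLaw

variable {P : Measure Ω} {W : ℝ → Ω → ℝ}

lemma pair_indep (hW : IsStdBrownianMotion P W) {a b : ℝ} (ha : 0 ≤ a) (hab : a ≤ b) :
    IndepFun (fun ω => W a ω - W 0 ω) (fun ω => W b ω - W a ω) P := by
  classical
  set t : Fin 3 → ℝ := fun i => if (i : ℕ) = 0 then 0 else if (i : ℕ) = 1 then a else b with ht
  have ht0 : ∀ i, 0 ≤ t i := by
    intro i
    simp only [ht]
    split_ifs <;> first | exact le_refl _ | exact ha | exact ha.trans hab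
  have htmono : Monotone t := by
    intro i j hij
    have hv : (i : ℕ) ≤ (j : ℕ) := hij
    simp only [ht]
    split_ifs <;> first | exact le_refl _ | exact ha | exact ha.trans hab | exact hab | (exfalso; omega)
  have h := hW.indep 2 t ht0 htmono
  have h2 := h.indepFun (show (0 : Fin 2) ≠ 1 by decide)
  have e0 : (fun ω => W (t (0 : Fin 2).succ) ω - W (t (0 : Fin 2).castSucc) ω)
      = fun ω => W a ω - W 0 ω := by
    funext ω
    norm_num [ht]
  have e1 : (fun ω => W (t (1 : Fin 2).succ) ω - W (t (1 : Fin 2).castSucc) ω)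
      = fun ω => W b ω - W a ω := by
    funext ω
    norm_num [ht]; rfl
  rw [e0, e1] at h2
  exact h2

lemma pair_law (hW : IsStdBrownianMotion P W) {a b : ℝ} (ha : 0 ≤ a) (hab : a ≤ b) :
    Measure.map (fun ω => (W a ω - W 0 ω, W b ω - W a ω)) P
      = (gaussianReal 0 a.toNNReal).prod (gaussianReal 0 (b - a).toNNReal) := by
  haveI := hW.isProb
  have hi := pair_indep hW ha hab
  have hmX : Measurable (fun ω => W a ω - W 0 ω) := measurable_inc hW.meas 0 a
  have hmZ : Measurable (fun ω => W b ω - W a ω) := measurable_inc hW.meas a b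
  have h := (indepFun_iff_map_prod_eq_prod_map_map hmX.aemeasurable hmZ.aemeasurable).mp hi
  rw [h]
  have hXlaw : Measure.map (fun ω => W a ω - W 0 ω) P = gaussianReal 0 a.toNNReal := by
    have := hW.gauss 0 a le_rfl ha
    rwa [sub_zero] at this
  have hZlaw : Measure.map (fun ω => W b ω - W a ω) P = gaussianReal 0 (b - a).toNNReal :=
    hW.gauss a b ha hab
  rw [hXlaw, hZlaw]

lemma PR0_eq (hW : IsStdBrownianMotion P W) {a b : ℝ} (ha : 0 ≤ a) (hab : a < b) (M : ℝ) :
    P {ω | M < W a ω - W 0 ω ∧ W b ω - W 0 ω < M}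
      = ∫⁻ x, (Set.Ioi M).indicator
          (fun x => ENNReal.ofReal (gaussTail ((x - M) / Real.sqrt (b - a)))) x
          ∂(gaussianReal 0 a.toNNReal) := by
  haveI := hW.isProb
  have hT : (0:ℝ) < b - a := by linarith
  have hv : (b - a).toNNReal ≠ 0 := by
    simp only [ne_eq, Real.toNNReal_eq_zero, not_le]
    exact hT
  have hmX : Measurable (fun ω => W a ω - W 0 ω) := measurable_inc hW.meas 0 a
  have hmZ : Measurable (fun ω => W b ω - W a ω) := measurable_inc hW.meas a b
  have hpre : {ω | M < W a ω - W 0 ω ∧ W b ω - W 0 ω < M}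
      = (fun ω => (W a ω - W 0 ω, W b ω - W a ω)) ⁻¹' {p : ℝ × ℝ | M < p.1 ∧ p.1 + p.2 < M} := by
    ext ω
    simp only [Set.mem_setOf_eq, Set.mem_preimage]
    constructor
    · rintro ⟨h1, h2⟩
      exact ⟨h1, by linarith⟩
    · rintro ⟨h1, h2⟩
      exact ⟨h1, by linarith⟩
  have hmeasS : MeasurableSet {p : ℝ × ℝ | M < p.1 ∧ p.1 + p.2 < M} := by
    refine MeasurableSet.inter ?_ ?_
    · exact measurableSet_lt measurable_const measurable_fst
    · exact measurableSet_lt (measurable_fst.add measurable_snd) measurable_const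
  rw [hpre, ← Measure.map_apply (hmX.prodMk hmZ) hmeasS, pair_law hW ha hab.le,
    Measure.prod_apply hmeasS]
  refine lintegral_congr fun x => ?_
  by_cases hx : M < x
  · have hsec : (Prod.mk x ⁻¹' {p : ℝ × ℝ | M < p.1 ∧ p.1 + p.2 < M}) = Set.Iio (M - x) := by
      ext z
      simp only [Set.mem_preimage, Set.mem_setOf_eq, Set.mem_Iio]
      constructor
      · rintro ⟨_, h2⟩
        linarith
      · intro h
        exact ⟨hx, by linarith⟩
    rw [hsec, Set.indicator_of_mem (Set.mem_Ioi.mpr hx)]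
    have : Set.Iio (M - x) = Set.Iio (-(x - M)) := by
      congr 1
      ring
    rw [this, gaussianReal_Iio _ hv, Real.coe_toNNReal _ hT.le]
  · have hsec : (Prod.mk x ⁻¹' {p : ℝ × ℝ | M < p.1 ∧ p.1 + p.2 < M}) = (∅ : Set ℝ) := by
      ext z
      simp only [Set.mem_preimage, Set.mem_setOf_eq, Set.mem_empty_iff_false, iff_false]
      rintro ⟨h1, _⟩
      exact hx h1
    rw [hsec, Set.indicator_of_notMem (by simpa using hx)]
    simp

lemma PRm0_eq (hW : IsStdBrownianMotion P W) {a b : ℝ} (ha : 0 ≤ a) (hab : a < b) (M : ℝ) :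
    P {ω | W a ω - W 0 ω < M ∧ M < W b ω - W 0 ω}
      = ∫⁻ x, (Set.Iio M).indicator
          (fun x => ENNReal.ofReal (gaussTail ((M - x) / Real.sqrt (b - a)))) x
          ∂(gaussianReal 0 a.toNNReal) := by
  haveI := hW.isProb
  have hT : (0:ℝ) < b - a := by linarith
  have hv : (b - a).toNNReal ≠ 0 := by
    simp only [ne_eq, Real.toNNReal_eq_zero, not_le]
    exact hT
  have hmX : Measurable (fun ω => W a ω - W 0 ω) := measurable_inc hW.meas 0 a
  have hmZ : Measurable (fun ω => W b ω - W a ω) := measurable_inc hW.meas a b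
  have hpre : {ω | W a ω - W 0 ω < M ∧ M < W b ω - W 0 ω}
      = (fun ω => (W a ω - W 0 ω, W b ω - W a ω)) ⁻¹' {p : ℝ × ℝ | p.1 < M ∧ M < p.1 + p.2} := by
    ext ω
    simp only [Set.mem_setOf_eq, Set.mem_preimage]
    constructor
    · rintro ⟨h1, h2⟩
      exact ⟨h1, by linarith⟩
    · rintro ⟨h1, h2⟩
      exact ⟨h1, by linarith⟩
  have hmeasS : MeasurableSet {p : ℝ × ℝ | p.1 < M ∧ M < p.1 + p.2} := by
    refine MeasurableSet.inter ?_ ?_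
    · exact measurableSet_lt measurable_fst measurable_const
    · exact measurableSet_lt measurable_const (measurable_fst.add measurable_snd)
  rw [hpre, ← Measure.map_apply (hmX.prodMk hmZ) hmeasS, pair_law hW ha hab.le,
    Measure.prod_apply hmeasS]
  refine lintegral_congr fun x => ?_
  by_cases hx : x < M
  · have hsec : (Prod.mk x ⁻¹' {p : ℝ × ℝ | p.1 < M ∧ M < p.1 + p.2}) = Set.Ioi (M - x) := by
      ext z
      simp only [Set.mem_preimage, Set.mem_setOf_eq, Set.mem_Ioi]
      constructor
      · rintro ⟨_, h2⟩
        linarith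
      · intro h
        exact ⟨hx, by linarith⟩
    rw [hsec, Set.indicator_of_mem (Set.mem_Iio.mpr hx), gaussianReal_Ioi _ hv,
      Real.coe_toNNReal _ hT.le]
  · have hsec : (Prod.mk x ⁻¹' {p : ℝ × ℝ | p.1 < M ∧ M < p.1 + p.2}) = (∅ : Set ℝ) := by
      ext z
      simp only [Set.mem_preimage, Set.mem_setOf_eq, Set.mem_empty_iff_false, iff_false]
      rintro ⟨h1, _⟩
      exact hx h1
    rw [hsec, Set.indicator_of_notMem (by simpa using hx)]
    simp

end PairLaw

lemma grid_dense_le {f : ℝ → ℝ} (hf : Continuous f) {a b u : ℝ} (hab : a < b)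
    (h : ∀ n k : ℕ, k ≤ 2 ^ n → u ≤ f (grid a b n k)) :
    ∀ t ∈ Set.Icc a b, u ≤ f t := by
  intro t ht
  set θ : ℝ := (t - a) / (b - a) with hθ
  have hba : (0:ℝ) < b - a := by linarith
  have hθ0 : 0 ≤ θ := div_nonneg (by linarith [ht.1]) hba.le
  have hθ1 : θ ≤ 1 := by
    rw [hθ, div_le_one hba]
    linarith [ht.2]
  set k : ℕ → ℕ := fun n => ⌊θ * 2 ^ n⌋₊ with hk
  have hkle : ∀ n, k n ≤ 2 ^ n := by
    intro n
    have h2n : (0:ℝ) < 2 ^ n := by positivity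
    have hle : θ * 2 ^ n ≤ 2 ^ n := by nlinarith
    have hcast : ((2 ^ n : ℕ) : ℝ) = (2:ℝ) ^ n := by push_cast; ring
    calc k n ≤ ⌊((2 ^ n : ℕ) : ℝ)⌋₊ := Nat.floor_le_floor (by rw [hcast]; exact hle)
      _ = 2 ^ n := Nat.floor_natCast _
  have hbound : ∀ n, |grid a b n (k n) - t| ≤ (b - a) / 2 ^ n := by
    intro n
    have h2n : (0:ℝ) < 2 ^ n := by positivity
    have hfl : (k n : ℝ) ≤ θ * 2 ^ n := Nat.floor_le (by positivity)
    have hfl2 : θ * 2 ^ n < k n + 1 := Nat.lt_floor_add_one _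
    have hteq : t = a + (b - a) * θ := by
      rw [hθ]
      field_simp; ring
    have hgr : grid a b n (k n) - t = (b - a) * ((k n : ℝ) - θ * 2 ^ n) / 2 ^ n := by
      rw [hteq]
      unfold grid
      field_simp
      ring
    rw [hgr, abs_div, abs_of_pos h2n, abs_mul, abs_of_pos hba]
    have habs : |(k n : ℝ) - θ * 2 ^ n| ≤ 1 := by
      rw [abs_le]
      constructor <;> linarith
    calc (b - a) * |(k n : ℝ) - θ * 2 ^ n| / 2 ^ n ≤ (b - a) * 1 / 2 ^ n := by
          gcongr
      _ = (b - a) / 2 ^ n := by ring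
  have hzero : Filter.Tendsto (fun n : ℕ => (b - a) / 2 ^ n) Filter.atTop (𝓝 0) := by
    have heq2 : (fun n : ℕ => (b - a) / 2 ^ n) = fun n : ℕ => (b - a) * (1 / 2 : ℝ) ^ n := by
      funext n
      rw [div_pow, one_pow]
      ring
    rw [heq2]
    have := tendsto_pow_atTop_nhds_zero_of_lt_one (by norm_num : (0:ℝ) ≤ 1 / 2)
      (by norm_num : (1 / 2 : ℝ) < 1)
    simpa using this.const_mul (b - a)
  have htend : Filter.Tendsto (fun n => grid a b n (k n)) Filter.atTop (𝓝 t) := by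
    rw [tendsto_iff_dist_tendsto_zero]
    apply squeeze_zero (fun n => dist_nonneg) (fun n => ?_) hzero
    rw [Real.dist_eq]
    exact hbound n
  exact ge_of_tendsto ((hf.tendsto t).comp htend)
    (Filter.Eventually.of_forall fun n => h n (k n) (hkle n))

section Final

variable {P : Measure Ω} {W : ℝ → Ω → ℝ}

lemma event_ae (hW : IsStdBrownianMotion P W) {a b : ℝ} (ha : 0 < a) (hab : a < b) (M : ℝ) :
    {ω | 0 < ⨅ t : Set.Icc a b, |W t ω - M|}
      =ᵐ[P] (((⋃ m : ℕ, Cp W (M + 1 / (m + 1)) a b)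
        ∪ (⋃ m : ℕ, Cp (fun t ω => -W t ω) (-M + 1 / (m + 1)) a b) : Set Ω)) := by
  haveI hne : Nonempty (Set.Icc a b) := Set.Nonempty.to_subtype (Set.nonempty_Icc.mpr hab.le)
  rw [Filter.eventuallyEq_set]
  filter_upwards [hW.cont, hW.init] with ω hcont h0
  constructor
  · intro hω
    set ι := ⨅ t : Set.Icc a b, |W t ω - M| with hι
    have hlb : ∀ t, t ∈ Set.Icc a b → ι ≤ |W t ω - M| := by
      intro t htt
      exact ciInf_le ⟨0, by rintro y ⟨s, rfl⟩; positivity⟩ (⟨t, htt⟩ : Set.Icc a b)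
    have haM : W a ω ≠ M := by
      intro h
      have h2 := hlb a (Set.left_mem_Icc.mpr hab.le)
      rw [h, sub_self, abs_zero] at h2
      linarith
    obtain ⟨m, hm⟩ := exists_nat_one_div_lt hω
    rcases lt_or_gt_of_ne haM with hcase | hcase
    · -- W a ω < M : minus side
      right
      refine Set.mem_iUnion.mpr ⟨m, Set.mem_iInter.mpr fun n => ?_⟩
      intro p hp
      have hclaim : ∀ t, t ∈ Set.Icc a b → W t ω ≤ M - ι := by
        intro t htt
        have hd := hlb t htt
        rcases le_or_gt (W t ω) M with hge | hlt
        · rw [abs_of_nonpos (by linarith)] at hd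
          linarith
        · exfalso
          have hat : a ≤ t := htt.1
          have hIVT := intermediate_value_Icc hat (hcont.continuousOn (s := Set.Icc a t))
          have hmem : M ∈ Set.Icc (W a ω) (W t ω) := ⟨by linarith, by linarith⟩
          obtain ⟨s, hs, hsM⟩ := hIVT hmem
          have hsM' : W s ω = M := hsM
          have hsin : s ∈ Set.Icc a b := ⟨hs.1, hs.2.trans htt.2⟩
          have h3 := hlb s hsin
          rw [hsM', sub_self, abs_zero] at h3
          linarith
      have h4 := hclaim (grid a b n p) (grid_mem hab.le hp)
      show -M + 1 / (m + 1) ≤ -W (grid a b n p) ω - -W 0 ω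
      rw [h0]
      simp only [neg_zero, sub_neg_eq_add, add_zero]
      linarith
    · -- W a ω > M : plus side
      left
      refine Set.mem_iUnion.mpr ⟨m, Set.mem_iInter.mpr fun n => ?_⟩
      intro p hp
      have hclaim : ∀ t, t ∈ Set.Icc a b → M + ι ≤ W t ω := by
        intro t htt
        have hd := hlb t htt
        rcases le_or_gt M (W t ω) with hge | hlt
        · rw [abs_of_nonneg (by linarith)] at hd
          linarith
        · exfalso
          have hat : a ≤ t := htt.1
          have hIVT := intermediate_value_Icc' hat (hcont.continuousOn (s := Set.Icc a t))
          have hmem : M ∈ Set.Icc (W t ω) (W a ω) := ⟨by linarith, by linarith⟩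
          obtain ⟨s, hs, hsM⟩ := hIVT hmem
          have hsM' : W s ω = M := hsM
          have hsin : s ∈ Set.Icc a b := ⟨hs.1, hs.2.trans htt.2⟩
          have h3 := hlb s hsin
          rw [hsM', sub_self, abs_zero] at h3
          linarith
      have h4 := hclaim (grid a b n p) (grid_mem hab.le hp)
      show M + 1 / (m + 1) ≤ W (grid a b n p) ω - W 0 ω
      rw [h0, sub_zero]
      linarith
  · intro hω
    have hcpos : ∀ m : ℕ, (0:ℝ) < 1 / (m + 1) := fun m => by positivity
    rcases hω with hω | hω
    · obtain ⟨m, hm⟩ := Set.mem_iUnion.mp hω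
      have hstay : ∀ n (p : ℕ), p ≤ 2 ^ n → M + 1 / (m + 1) ≤ W (grid a b n p) ω := by
        intro n p hp
        have := (Set.mem_iInter.mp hm n) p hp
        rwa [h0, sub_zero] at this
      have hall := grid_dense_le hcont hab hstay
      show 0 < ⨅ t : Set.Icc a b, |W t ω - M|
      have hloι : ∀ t : Set.Icc a b, 1 / ((m:ℝ) + 1) ≤ |W t ω - M| := by
        rintro ⟨t, htt⟩
        have := hall t htt
        rw [abs_of_nonneg (by linarith [hcpos m])]
        linarith [hcpos m]
      exact lt_of_lt_of_le (hcpos m) (le_ciInf hloι)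
    · obtain ⟨m, hm⟩ := Set.mem_iUnion.mp hω
      have hstay : ∀ n (p : ℕ), p ≤ 2 ^ n → -M + 1 / (m + 1) ≤ -W (grid a b n p) ω := by
        intro n p hp
        have := (Set.mem_iInter.mp hm n) p hp
        simp only [] at this
        rw [h0] at this
        linarith [this]
      have hall := grid_dense_le (hcont.neg) hab hstay
      show 0 < ⨅ t : Set.Icc a b, |W t ω - M|
      have hloι : ∀ t : Set.Icc a b, 1 / ((m:ℝ) + 1) ≤ |W t ω - M| := by
        rintro ⟨t, htt⟩
        have := hall t htt; simp only [Pi.neg_apply] at this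
        rw [abs_of_nonpos (by linarith [hcpos m])]
        linarith [hcpos m]
      exact lt_of_lt_of_le (hcpos m) (le_ciInf hloι)

lemma BpBm_disjoint {a b : ℝ} (hab : a < b) (M : ℝ) :
    Disjoint (⋃ m : ℕ, Cp W (M + 1 / (m + 1)) a b)
      (⋃ m : ℕ, Cp (fun t ω => -W t ω) (-M + 1 / (m + 1)) a b) := by
  rw [Set.disjoint_left]
  intro ω h1 h2
  obtain ⟨m1, hm1⟩ := Set.mem_iUnion.mp h1
  obtain ⟨m2, hm2⟩ := Set.mem_iUnion.mp h2
  have ha1 := (Set.mem_iInter.mp hm1 0) 0 (by norm_num)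
  have ha2 := (Set.mem_iInter.mp hm2 0) 0 (by norm_num)
  rw [grid_zero] at ha1 ha2
  have c1 : (0:ℝ) < 1 / ((m1:ℝ) + 1) := by positivity
  have c2 : (0:ℝ) < 1 / ((m2:ℝ) + 1) := by positivity
  simp only at ha1 ha2
  linarith

lemma integral_gauss_withDensity (v : ℝ≥0) (hv : v ≠ 0) (f : ℝ → ℝ) :
    ∫ x, f x ∂(gaussianReal 0 v) = ∫ x, gaussianPDFReal 0 v x * f x := by
  rw [gaussianReal_of_var_ne_zero 0 hv]
  have hpdf : (gaussianPDF 0 v)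
      = fun x => (((gaussianPDFReal 0 v x).toNNReal : ℝ≥0) : ℝ≥0∞) := rfl
  rw [hpdf]
  rw [integral_withDensity_eq_integral_smul
    ((measurable_gaussianPDFReal 0 v).real_toNNReal) f]
  refine integral_congr_ae (Filter.Eventually.of_forall fun x => ?_)
  show (gaussianPDFReal 0 v x).toNNReal • f x = gaussianPDFReal 0 v x * f x
  rw [NNReal.smul_def, Real.coe_toNNReal _ (gaussianPDFReal_nonneg 0 v x), smul_eq_mul]

end Final

end Reflection

end BM4

open BM4 in
set_option maxHeartbeats 1000000 in
theorem stmt4 {Ω : Type*} [MeasurableSpace Ω] (P : Measure Ω) (W : ℝ → Ω → ℝ)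
    (hW : IsStdBrownianMotion P W) (M : ℝ) (a b : ℝ) (ha : 0 < a) (hab : a < b) :
    (P {ω | 0 < ⨅ t : Set.Icc a b, |W t ω - M|}).toReal =
      ∫ v : ℝ,
        (1 - 2 * gaussTail (|v| / Real.sqrt (b - a))) *
          (Real.exp (-(M + v) ^ 2 / (2 * a)) / Real.sqrt (2 * Real.pi * a)) := by
  classical
  haveI := hW.isProb
  have hb : 0 < b := ha.trans hab
  have hT : (0:ℝ) < b - a := by linarith
  have hva : a.toNNReal ≠ 0 := by
    simp only [ne_eq, Real.toNNReal_eq_zero, not_le]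
    exact ha
  have hW' : IsStdBrownianMotion P (fun t ω => -W t ω) := neg_BM hW
  set Bp : Set Ω := ⋃ m : ℕ, Cp W (M + 1 / (m + 1)) a b with hBp
  set Bm : Set Ω := ⋃ m : ℕ, Cp (fun t ω => -W t ω) (-M + 1 / (m + 1)) a b with hBm
  have hBmmeas : MeasurableSet Bm :=
    MeasurableSet.iUnion fun m => Cp_measurable (fun t => (hW.meas t).neg)
  -- step 1-3: P A = P Bp + P Bm
  have h1 : P {ω | 0 < ⨅ t : Set.Icc a b, |W t ω - M|} = P Bp + P Bm := by
    rw [measure_congr (event_ae hW ha hab M)]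
    exact measure_union (BpBm_disjoint hab M) hBmmeas
  -- step 4,5
  have h4 : (P Bp).toReal
      = (P {ω | M < W a ω - W 0 ω}).toReal
        - 2 * (P {ω | M < W a ω - W 0 ω ∧ W b ω - W 0 ω < M}).toReal :=
    Climit hW ha hab M
  have h5 : (P Bm).toReal
      = (P {ω | W a ω - W 0 ω < M}).toReal
        - 2 * (P {ω | W a ω - W 0 ω < M ∧ M < W b ω - W 0 ω}).toReal := by
    have h := Climit hW' ha hab (-M)
    have e1 : {ω | -M < (fun t ω => -W t ω) a ω - (fun t ω => -W t ω) 0 ω}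
        = {ω | W a ω - W 0 ω < M} := by
      ext ω
      simp only [Set.mem_setOf_eq]
      constructor <;> intro h <;> linarith
    have e2 : {ω | -M < (fun t ω => -W t ω) a ω - (fun t ω => -W t ω) 0 ω
          ∧ (fun t ω => -W t ω) b ω - (fun t ω => -W t ω) 0 ω < -M}
        = {ω | W a ω - W 0 ω < M ∧ M < W b ω - W 0 ω} := by
      ext ω
      simp only [Set.mem_setOf_eq]
      constructor <;> rintro ⟨u1, u2⟩ <;> constructor <;> linarith
    rw [e1, e2] at h
    exact h
  -- step 6 : the base probabilities sum to 1
  have hXlaw : Measure.map (fun ω => W a ω - W 0 ω) P = gaussianReal 0 a.toNNReal := by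
    have := hW.gauss 0 a le_rfl ha.le
    rwa [sub_zero] at this
  have hmX : Measurable (fun ω => W a ω - W 0 ω) := measurable_inc hW.meas 0 a
  have h6 : (P {ω | M < W a ω - W 0 ω}).toReal + (P {ω | W a ω - W 0 ω < M}).toReal = 1 := by
    have hp1 : P {ω | M < W a ω - W 0 ω} = gaussianReal 0 a.toNNReal (Set.Ioi M) := by
      have : {ω | M < W a ω - W 0 ω} = (fun ω => W a ω - W 0 ω) ⁻¹' (Set.Ioi M) := rfl
      rw [this, ← Measure.map_apply hmX measurableSet_Ioi, hXlaw]
    have hp2 : P {ω | W a ω - W 0 ω < M} = gaussianReal 0 a.toNNReal (Set.Iio M) := by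
      have : {ω | W a ω - W 0 ω < M} = (fun ω => W a ω - W 0 ω) ⁻¹' (Set.Iio M) := rfl
      rw [this, ← Measure.map_apply hmX measurableSet_Iio, hXlaw]
    have hsum : gaussianReal 0 a.toNNReal (Set.Ioi M) + gaussianReal 0 a.toNNReal (Set.Iio M)
        = 1 := by
      have hd : Disjoint (Set.Ioi M) (Set.Iio M) := by
        rw [Set.disjoint_left]
        intro x hx hx'
        exact absurd (hx.trans hx') (lt_irrefl M)
      rw [← measure_union hd measurableSet_Iio]
      have hu : Set.Ioi M ∪ Set.Iio M = {M}ᶜ := by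
        rw [Set.union_comm, Set.Iio_union_Ioi]
      rw [hu, measure_compl (measurableSet_singleton M) (measure_ne_top _ _),
        gaussianReal_singleton _ hva M, measure_univ, tsub_zero]
    have := congrArg ENNReal.toReal hsum
    rw [ENNReal.toReal_add (measure_ne_top _ _) (measure_ne_top _ _)] at this
    rw [hp1, hp2]
    simpa using this
  -- step 7 : sum of the two R-probabilities as an integral
  have hgm : Measurable (fun x : ℝ => gaussTail (|x - M| / Real.sqrt (b - a))) :=
    measurable_gaussTail.comp (((measurable_id.sub_const M).abs).div_const _)
  have hMnull : ∀ᵐ x ∂(gaussianReal 0 a.toNNReal), x ≠ M := by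
    rw [ae_iff]
    convert gaussianReal_singleton _ hva M using 2
    ext x
    simp
  have h7 : (P {ω | M < W a ω - W 0 ω ∧ W b ω - W 0 ω < M}).toReal
      + (P {ω | W a ω - W 0 ω < M ∧ M < W b ω - W 0 ω}).toReal
      = ∫ x, gaussTail (|x - M| / Real.sqrt (b - a)) ∂(gaussianReal 0 a.toNNReal) := by
    have hsum : P {ω | M < W a ω - W 0 ω ∧ W b ω - W 0 ω < M}
        + P {ω | W a ω - W 0 ω < M ∧ M < W b ω - W 0 ω}
        = ∫⁻ x, ENNReal.ofReal (gaussTail (|x - M| / Real.sqrt (b - a)))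
            ∂(gaussianReal 0 a.toNNReal) := by
      have hm1 : Measurable fun x : ℝ => (Set.Ioi M).indicator
          (fun x => ENNReal.ofReal (gaussTail ((x - M) / Real.sqrt (b - a)))) x := by
        apply Measurable.indicator ?_ measurableSet_Ioi
        apply Measurable.ennreal_ofReal
        exact measurable_gaussTail.comp ((measurable_id.sub_const M).div_const _)
      rw [PR0_eq hW ha.le hab M, PRm0_eq hW ha.le hab M, ← lintegral_add_left hm1]
      refine lintegral_congr_ae ?_
      filter_upwards [hMnull] with x hx
      rcases lt_or_gt_of_ne hx with hlt | hgt
      · rw [Set.indicator_of_notMem (by simpa using hlt.le),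
          Set.indicator_of_mem (Set.mem_Iio.mpr hlt), zero_add,
          abs_of_neg (by linarith : x - M < 0), neg_sub]
      · rw [Set.indicator_of_mem (Set.mem_Ioi.mpr hgt),
          Set.indicator_of_notMem (by simpa using hgt.le), add_zero,
          abs_of_pos (by linarith : 0 < x - M)]
    have h2 := congrArg ENNReal.toReal hsum
    rw [ENNReal.toReal_add (measure_ne_top _ _) (measure_ne_top _ _)] at h2
    rw [h2, integral_eq_lintegral_of_nonneg_ae
      (Filter.Eventually.of_forall fun x => gaussTail_nonneg _) hgm.aestronglyMeasurable]
  -- step 8/9 : integral manipulations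
  have hpdf_eq : ∀ x : ℝ, gaussianPDFReal 0 a.toNNReal x
      = Real.exp (-x ^ 2 / (2 * a)) / Real.sqrt (2 * Real.pi * a) := by
    intro x
    rw [gaussianPDFReal, Real.coe_toNNReal a ha.le, sub_zero]
    ring
  have h8 : ∫ x, gaussTail (|x - M| / Real.sqrt (b - a)) ∂(gaussianReal 0 a.toNNReal)
      = ∫ x, gaussianPDFReal 0 a.toNNReal x * gaussTail (|x - M| / Real.sqrt (b - a)) :=
    integral_gauss_withDensity a.toNNReal hva _
  set g : ℝ → ℝ := fun v => gaussTail (|v| / Real.sqrt (b - a)) with hgdef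
  set p : ℝ → ℝ := fun x => Real.exp (-x ^ 2 / (2 * a)) / Real.sqrt (2 * Real.pi * a) with hpdef
  have hshift : ∫ x, gaussianPDFReal 0 a.toNNReal x * gaussTail (|x - M| / Real.sqrt (b - a))
      = ∫ v, g v * p (M + v) := by
    rw [← integral_add_left_eq_self
      (fun x => gaussianPDFReal 0 a.toNNReal x * gaussTail (|x - M| / Real.sqrt (b - a))) M]
    refine integral_congr_ae (Filter.Eventually.of_forall fun v => ?_)
    simp only [add_sub_cancel_left, hgdef, hpdef]
    rw [hpdf_eq]
    ring
  have hIp : Integrable p :=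
    (integrable_gaussianPDFReal 0 a.toNNReal).congr
      (Filter.Eventually.of_forall fun x => hpdf_eq x)
  have hIpshift : Integrable (fun v => p (M + v)) := by
    have hmp : MeasurePreserving (fun v : ℝ => M + v) volume volume :=
      measurePreserving_add_left volume M
    exact (hmp.integrable_comp hIp.aestronglyMeasurable).mpr hIp
  have hgmeas : Measurable g :=
    measurable_gaussTail.comp (measurable_abs.div_const _)
  have hIgp : Integrable (fun v => g v * p (M + v)) := by
    refine Integrable.bdd_mul (c := 1) hIpshift hgmeas.aestronglyMeasurable (ae_of_all _ fun v => ?_)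
    rw [Real.norm_eq_abs, abs_of_nonneg (gaussTail_nonneg _)]
    exact gaussTail_le_one _
  have htot : ∫ v, p (M + v) = 1 := by
    have h0 : ∫ v, p (M + v) = ∫ x, p x := integral_add_left_eq_self p M
    have h1' : ∫ x, p x = ∫ x, gaussianPDFReal 0 a.toNNReal x :=
      integral_congr_ae (Filter.Eventually.of_forall fun x => (hpdf_eq x).symm)
    rw [h0, h1', integral_gaussianPDFReal_eq_one 0 hva]
  have hRHS : ∫ v, (1 - 2 * g v) * p (M + v)
      = (∫ v, p (M + v)) - 2 * ∫ v, g v * p (M + v) := by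
    have heq : (fun v => (1 - 2 * g v) * p (M + v))
        = fun v => p (M + v) - 2 * (g v * p (M + v)) := by
      funext v
      ring
    rw [heq, integral_sub hIpshift (hIgp.const_mul 2), integral_const_mul]
  -- final computation
  have hLHS : (P {ω | 0 < ⨅ t : Set.Icc a b, |W t ω - M|}).toReal
      = 1 - 2 * ∫ v, g v * p (M + v) := by
    rw [h1, ENNReal.toReal_add (measure_ne_top _ _) (measure_ne_top _ _), h4, h5]
    have h7' := h7
    rw [h8, hshift] at h7'
    linarith [h6, h7']
  rw [hLHS]
  have : ∫ v : ℝ, (1 - 2 * gaussTail (|v| / Real.sqrt (b - a))) *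
      (Real.exp (-(M + v) ^ 2 / (2 * a)) / Real.sqrt (2 * Real.pi * a))
      = ∫ v, (1 - 2 * g v) * p (M + v) := by
    refine integral_congr_ae (Filter.Eventually.of_forall fun v => ?_)
    simp only [hgdef, hpdef]
  rw [this, hRHS, htot]
end

section
/- There is an absolute constant C such that for every M ∈ ℝ and 0 < a < b, 2∫_ℝ Ψ(|v|/√(b−a)) e^{−(M+v)²/(2a)}/√(2πa) dv ≤ C · min(1, √((b−a)/a) · e^{−M²/(8·max(a, b−a))}), where Ψ(x) = ∫_x^∞ e^{−u²/2} du/√(2π). -/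
open MeasureTheory ProbabilityTheory Real Set

lemma gaussTail_nonneg (x : ℝ) : 0 ≤ gaussTail x :=
  setIntegral_nonneg measurableSet_Ioi fun u _ => by positivity

lemma integral_Ioi_comp_sub (g : ℝ → ℝ) (x : ℝ) :
    ∫ u in Ioi x, g (u - x) = ∫ u in Ioi (0 : ℝ), g u := by
  rw [← integral_indicator measurableSet_Ioi, ← integral_indicator measurableSet_Ioi,
    ← integral_sub_right_eq_self (fun u => (Ioi (0 : ℝ)).indicator g u) x]
  congr 1
  funext u
  by_cases h : x < u <;> simp [indicator, mem_Ioi, sub_pos, h]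

lemma gaussTail_le {x : ℝ} (hx : 0 ≤ x) : gaussTail x ≤ Real.exp (-x ^ 2 / 2) / 2 := by
  have hs : (0 : ℝ) < Real.sqrt (2 * Real.pi) := Real.sqrt_pos.2 (by positivity)
  have hhalf : (0 : ℝ) < 1 / 2 := by norm_num
  have hf : Integrable (fun u : ℝ => Real.exp (-u ^ 2 / 2) / Real.sqrt (2 * Real.pi)) := by
    have h := (integrable_exp_neg_mul_sq hhalf).div_const (Real.sqrt (2 * Real.pi))
    convert h using 2 with u
    ring_nf
  have hg : Integrable (fun u : ℝ =>
      Real.exp (-x ^ 2 / 2) * Real.exp (-(u - x) ^ 2 / 2) / Real.sqrt (2 * Real.pi)) := by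
    have h := (((integrable_exp_neg_mul_sq hhalf).comp_sub_right x).const_mul
      (Real.exp (-x ^ 2 / 2))).div_const (Real.sqrt (2 * Real.pi))
    convert h using 2 with u
    ring_nf
  have key : ∀ u ∈ Ioi x, Real.exp (-u ^ 2 / 2) / Real.sqrt (2 * Real.pi) ≤
      Real.exp (-x ^ 2 / 2) * Real.exp (-(u - x) ^ 2 / 2) / Real.sqrt (2 * Real.pi) := by
    intro u hu
    rw [mem_Ioi] at hu
    rw [← Real.exp_add]
    gcongr
    nlinarith
  have step1 : gaussTail x ≤
      ∫ u in Ioi x, Real.exp (-x ^ 2 / 2) * Real.exp (-(u - x) ^ 2 / 2) / Real.sqrt (2 * Real.pi) :=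
    setIntegral_mono_on hf.integrableOn hg.integrableOn measurableSet_Ioi key
  have step2 : (∫ u in Ioi x,
      Real.exp (-x ^ 2 / 2) * Real.exp (-(u - x) ^ 2 / 2) / Real.sqrt (2 * Real.pi)) =
      Real.exp (-x ^ 2 / 2) / Real.sqrt (2 * Real.pi) * ∫ u in Ioi x, Real.exp (-(u - x) ^ 2 / 2) := by
    rw [← MeasureTheory.integral_const_mul]
    congr 1; funext u; ring
  have step3 : (∫ u in Ioi x, Real.exp (-(u - x) ^ 2 / 2)) = Real.sqrt (2 * Real.pi) / 2 := by
    rw [integral_Ioi_comp_sub (fun t => Real.exp (-t ^ 2 / 2)) x]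
    have h := integral_gaussian_Ioi (1 / 2)
    have heq : (∫ u in Ioi (0 : ℝ), Real.exp (-u ^ 2 / 2)) =
        ∫ u in Ioi (0 : ℝ), Real.exp (-(1 / 2) * u ^ 2) := by
      congr 1; funext u; ring_nf
    rw [heq, h]
    rw [show Real.pi / (1 / 2) = 2 * Real.pi by ring]
  calc gaussTail x ≤ _ := step1
    _ = Real.exp (-x ^ 2 / 2) / Real.sqrt (2 * Real.pi) * (Real.sqrt (2 * Real.pi) / 2) := by
        rw [step2, step3]
    _ = Real.exp (-x ^ 2 / 2) / 2 := by field_simp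

theorem stmt7 :
    ∃ C : ℝ, 0 < C ∧ ∀ (M : ℝ) (a b : ℝ), 0 < a → a < b →
      2 * ∫ v : ℝ,
          gaussTail (|v| / Real.sqrt (b - a)) *
            (Real.exp (-(M + v) ^ 2 / (2 * a)) / Real.sqrt (2 * Real.pi * a)) ≤
        C * min 1 (Real.sqrt ((b - a) / a) *
          Real.exp (-M ^ 2 / (8 * max a (b - a)))) := by
  refine ⟨1, one_pos, fun M a b ha hab => ?_⟩
  have hc : 0 < b - a := sub_pos.2 hab
  have hb : 0 < b := ha.trans hab
  set k : ℝ := b / (2 * a * (b - a)) with hk_def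
  have hk : 0 < k := by positivity
  set d : ℝ := M * (b - a) / b with hd_def
  set K : ℝ := Real.exp (-M ^ 2 / (2 * b)) / (2 * Real.sqrt (2 * Real.pi * a)) with hK_def
  have hπa : (0 : ℝ) < Real.sqrt (2 * Real.pi * a) := Real.sqrt_pos.2 (by positivity)
  -- pointwise bound
  have hfg : ∀ v : ℝ, gaussTail (|v| / Real.sqrt (b - a)) *
      (Real.exp (-(M + v) ^ 2 / (2 * a)) / Real.sqrt (2 * Real.pi * a)) ≤
      K * Real.exp (-k * (v + d) ^ 2) := by
    intro v
    have h1 : gaussTail (|v| / Real.sqrt (b - a)) ≤ Real.exp (-v ^ 2 / (2 * (b - a))) / 2 := by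
      have h := gaussTail_le (x := |v| / Real.sqrt (b - a)) (by positivity)
      have h2 : (|v| / Real.sqrt (b - a)) ^ 2 / 2 = v ^ 2 / (2 * (b - a)) := by
        rw [div_pow, sq_abs, Real.sq_sqrt hc.le, div_div, mul_comm (b - a) 2]
      rwa [neg_div, h2, ← neg_div] at h
    calc gaussTail (|v| / Real.sqrt (b - a)) *
          (Real.exp (-(M + v) ^ 2 / (2 * a)) / Real.sqrt (2 * Real.pi * a)) ≤
        Real.exp (-v ^ 2 / (2 * (b - a))) / 2 *
          (Real.exp (-(M + v) ^ 2 / (2 * a)) / Real.sqrt (2 * Real.pi * a)) :=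
        mul_le_mul_of_nonneg_right h1 (by positivity)
      _ = K * Real.exp (-k * (v + d) ^ 2) := by
        rw [hK_def, div_mul_div_comm, ← Real.exp_add, div_mul_eq_mul_div, ← Real.exp_add]
        have hexp : -v ^ 2 / (2 * (b - a)) + -(M + v) ^ 2 / (2 * a) =
            -M ^ 2 / (2 * b) + -k * (v + d) ^ 2 := by
          rw [hk_def, hd_def]
          field_simp
          ring
        rw [hexp]
  -- integrability and value of the dominating function
  have hgint : Integrable (fun v : ℝ => K * Real.exp (-k * (v + d) ^ 2)) :=
    ((integrable_exp_neg_mul_sq hk).comp_add_right d).const_mul K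
  have hgval : (∫ v : ℝ, K * Real.exp (-k * (v + d) ^ 2)) = K * Real.sqrt (Real.pi / k) := by
    rw [MeasureTheory.integral_const_mul]
    congr 1
    rw [integral_add_right_eq_self (fun v : ℝ => Real.exp (-k * v ^ 2)) d]
    exact integral_gaussian k
  have hle : (∫ v : ℝ, gaussTail (|v| / Real.sqrt (b - a)) *
      (Real.exp (-(M + v) ^ 2 / (2 * a)) / Real.sqrt (2 * Real.pi * a))) ≤
      ∫ v : ℝ, K * Real.exp (-k * (v + d) ^ 2) := by
    refine integral_mono_of_nonneg (ae_of_all _ fun v => ?_) hgint (ae_of_all _ hfg)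
    exact mul_nonneg (gaussTail_nonneg _) (by positivity)
  -- value of the bound
  have hval : 2 * (K * Real.sqrt (Real.pi / k)) =
      Real.sqrt ((b - a) / b) * Real.exp (-M ^ 2 / (2 * b)) := by
    have h1 : Real.pi / k = 2 * Real.pi * a * ((b - a) / b) := by
      rw [hk_def]; field_simp
    rw [h1, Real.sqrt_mul (by positivity), hK_def]
    field_simp
  have key : 2 * ∫ v : ℝ, gaussTail (|v| / Real.sqrt (b - a)) *
      (Real.exp (-(M + v) ^ 2 / (2 * a)) / Real.sqrt (2 * Real.pi * a)) ≤
      Real.sqrt ((b - a) / b) * Real.exp (-M ^ 2 / (2 * b)) := by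
    rw [← hval, ← hgval]
    linarith
  refine key.trans ?_
  rw [one_mul]
  refine le_min ?_ ?_
  · have h1 : Real.sqrt ((b - a) / b) ≤ 1 := by
      rw [show (1 : ℝ) = Real.sqrt 1 by simp]
      exact Real.sqrt_le_sqrt (by rw [div_le_one hb]; linarith)
    have h2 : Real.exp (-M ^ 2 / (2 * b)) ≤ 1 :=
      Real.exp_le_one_iff.2 (div_nonpos_of_nonpos_of_nonneg (neg_nonpos.2 (sq_nonneg M))
        (by positivity))
    exact mul_le_one₀ h1 (Real.exp_nonneg _) h2
  · have hm : 0 < max a (b - a) := lt_max_of_lt_left ha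
    have h8 : 2 * b ≤ 8 * max a (b - a) := by
      have h1 := le_max_left a (b - a)
      have h2 := le_max_right a (b - a)
      linarith
    have hsq : Real.sqrt ((b - a) / b) ≤ Real.sqrt ((b - a) / a) :=
      Real.sqrt_le_sqrt (by gcongr <;> linarith)
    have hex : Real.exp (-M ^ 2 / (2 * b)) ≤ Real.exp (-M ^ 2 / (8 * max a (b - a))) := by
      apply Real.exp_le_exp.2
      rw [neg_div, neg_div, neg_le_neg_iff]
      gcongr
    exact mul_le_mul hsq hex (Real.exp_nonneg _) (Real.sqrt_nonneg _)
end

section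
/- There is an absolute constant C such that for every M ∈ ℝ and 0 < a < b, a standard Brownian motion W satisfies P(∃ t ∈ [a,b], W(t) = M) ≤ C · min(1, √((b−a)/a)). -/
open MeasureTheory ProbabilityTheory Real Set

lemma gauss_upper (v : NNReal) (hv : v ≠ 0) (c d : ℝ) (hcd : c ≤ d) :
    gaussianReal 0 v (Set.Icc c d) ≤ ENNReal.ofReal ((Real.sqrt (2 * Real.pi * v))⁻¹ * (d - c)) := by
  rw [gaussianReal_of_var_ne_zero 0 hv, withDensity_apply _ measurableSet_Icc]
  calc ∫⁻ x in Set.Icc c d, gaussianPDF 0 v x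
      ≤ ∫⁻ _x in Set.Icc c d, ENNReal.ofReal ((Real.sqrt (2 * Real.pi * v))⁻¹) := by
        refine setLIntegral_mono measurable_const (fun x _ => ?_)
        unfold gaussianPDF gaussianPDFReal
        refine ENNReal.ofReal_le_ofReal ?_
        have h1 : Real.exp (-(x - 0) ^ 2 / (2 * v)) ≤ 1 := by
          apply Real.exp_le_one_iff.2
          apply div_nonpos_of_nonpos_of_nonneg
          · simp [sq_nonneg]
          · positivity
        calc (Real.sqrt (2 * Real.pi * v))⁻¹ * Real.exp (-(x - 0) ^ 2 / (2 * v))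
            ≤ (Real.sqrt (2 * Real.pi * v))⁻¹ * 1 := by
              apply mul_le_mul_of_nonneg_left h1; positivity
          _ = (Real.sqrt (2 * Real.pi * v))⁻¹ := mul_one _
    _ = ENNReal.ofReal ((Real.sqrt (2 * Real.pi * v))⁻¹) * volume (Set.Icc c d) :=
        setLIntegral_const _ _
    _ = ENNReal.ofReal ((Real.sqrt (2 * Real.pi * v))⁻¹ * (d - c)) := by
        rw [Real.volume_Icc, ← ENNReal.ofReal_mul (by positivity)]

lemma gauss_lower (v : NNReal) (ε : ℝ) (hε : Real.sqrt v ≤ ε) :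
    ENNReal.ofReal (6 : ℝ)⁻¹ ≤ gaussianReal 0 v (Set.Icc 0 ε) := by
  rcases eq_or_ne v 0 with rfl | hv
  · rw [gaussianReal_zero_var]
    have h0 : (0:ℝ) ∈ Set.Icc 0 ε := ⟨le_refl _, by simpa using hε⟩
    rw [Measure.dirac_apply' _ measurableSet_Icc, Set.indicator_of_mem h0]
    exact ENNReal.ofReal_le_one.2 (by norm_num)
  · have hvpos : (0:ℝ) < v := by positivity
    have hsv : (0:ℝ) < Real.sqrt v := Real.sqrt_pos.2 hvpos
    rw [gaussianReal_of_var_ne_zero 0 hv, withDensity_apply _ measurableSet_Icc]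
    have hsub : Set.Icc (0:ℝ) (Real.sqrt v) ⊆ Set.Icc 0 ε := Set.Icc_subset_Icc le_rfl hε
    calc ENNReal.ofReal (6:ℝ)⁻¹
        ≤ ENNReal.ofReal ((Real.sqrt (2 * Real.pi * v))⁻¹ * Real.exp (-2⁻¹)) * volume (Set.Icc (0:ℝ) (Real.sqrt v)) := by
          rw [Real.volume_Icc, ← ENNReal.ofReal_mul (by positivity)]
          refine ENNReal.ofReal_le_ofReal ?_
          have h1 : Real.sqrt (2 * Real.pi * v) = Real.sqrt (2 * Real.pi) * Real.sqrt v := Real.sqrt_mul (by positivity) _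
          rw [sub_zero, h1, mul_inv]
          have hcan : (Real.sqrt (2 * Real.pi))⁻¹ * (Real.sqrt v)⁻¹ * Real.exp (-2⁻¹) * Real.sqrt v
              = (Real.sqrt (2 * Real.pi))⁻¹ * Real.exp (-2⁻¹) := by field_simp
          rw [hcan, Real.exp_neg, ← mul_inv]
          have h2 : Real.sqrt (2 * Real.pi) ≤ 3 := by
            rw [show (3:ℝ) = Real.sqrt 9 by rw [show (9:ℝ) = 3^2 by norm_num, Real.sqrt_sq]; norm_num]
            exact Real.sqrt_le_sqrt (by nlinarith [Real.pi_le_four])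
          have h4 : Real.exp (2⁻¹ : ℝ) ≤ 2 := by
            have he := Real.exp_half 1
            rw [show (1:ℝ)/2 = 2⁻¹ by norm_num] at he
            rw [he, show (2:ℝ) = Real.sqrt 4 by rw [show (4:ℝ) = 2^2 by norm_num, Real.sqrt_sq]; norm_num]
            exact Real.sqrt_le_sqrt (by nlinarith [Real.exp_one_lt_d9])
          have h5 : (0:ℝ) < Real.sqrt (2 * Real.pi) := by positivity
          have h6 : (0:ℝ) < Real.exp 2⁻¹ := Real.exp_pos _
          exact inv_anti₀ (by positivity) (by nlinarith)
        _ ≤ ∫⁻ x in Set.Icc 0 (Real.sqrt v), gaussianPDF 0 v x := by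
          rw [← setLIntegral_const]
          refine setLIntegral_mono (measurable_gaussianPDF 0 v) (fun x hx => ?_)
          unfold gaussianPDF gaussianPDFReal
          refine ENNReal.ofReal_le_ofReal ?_
          apply mul_le_mul_of_nonneg_left _ (by positivity)
          apply Real.exp_le_exp.2
          rw [sub_zero, neg_div, neg_le_neg_iff, div_le_iff₀ (by positivity)]
          nlinarith [Real.sq_sqrt hvpos.le, pow_le_pow_left₀ hx.1 hx.2 2]
        _ ≤ ∫⁻ x in Set.Icc 0 ε, gaussianPDF 0 v x := lintegral_mono_set hsub

lemma core {Ω : Type*} [MeasurableSpace Ω] (P : Measure Ω) (W : ℝ → Ω → ℝ)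
    (hW : IsStdBrownianMotion P W) (M a b : ℝ) (ha : 0 < a) (hab : a < b) (n : ℕ) :
    P (⋃ k ∈ Finset.range (2 ^ n + 1),
        {ω | |W (a + k * ((b - a) / 2 ^ n)) ω - W 0 ω - M| ≤ Real.sqrt (b - a)}) ≤
      6 * P {ω | W b ω - W 0 ω ∈
        Set.Icc (M - Real.sqrt (b - a)) (M + 2 * Real.sqrt (b - a))} := by
  classical
  set N : ℕ := 2 ^ n with hNdef
  have hN : 0 < N := Nat.two_pow_pos n
  set δ : ℝ := (b - a) / N with hδdef
  have hδ : 0 < δ := div_pos (by linarith) (by positivity)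
  set ε : ℝ := Real.sqrt (b - a) with hεdef
  have hε : 0 < ε := Real.sqrt_pos.2 (by linarith)
  set t : ℕ → ℝ := fun k => a + k * δ with htdef
  have ht0 : ∀ k, 0 < t k := fun k => by
    have h : (0:ℝ) ≤ k * δ := by positivity
    simp only [htdef]; linarith
  have htmono : Monotone t := fun i j hij => by
    simp only [htdef]
    have h : (i:ℝ) ≤ j := Nat.cast_le.2 hij
    nlinarith
  have htN : t N = b := by
    simp only [htdef, hδdef]
    field_simp
    ring
  have htle : ∀ k, k ≤ N → t k ≤ b := fun k hk => htN ▸ htmono hk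
  have htge : ∀ k, a ≤ t k := fun k => by
    have h : (0:ℝ) ≤ k * δ := by positivity
    simp only [htdef]; linarith
  set r : Fin (N + 2) → ℝ := fun i => if (i : ℕ) = 0 then 0 else t ((i : ℕ) - 1) with hrdef
  have hr0 : ∀ i, 0 ≤ r i := fun i => by
    simp only [hrdef]; split_ifs
    · exact le_rfl
    · exact (ht0 _).le
  have hrmono : Monotone r := fun i j hij => by
    have hij' : (i:ℕ) ≤ (j:ℕ) := hij
    simp only [hrdef]
    split_ifs with h1 h2 h2
    · exact le_rfl
    · exact (ht0 _).le
    · exact absurd (by omega : (i:ℕ) = 0) h1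
    · exact htmono (by omega)
  set Y : Fin (N + 1) → Ω → ℝ := fun i ω => W (r i.succ) ω - W (r i.castSucc) ω with hYdef
  have hI : iIndepFun Y P := hW.indep (N + 1) r hr0 hrmono
  have hYmeas : ∀ i, Measurable (Y i) := fun i => (hW.meas _).sub (hW.meas _)
  have hIic : ∀ (m : ℕ) (hm : m < N + 1) (ω : Ω),
      ∑ i ∈ Finset.Iic (⟨m, hm⟩ : Fin (N + 1)), Y i ω = W (t m) ω - W 0 ω := by
    intro m
    induction m with
    | zero =>
      intro hm ω
      have hsing : Finset.Iic (⟨0, hm⟩ : Fin (N + 1)) = {⟨0, hm⟩} := by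
        ext i; simp only [Finset.mem_Iic, Finset.mem_singleton, Fin.le_def, Fin.ext_iff, Fin.val_mk]; omega
      rw [hsing, Finset.sum_singleton]
      have h1 : r ((⟨0, hm⟩ : Fin (N + 1)).succ) = t 0 := by
        simp [hrdef, Fin.succ]
      have h2 : r (Fin.castSucc (⟨0, hm⟩ : Fin (N + 1))) = 0 := by
        simp [hrdef]
      simp only [hYdef, h1, h2]
    | succ m ih =>
      intro hm ω
      have hm' : m < N + 1 := by omega
      have hins : Finset.Iic (⟨m + 1, hm⟩ : Fin (N + 1))
          = insert ⟨m + 1, hm⟩ (Finset.Iic (⟨m, hm'⟩ : Fin (N + 1))) := by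
        ext i; simp [Fin.le_def, Fin.ext_iff]; omega
      have hnot : (⟨m + 1, hm⟩ : Fin (N + 1)) ∉ Finset.Iic (⟨m, hm'⟩ : Fin (N + 1)) := by
        simp [Fin.le_def]
      rw [hins, Finset.sum_insert hnot, ih hm' ω]
      have h1 : r ((⟨m + 1, hm⟩ : Fin (N + 1)).succ) = t (m + 1) := by
        simp [hrdef, Fin.succ]
      have h2 : r (Fin.castSucc (⟨m + 1, hm⟩ : Fin (N + 1))) = t m := by
        simp [hrdef, Fin.castSucc]
      simp only [hYdef, h1, h2]
      ring
  have htotal : ∀ ω, ∑ i, Y i ω = W b ω - W 0 ω := by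
    intro ω
    have huniv : (Finset.univ : Finset (Fin (N + 1))) = Finset.Iic (⟨N, by omega⟩ : Fin (N + 1)) := by
      ext i; simp [Fin.le_def]; omega
    rw [huniv, hIic N (by omega) ω, htN]
  -- events
  set D : Set Ω := {ω | W b ω - W 0 ω ∈ Set.Icc (M - ε) (M + 2 * ε)} with hDdef
  set B : ℕ → Set Ω := fun k =>
    {ω | |W (t k) ω - W 0 ω - M| ≤ ε ∧ ∀ j < k, ε < |W (t j) ω - W 0 ω - M|} with hBdef
  set C : ℕ → Set Ω := fun k => {ω | W b ω - W (t k) ω ∈ Set.Icc 0 ε} with hCdef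
  have hBmeas : ∀ k, MeasurableSet (B k) := by
    intro k
    have heq : B k = {ω | |W (t k) ω - W 0 ω - M| ≤ ε}
        ∩ ⋂ j, ⋂ (_ : j < k), {ω | ε < |W (t j) ω - W 0 ω - M|} := by
      ext ω; simp [hBdef]
    rw [heq]
    refine MeasurableSet.inter ?_ (MeasurableSet.iInter fun j => MeasurableSet.iInter fun _ => ?_)
    · exact measurableSet_le (((hW.meas _).sub (hW.meas 0)).sub measurable_const).abs
        measurable_const
    · exact measurableSet_lt measurable_const
        (((hW.meas _).sub (hW.meas 0)).sub measurable_const).abs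
  have hCmeas : ∀ k, MeasurableSet (C k) :=
    fun k => measurableSet_Icc.preimage ((hW.meas b).sub (hW.meas (t k)))
  -- main independence estimate
  have hBC : ∀ k, k ≤ N → P (B k) ≤ 6 * P (B k ∩ C k) := by
    intro k hk
    set kf : Fin (N + 1) := ⟨k, by omega⟩ with hkfdef
    set S : Finset (Fin (N + 1)) := Finset.Iic kf with hSdef
    have base := hI.indepFun_finset S Sᶜ disjoint_compl_right hYmeas
    set φ : (↥S → ℝ) → (ℕ → ℝ) :=
      fun v j => ∑ i : ↥S, if ((i : Fin (N + 1)) : ℕ) ≤ j then v i else 0 with hφdef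
    have hφ : Measurable φ := by
      refine measurable_pi_lambda _ fun j => Finset.measurable_sum _ fun i _ => ?_
      split_ifs
      · exact measurable_pi_apply i
      · exact measurable_const
    set ψ : (↥(Sᶜ) → ℝ) → ℝ := fun v => ∑ i : ↥(Sᶜ), v i with hψdef
    have hψ : Measurable ψ := Finset.measurable_sum _ fun i _ => measurable_pi_apply i
    have hind := base.comp hφ hψ
    have hright : (ψ ∘ fun ω (i : ↥(Sᶜ)) => Y i ω) = fun ω => W b ω - W (t k) ω := by
      funext ω
      have h1 : ψ (fun (i : ↥(Sᶜ)) => Y i ω) = ∑ i ∈ Sᶜ, Y i ω := by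
        simp only [hψdef]
        exact Finset.sum_coe_sort Sᶜ (fun i => Y i ω)
      have h2 : ∑ i ∈ Sᶜ, Y i ω + ∑ i ∈ S, Y i ω = ∑ i, Y i ω := Finset.sum_compl_add_sum S _
      have h3 : ∑ i ∈ S, Y i ω = W (t k) ω - W 0 ω := hIic k (by omega) ω
      have h4 : ∑ i, Y i ω = W b ω - W 0 ω := htotal ω
      simp only [Function.comp_apply]
      rw [h1]; linarith
    have hleft : ∀ (ω : Ω) (j : ℕ), j ≤ k → φ (fun (i : ↥S) => Y i ω) j = W (t j) ω - W 0 ω := by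
      intro ω j hj
      have h1 : φ (fun (i : ↥S) => Y i ω) j
          = ∑ i ∈ S, (if ((i : ℕ)) ≤ j then Y i ω else 0) := by
        simp only [hφdef]
        exact Finset.sum_coe_sort S (fun i => if ((i : ℕ)) ≤ j then Y i ω else 0)
      rw [h1, ← Finset.sum_filter]
      have hjN : j < N + 1 := Nat.lt_succ_of_le (hj.trans hk)
      have h2 : S.filter (fun i => i.val ≤ j) = Finset.Iic (⟨j, hjN⟩ : Fin (N + 1)) := by
        ext i
        simp only [hSdef, Finset.mem_filter, Finset.mem_Iic, Fin.le_def, hkfdef]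
        constructor
        · rintro ⟨-, h⟩; exact h
        · intro h; exact ⟨by omega, h⟩
      rw [h2, hIic j hjN ω]
    set G : Set (ℕ → ℝ) := {u | |u k - M| ≤ ε ∧ ∀ j < k, ε < |u j - M|} with hGdef
    have hGmeas : MeasurableSet G := by
      have heq : G = {u : ℕ → ℝ | |u k - M| ≤ ε}
          ∩ ⋂ j, ⋂ (_ : j < k), {u : ℕ → ℝ | ε < |u j - M|} := by
        ext u; simp [hGdef]
      rw [heq]
      refine MeasurableSet.inter ?_ (MeasurableSet.iInter fun j => MeasurableSet.iInter fun _ => ?_)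
      · exact measurableSet_le ((measurable_pi_apply k).sub measurable_const).abs measurable_const
      · exact measurableSet_lt measurable_const ((measurable_pi_apply j).sub measurable_const).abs
    have hBeq : B k = (φ ∘ fun ω (i : ↥S) => Y i ω) ⁻¹' G := by
      ext ω
      simp only [hBdef, hGdef, Set.mem_preimage, Function.comp_apply, Set.mem_setOf_eq]
      constructor
      · rintro ⟨h1, h2⟩
        exact ⟨by rw [hleft ω k le_rfl]; exact h1,
          fun j hj => by rw [hleft ω j hj.le]; exact h2 j hj⟩
      · rintro ⟨h1, h2⟩
        refine ⟨by rw [← hleft ω k le_rfl]; exact h1,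
          fun j hj => by rw [← hleft ω j hj.le]; exact h2 j hj⟩
    have hCeq : C k = (fun ω => W b ω - W (t k) ω) ⁻¹' Set.Icc 0 ε := rfl
    rw [hright] at hind
    have hmul : P (B k ∩ C k) = P (B k) * P (C k) := by
      rw [hBeq, hCeq]
      exact hind.measure_inter_preimage_eq_mul _ _ hGmeas measurableSet_Icc
    have hCk : ENNReal.ofReal (6:ℝ)⁻¹ ≤ P (C k) := by
      have hmap := hW.gauss (t k) b (ht0 k).le (htle k hk)
      have hPC : P (C k) = (gaussianReal 0 (b - t k).toNNReal) (Set.Icc 0 ε) := by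
        rw [← hmap, Measure.map_apply (f := fun ω => W b ω - W (t k) ω) ((hW.meas b).sub (hW.meas (t k))) measurableSet_Icc, hCeq]
      rw [hPC]
      apply gauss_lower
      have hco : ((b - t k).toNNReal : ℝ) = b - t k :=
        Real.coe_toNNReal _ (by linarith [htle k hk])
      rw [hco, hεdef]
      exact Real.sqrt_le_sqrt (by linarith [htge k])
    have step : P (B k) * ENNReal.ofReal (6:ℝ)⁻¹ ≤ P (B k ∩ C k) := by
      rw [hmul]; exact mul_le_mul_right hCk _
    have h6 : ENNReal.ofReal (6:ℝ)⁻¹ * 6 = 1 := by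
      rw [ENNReal.ofReal_inv_of_pos (by norm_num)]
      rw [show ENNReal.ofReal (6:ℝ) = (6:ENNReal) by
        rw [show (6:ℝ) = ((6:ℕ):ℝ) by norm_num, ENNReal.ofReal_natCast]; norm_num]
      exact ENNReal.inv_mul_cancel (by norm_num) (by norm_num)
    calc P (B k) = P (B k) * (ENNReal.ofReal (6:ℝ)⁻¹ * 6) := by rw [h6, mul_one]
      _ = (P (B k) * ENNReal.ofReal (6:ℝ)⁻¹) * 6 := by ring
      _ ≤ P (B k ∩ C k) * 6 := mul_le_mul_left step _
      _ = 6 * P (B k ∩ C k) := mul_comm _ _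
  have hBD : ∀ k, k ≤ N → B k ∩ C k ⊆ D := by
    intro k hk ω hω
    obtain ⟨hb, hc⟩ := hω
    have hb1 := abs_le.1 hb.1
    have hc1 : 0 ≤ W b ω - W (t k) ω := hc.1
    have hc2 : W b ω - W (t k) ω ≤ ε := hc.2
    simp only [hDdef, Set.mem_setOf_eq, Set.mem_Icc]
    exact ⟨by linarith [hb1.1], by linarith [hb1.2]⟩
  have hdisj : (↑(Finset.range (N + 1)) : Set ℕ).PairwiseDisjoint B := by
    intro x _ y _ hxy
    refine Set.disjoint_left.2 fun ω hωx hωy => ?_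
    rcases lt_or_gt_of_ne hxy with h | h
    · exact absurd hωx.1 (not_le.2 (hωy.2 x h))
    · exact absurd hωy.1 (not_le.2 (hωx.2 y h))
  have hform : ∀ k : ℕ, a + (k:ℝ) * ((b - a) / (2:ℝ) ^ n) = t k := by
    intro k
    simp only [htdef, hδdef, hNdef]
    push_cast
    ring
  have hsetform : ∀ k : ℕ, {ω | |W (a + (k:ℝ) * ((b - a) / 2 ^ n)) ω - W 0 ω - M| ≤ ε}
      = {ω | |W (t k) ω - W 0 ω - M| ≤ ε} := by
    intro k; rw [hform k]
  have hA : (⋃ k ∈ Finset.range (N + 1),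
      {ω | |W (a + (k:ℝ) * ((b - a) / 2 ^ n)) ω - W 0 ω - M| ≤ ε})
      = ⋃ k ∈ Finset.range (N + 1), B k := by
    simp only [hsetform]
    ext ω
    simp only [Set.mem_iUnion, Finset.mem_range, Set.mem_setOf_eq, hBdef]
    constructor
    · rintro ⟨k, hk, hωk⟩
      have hex : ∃ j, |W (t j) ω - W 0 ω - M| ≤ ε := ⟨k, hωk⟩
      refine ⟨Nat.find hex, ?_, Nat.find_spec hex, fun j hj => not_le.1 (Nat.find_min hex hj)⟩
      exact lt_of_le_of_lt (Nat.find_min' hex hωk) hk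
    · rintro ⟨k, hk, hωk, _⟩
      exact ⟨k, hk, hωk⟩
  rw [hA]
  have hdisj' : (↑(Finset.range (N + 1)) : Set ℕ).PairwiseDisjoint (fun k => B k ∩ C k) :=
    fun x hx y hy hxy => (hdisj hx hy hxy).mono Set.inter_subset_left Set.inter_subset_left
  calc P (⋃ k ∈ Finset.range (N + 1), B k)
      = ∑ k ∈ Finset.range (N + 1), P (B k) :=
        measure_biUnion_finset hdisj (fun k _ => hBmeas k)
    _ ≤ ∑ k ∈ Finset.range (N + 1), 6 * P (B k ∩ C k) :=
        Finset.sum_le_sum fun k hk => hBC k (Nat.lt_succ_iff.1 (Finset.mem_range.1 hk))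
    _ = 6 * ∑ k ∈ Finset.range (N + 1), P (B k ∩ C k) := (Finset.mul_sum _ _ _).symm
    _ = 6 * P (⋃ k ∈ Finset.range (N + 1), B k ∩ C k) := by
        rw [measure_biUnion_finset hdisj' (fun k _ => (hBmeas k).inter (hCmeas k))]
    _ ≤ 6 * P D := by
        refine mul_le_mul_right (measure_mono ?_) 6
        exact Set.iUnion₂_subset fun k hk => hBD k (Nat.lt_succ_iff.1 (Finset.mem_range.1 hk))

theorem stmt8 {Ω : Type*} [MeasurableSpace Ω] (P : Measure Ω) (W : ℝ → Ω → ℝ)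
    (hW : IsStdBrownianMotion P W) :
    ∃ C : ℝ, 0 < C ∧ ∀ (M : ℝ) (a b : ℝ), 0 < a → a < b →
      (P {ω | ∃ t ∈ Set.Icc a b, W t ω = M}).toReal ≤
        C * min 1 (Real.sqrt ((b - a) / a)) := by
  haveI := hW.isProb
  refine ⟨8, by norm_num, fun M a b ha hab => ?_⟩
  set ε : ℝ := Real.sqrt (b - a) with hεdef
  have hε : 0 < ε := Real.sqrt_pos.2 (by linarith)
  set A : ℕ → Set Ω := fun n => ⋃ k ∈ Finset.range (2 ^ n + 1),
      {ω | |W (a + k * ((b - a) / 2 ^ n)) ω - W 0 ω - M| ≤ ε} with hAdef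
  -- monotone
  have hmono : Monotone A := by
    apply monotone_nat_of_le_succ
    intro n ω hω
    simp only [hAdef, Set.mem_iUnion, Finset.mem_range, Set.mem_setOf_eq] at hω ⊢
    obtain ⟨k, hk, hωk⟩ := hω
    refine ⟨2 * k, by omega, ?_⟩
    · have hpt : a + ((2 * k : ℕ) : ℝ) * ((b - a) / 2 ^ (n + 1))
          = a + (k : ℝ) * ((b - a) / 2 ^ n) := by
        push_cast
        field_simp
        ring
      rw [hpt]
      exact hωk
  -- covering
  have hcover : {ω | ∃ t ∈ Set.Icc a b, W t ω = M}
      ∩ ({ω | W 0 ω = 0} ∩ {ω | Continuous fun s => W s ω}) ⊆ ⋃ n, A n := by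
    rintro ω ⟨⟨t₀, ht₀, hWt⟩, h0, hcont⟩
    obtain ⟨δ', hδ'pos, hδ'⟩ := Metric.continuous_iff.1 hcont t₀ ε hε
    obtain ⟨n, hn⟩ := pow_unbounded_of_one_lt ((b - a) / δ') (by norm_num : (1:ℝ) < 2)
    set η : ℝ := (b - a) / 2 ^ n with hηdef
    have hη : 0 < η := div_pos (by linarith) (by positivity)
    have hηδ : η < δ' := by
      rw [hηdef, div_lt_iff₀ (by positivity)]
      rw [div_lt_iff₀ hδ'pos] at hn
      linarith [hn]
    set k : ℕ := ⌊(t₀ - a) / η⌋₊ with hkdef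
    have ht₀a : 0 ≤ t₀ - a := by linarith [ht₀.1]
    have hk1 : (k : ℝ) ≤ (t₀ - a) / η := Nat.floor_le (by positivity)
    have hk2 : (t₀ - a) / η < k + 1 := Nat.lt_floor_add_one _
    have hkN : k ≤ 2 ^ n := by
      have h1 : (t₀ - a) / η ≤ ((2 ^ n : ℕ) : ℝ) := by
        have h2n : (0:ℝ) < 2 ^ n := by positivity
        rw [hηdef, div_le_iff₀ (div_pos (by linarith) h2n)]
        push_cast
        have hcl : (2:ℝ) ^ n * ((b - a) / 2 ^ n) = b - a := by field_simp
        rw [hcl]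
        linarith [ht₀.2]
      calc k ≤ ⌊((2 ^ n : ℕ) : ℝ)⌋₊ := Nat.floor_le_floor h1
        _ = 2 ^ n := Nat.floor_natCast _
    refine Set.mem_iUnion.2 ⟨n, ?_⟩
    simp only [hAdef, Set.mem_iUnion, Finset.mem_range, Set.mem_setOf_eq]
    refine ⟨k, by omega, ?_⟩
    have hd : dist (a + (k:ℝ) * η) t₀ < δ' := by
      rw [Real.dist_eq, abs_lt]
      have e1 : (k:ℝ) * η ≤ t₀ - a := by
        rw [← le_div_iff₀ hη]; exact hk1
      have e2 : t₀ - a < ((k:ℝ) + 1) * η := by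
        rw [← div_lt_iff₀ hη]; exact hk2
      constructor <;> nlinarith
    have := hδ' _ hd
    rw [Real.dist_eq] at this
    rw [h0, hWt] at *
    calc |W (a + (k:ℝ) * η) ω - 0 - M| = |W (a + (k:ℝ) * η) ω - M| := by rw [sub_zero]
      _ ≤ ε := by rw [← hWt]; exact this.le
  -- measure bound
  have hgoodc : P ({ω | W 0 ω = 0} ∩ {ω | Continuous fun s => W s ω})ᶜ = 0 := by
    rw [Set.compl_inter]
    refine le_antisymm (le_trans (measure_union_le _ _) ?_) zero_le
    have h1 : P {ω | W 0 ω = 0}ᶜ = 0 := by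
      have := hW.init
      rw [ae_iff] at this
      simpa [Set.compl_setOf] using this
    have h2 : P {ω | Continuous fun s => W s ω}ᶜ = 0 := by
      have := hW.cont
      rw [ae_iff] at this
      simpa [Set.compl_setOf] using this
    rw [h1, h2]; simp
  have hPA : ∀ n, P (A n)
      ≤ 6 * ENNReal.ofReal ((Real.sqrt (2 * Real.pi * b))⁻¹ * (3 * ε)) := by
    intro n
    refine le_trans (core P W hW M a b ha hab n) ?_
    have hD : P {ω | W b ω - W 0 ω ∈ Set.Icc (M - ε) (M + 2 * ε)}
        ≤ ENNReal.ofReal ((Real.sqrt (2 * Real.pi * b))⁻¹ * (3 * ε)) := by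
      have hmap := hW.gauss 0 b le_rfl (by linarith)
      have hPD : P {ω | W b ω - W 0 ω ∈ Set.Icc (M - ε) (M + 2 * ε)}
          = gaussianReal 0 (b - 0).toNNReal (Set.Icc (M - ε) (M + 2 * ε)) := by
        rw [← hmap, Measure.map_apply (f := fun ω => W b ω - W 0 ω) ((hW.meas b).sub (hW.meas 0)) measurableSet_Icc]
        rfl
      rw [hPD]
      have hb0 : (b - 0).toNNReal ≠ 0 := by
        simp only [sub_zero]
        exact fun h => absurd (Real.toNNReal_eq_zero.1 h) (by push_neg; linarith)
      refine le_trans (gauss_upper _ hb0 _ _ (by linarith)) ?_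
      have hco : (((b - 0).toNNReal : ℝ)) = b := by
        rw [sub_zero, Real.coe_toNNReal _ (by linarith)]
      rw [hco]
      refine ENNReal.ofReal_le_ofReal ?_
      have : M + 2 * ε - (M - ε) = 3 * ε := by ring
      rw [this]
    exact mul_le_mul_right hD 6
  have hmain : P {ω | ∃ t ∈ Set.Icc a b, W t ω = M}
      ≤ 6 * ENNReal.ofReal ((Real.sqrt (2 * Real.pi * b))⁻¹ * (3 * ε)) := by
    set g : Set Ω := {ω | W 0 ω = 0} ∩ {ω | Continuous fun s => W s ω} with hgdef
    have hsub : {ω | ∃ t ∈ Set.Icc a b, W t ω = M}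
        ⊆ ({ω | ∃ t ∈ Set.Icc a b, W t ω = M} ∩ g) ∪ gᶜ := by
      intro ω hω
      by_cases h : ω ∈ g
      · exact Or.inl ⟨hω, h⟩
      · exact Or.inr h
    calc P {ω | ∃ t ∈ Set.Icc a b, W t ω = M}
        ≤ P (({ω | ∃ t ∈ Set.Icc a b, W t ω = M} ∩ g) ∪ gᶜ) := measure_mono hsub
      _ ≤ P ({ω | ∃ t ∈ Set.Icc a b, W t ω = M} ∩ g) + P gᶜ := measure_union_le _ _
      _ = P ({ω | ∃ t ∈ Set.Icc a b, W t ω = M} ∩ g) := by rw [hgoodc, add_zero]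
      _ ≤ P (⋃ n, A n) := measure_mono hcover
      _ = ⨆ n, P (A n) := Directed.measure_iUnion (hmono.directed_le)
      _ ≤ 6 * ENNReal.ofReal ((Real.sqrt (2 * Real.pi * b))⁻¹ * (3 * ε)) := iSup_le hPA
  -- to real numbers
  have hfin : (6 : ENNReal) * ENNReal.ofReal ((Real.sqrt (2 * Real.pi * b))⁻¹ * (3 * ε)) ≠ ⊤ :=
    ENNReal.mul_ne_top (by norm_num) ENNReal.ofReal_ne_top
  have hq : (0:ℝ) ≤ (Real.sqrt (2 * Real.pi * b))⁻¹ * (3 * ε) := by positivity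
  have htr : (P {ω | ∃ t ∈ Set.Icc a b, W t ω = M}).toReal
      ≤ 6 * ((Real.sqrt (2 * Real.pi * b))⁻¹ * (3 * ε)) := by
    have := ENNReal.toReal_mono hfin hmain
    rwa [ENNReal.toReal_mul, ENNReal.toReal_ofReal hq,
      show ((6:ENNReal)).toReal = 6 by norm_num] at this
  have hone : (P {ω | ∃ t ∈ Set.Icc a b, W t ω = M}).toReal ≤ 1 := by
    have h1 : P {ω | ∃ t ∈ Set.Icc a b, W t ω = M} ≤ 1 := prob_le_one
    have := ENNReal.toReal_mono (by norm_num) h1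
    simpa using this
  -- final algebra
  have hkey : 6 * ((Real.sqrt (2 * Real.pi * b))⁻¹ * (3 * ε)) ≤ 8 * Real.sqrt ((b - a) / a) := by
    have hsq : Real.sqrt ((b - a) / a) = ε / Real.sqrt a := Real.sqrt_div (by linarith) a
    rw [hsq]
    have h2 : Real.sqrt (2 * Real.pi * b) = Real.sqrt (2 * Real.pi) * Real.sqrt b :=
      Real.sqrt_mul (by positivity) b
    have h3 : (2.25 : ℝ) ≤ Real.sqrt (2 * Real.pi) := by
      rw [show (2.25:ℝ) = Real.sqrt (2.25^2) by rw [Real.sqrt_sq]; norm_num]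
      exact Real.sqrt_le_sqrt (by nlinarith [Real.pi_gt_three])
    have h4 : Real.sqrt a ≤ Real.sqrt b := Real.sqrt_le_sqrt (by linarith)
    have h5 : (0:ℝ) < Real.sqrt a := Real.sqrt_pos.2 ha
    have h6 : (0:ℝ) < Real.sqrt b := Real.sqrt_pos.2 (by linarith)
    have h7 : (0:ℝ) < Real.sqrt (2 * Real.pi) := by positivity
    rw [h2, mul_inv, div_eq_mul_inv]
    -- 6 * ((√(2π))⁻¹ * (√b)⁻¹ * (3ε)) ≤ 8 * (ε * (√a)⁻¹)
    have h8 : (Real.sqrt b)⁻¹ ≤ (Real.sqrt a)⁻¹ := by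
      apply inv_anti₀ h5 h4
    have h9 : (Real.sqrt (2 * Real.pi))⁻¹ ≤ (2.25:ℝ)⁻¹ := by
      apply inv_anti₀ (by norm_num) h3
    have h10 : (0:ℝ) < (Real.sqrt a)⁻¹ := by positivity
    have h11 : (Real.sqrt (2 * Real.pi))⁻¹ * (Real.sqrt b)⁻¹ ≤ (2.25:ℝ)⁻¹ * (Real.sqrt a)⁻¹ :=
      mul_le_mul h9 h8 (inv_nonneg.2 h6.le) (by norm_num)
    nlinarith [mul_le_mul_of_nonneg_left h11 (by positivity : (0:ℝ) ≤ 18 * ε)]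
  rcases le_total (1:ℝ) (Real.sqrt ((b - a) / a)) with h | h
  · rw [min_eq_left h]
    linarith
  · rw [min_eq_right h]
    linarith
end

section
/- Let W be a standard Brownian motion, 0 < a < b, η > 0, and β = inf_{a≤t≤b} |W(t)|. Then P(0 < β ≤ η) ≤ (16η/√(2π)) · min(1/√(b−a), 1/√a). -/
set_option maxHeartbeats 1000000

open MeasureTheory ProbabilityTheory Real Set Filter
open scoped NNReal ENNReal Topology


namespace BMaux


noncomputable def ecoord (n : ℕ) (y : Fin (n+1) → ℝ) (i : ℕ) : ℝ :=
  if h : i < n + 1 then y ⟨i, h⟩ else 0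

noncomputable def psum (n : ℕ) (k : ℕ) (y : Fin (n+1) → ℝ) : ℝ :=
  ∑ i ∈ Finset.range (k+1), ecoord n y i

def refl (n : ℕ) (k : ℕ) (y : Fin (n+1) → ℝ) : Fin (n+1) → ℝ :=
  fun i => if (i : ℕ) ≤ k then y i else -(y i)

lemma measurable_ecoord (n i : ℕ) : Measurable (fun y => ecoord n y i) := by
  unfold ecoord
  by_cases h : i < n + 1
  · simpa [h] using measurable_pi_apply (⟨i, h⟩ : Fin (n+1))
  · simpa [h] using measurable_const

lemma measurable_psum (n k : ℕ) : Measurable (psum n k) := by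
  unfold psum
  exact Finset.measurable_sum _ (fun i _ => measurable_ecoord n i)

lemma ecoord_refl (n k i : ℕ) (y : Fin (n+1) → ℝ) :
    ecoord n (refl n k y) i = if i ≤ k then ecoord n y i else -(ecoord n y i) := by
  unfold ecoord refl
  by_cases h : i < n + 1
  · simp only [dif_pos h]
  · simp only [dif_neg h]
    split <;> simp

lemma psum_refl_le (n k j : ℕ) (hj : j ≤ k) (y : Fin (n+1) → ℝ) :
    psum n j (refl n k y) = psum n j y := by
  unfold psum
  apply Finset.sum_congr rfl
  intro i hi
  rw [Finset.mem_range] at hi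
  rw [ecoord_refl, if_pos (by omega)]

lemma psum_refl_total (n k : ℕ) (hk : k ≤ n) (y : Fin (n+1) → ℝ) :
    psum n n (refl n k y) = 2 * psum n k y - psum n n y := by
  have key : psum n n (refl n k y) + psum n n y = 2 * psum n k y := by
    unfold psum
    rw [← Finset.sum_add_distrib]
    have h1 : ∀ i ∈ Finset.range (n+1),
        ecoord n (refl n k y) i + ecoord n y i = if i ≤ k then 2 * ecoord n y i else 0 := by
      intro i _
      rw [ecoord_refl]
      split <;> ring
    rw [Finset.sum_congr rfl h1, Finset.sum_ite, Finset.sum_const_zero, add_zero]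
    have h2 : Finset.filter (fun i => i ≤ k) (Finset.range (n+1)) = Finset.range (k+1) := by
      ext i
      simp only [Finset.mem_filter, Finset.mem_range]
      omega
    rw [h2, Finset.mul_sum]
  linarith

lemma psum_succ (n k : ℕ) (y : Fin (n+1) → ℝ) :
    psum n (k+1) y = psum n k y + ecoord n y (k+1) := by
  unfold psum
  rw [Finset.sum_range_succ]

lemma gaussianReal_map_neg (v : ℝ≥0) :
    Measure.map (fun x : ℝ => -x) (gaussianReal 0 v) = gaussianReal 0 v := by
  have h := gaussianReal_map_const_mul (μ := 0) (v := v) (-1)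
  have h1 : (⟨(-1 : ℝ)^2, sq_nonneg _⟩ : ℝ≥0) = 1 := by
    ext; norm_num
  simp only [neg_one_mul, mul_zero, neg_zero, h1, one_mul] at h
  rw [h]; congr 1; ext; norm_num

lemma pi_map_pi {n : ℕ} (v : Fin (n+1) → ℝ≥0) (f : Fin (n+1) → ℝ → ℝ)
    (hf : ∀ i, Measurable (f i))
    (hfp : ∀ i, Measure.map (f i) (gaussianReal 0 (v i)) = gaussianReal 0 (v i)) :
    MeasurePreserving (fun (y : Fin (n+1) → ℝ) i => f i (y i))
      (Measure.pi fun i => gaussianReal 0 (v i)) (Measure.pi fun i => gaussianReal 0 (v i)) := by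
  have hF : Measurable (fun (y : Fin (n+1) → ℝ) i => f i (y i)) :=
    measurable_pi_lambda _ (fun i => (hf i).comp (measurable_pi_apply i))
  refine ⟨hF, ?_⟩
  refine (Measure.pi_eq fun s hs => ?_).symm
  rw [Measure.map_apply hF (MeasurableSet.univ_pi hs)]
  have hpre : (fun (y : Fin (n+1) → ℝ) i => f i (y i)) ⁻¹' (Set.pi univ s)
      = Set.pi univ (fun i => f i ⁻¹' s i) := by
    ext y; simp [Set.mem_pi]
  rw [hpre, Measure.pi_pi]
  refine Finset.prod_congr rfl fun i _ => ?_
  rw [← Measure.map_apply (hf i) (hs i), hfp i]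

section Core

variable {n : ℕ} (v : Fin (n+1) → ℝ≥0)

local notation "μp" => Measure.pi (fun i => gaussianReal 0 (v i))

lemma measurePreserving_refl (k : ℕ) : MeasurePreserving (refl n k) μp μp := by
  have heq : refl n k = fun (y : Fin (n+1) → ℝ) (i : Fin (n+1)) =>
      (fun x => if (i : ℕ) ≤ k then x else -x) (y i) := by
    funext y i
    unfold refl
    split <;> rfl
  rw [heq]
  refine pi_map_pi v (fun i x => if (i : ℕ) ≤ k then x else -x) ?_ ?_
  · intro i
    by_cases h : (i : ℕ) ≤ k
    · simpa [h] using measurable_id'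
    · simpa [h] using measurable_neg
  · intro i
    by_cases h : (i : ℕ) ≤ k
    · simp only [if_pos h]
      exact Measure.map_id
    · simp only [if_neg h]
      exact gaussianReal_map_neg _

lemma measurePreserving_flip :
    MeasurePreserving (fun (y : Fin (n+1) → ℝ) i => -(y i)) μp μp :=
  pi_map_pi v (fun _ x => -x) (fun _ => measurable_neg) (fun _ => gaussianReal_map_neg _)

/-- first hitting event -/
def FH (n : ℕ) (c : ℝ) (k : ℕ) : Set (Fin (n+1) → ℝ) :=
  {y | (∀ j < k, c < psum n j y) ∧ psum n k y ≤ c}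

lemma measurableSet_FH (c : ℝ) (k : ℕ) : MeasurableSet (FH n c k) := by
  have h1 : FH n c k = (⋂ j, ⋂ (_ : j < k), {y | c < psum n j y}) ∩ {y | psum n k y ≤ c} := by
    ext y; simp [FH]
  rw [h1]
  exact (MeasurableSet.iInter fun j => MeasurableSet.iInter fun _ =>
      measurableSet_lt measurable_const (measurable_psum n j)).inter
    (measurableSet_le (measurable_psum n k) measurable_const)

lemma FH_disjoint (c : ℝ) {k l : ℕ} (h : k ≠ l) : Disjoint (FH n c k) (FH n c l) := by
  wlog hkl : k < l generalizing k l
  · exact (this h.symm (by omega)).symm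
  rw [Set.disjoint_left]
  rintro y ⟨_, hk2⟩ ⟨hl1, _⟩
  exact absurd (hl1 k hkl) (not_lt.2 hk2)

lemma HS_eq (c : ℝ) :
    {y : Fin (n+1) → ℝ | ∃ k ≤ n, psum n k y ≤ c} = ⋃ k ∈ Finset.range (n+1), FH n c k := by
  classical
  ext y
  simp only [Set.mem_setOf_eq, Set.mem_iUnion, Finset.mem_range]
  constructor
  · rintro ⟨k, hk, hkc⟩
    have hex : ∃ m, psum n m y ≤ c := ⟨k, hkc⟩
    refine ⟨Nat.find hex, ⟨?_, ?_, ?_⟩⟩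
    · have := Nat.find_min' hex hkc
      omega
    · intro j hj
      have := Nat.find_min hex hj
      linarith [lt_of_not_ge this]
    · exact Nat.find_spec hex
  · rintro ⟨k, hk, _, hk2⟩
    exact ⟨k, by omega, hk2⟩

lemma refl_measure_eq (k : ℕ) (hk : k ≤ n) (D : Set (Fin (n+1) → ℝ)) (hD : MeasurableSet D)
    (hDr : ∀ y, refl n k y ∈ D ↔ y ∈ D) (t : ℝ) :
    μp (D ∩ {y | t < psum n n y}) = μp (D ∩ {y | t < 2 * psum n k y - psum n n y}) := by
  have hset : refl n k ⁻¹' (D ∩ {y | t < psum n n y})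
      = D ∩ {y | t < 2 * psum n k y - psum n n y} := by
    ext y
    simp only [Set.mem_preimage, Set.mem_inter_iff, Set.mem_setOf_eq]
    rw [hDr y, psum_refl_total n k hk y]
  rw [← hset]
  exact Eq.symm <| (measurePreserving_refl v k).measure_preimage
    ((hD.inter (measurableSet_lt measurable_const (measurable_psum n n))).nullMeasurableSet)

lemma mem_GFH_refl (c' : ℝ) (k : ℕ) (y : Fin (n+1) → ℝ) :
    refl n k y ∈ ({y | 0 < psum n 0 y} ∩ FH n c' k) ↔ y ∈ ({y | 0 < psum n 0 y} ∩ FH n c' k) := by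
  unfold FH
  simp only [Set.mem_inter_iff, Set.mem_setOf_eq]
  rw [psum_refl_le n k 0 (Nat.zero_le k), psum_refl_le n k k le_rfl]
  refine and_congr Iff.rfl (and_congr ?_ Iff.rfl)
  exact forall₂_congr fun j hj => by rw [psum_refl_le n k j hj.le]

lemma measurableSet_G : MeasurableSet {y : Fin (n+1) → ℝ | 0 < psum n 0 y} :=
  measurableSet_lt measurable_const (measurable_psum n 0)

lemma measurableSet_HS (c' : ℝ) :
    MeasurableSet {y : Fin (n+1) → ℝ | ∃ k ≤ n, psum n k y ≤ c'} := by
  rw [HS_eq]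
  exact (Finset.range (n+1)).measurableSet_biUnion fun k _ => measurableSet_FH c' k

lemma hit_decomp (c' : ℝ) :
    μp ({y | 0 < psum n 0 y} ∩ {y | ∃ k ≤ n, psum n k y ≤ c'})
      = μp ({y | 0 < psum n 0 y} ∩ {y | psum n n y ≤ c'})
        + ∑ k ∈ Finset.range (n+1),
            μp (({y | 0 < psum n 0 y} ∩ FH n c' k) ∩ {y | c' < 2 * psum n k y - psum n n y}) := by
  have hSn : Measurable (psum n n) := measurable_psum n n
  have hle : MeasurableSet {y : Fin (n+1) → ℝ | psum n n y ≤ c'} :=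
    measurableSet_le hSn measurable_const
  -- split by the final value
  have hdiff : ({y : Fin (n+1) → ℝ | 0 < psum n 0 y} ∩ {y | ∃ k ≤ n, psum n k y ≤ c'})
        \ {y | psum n n y ≤ c'}
      = ({y | 0 < psum n 0 y} ∩ {y | ∃ k ≤ n, psum n k y ≤ c'}) ∩ {y | c' < psum n n y} := by
    ext y
    simp only [Set.mem_diff, Set.mem_inter_iff, Set.mem_setOf_eq, not_le]
  have hsplit : μp ({y | 0 < psum n 0 y} ∩ {y | ∃ k ≤ n, psum n k y ≤ c'})
      = μp (({y | 0 < psum n 0 y} ∩ {y | ∃ k ≤ n, psum n k y ≤ c'}) ∩ {y | psum n n y ≤ c'})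
        + μp (({y | 0 < psum n 0 y} ∩ {y | ∃ k ≤ n, psum n k y ≤ c'}) ∩ {y | c' < psum n n y}) := by
    rw [← hdiff]
    exact (measure_inter_add_diff _ hle).symm
  have h1 : ({y : Fin (n+1) → ℝ | 0 < psum n 0 y} ∩ {y | ∃ k ≤ n, psum n k y ≤ c'})
      ∩ {y | psum n n y ≤ c'} = {y | 0 < psum n 0 y} ∩ {y | psum n n y ≤ c'} := by
    ext y
    simp only [Set.mem_inter_iff, Set.mem_setOf_eq]
    exact ⟨fun h => ⟨h.1.1, h.2⟩, fun h => ⟨⟨h.1, ⟨n, le_rfl, h.2⟩⟩, h.2⟩⟩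
  have h2 : ({y : Fin (n+1) → ℝ | 0 < psum n 0 y} ∩ {y | ∃ k ≤ n, psum n k y ≤ c'})
      ∩ {y | c' < psum n n y}
      = ⋃ k ∈ Finset.range (n+1), (({y | 0 < psum n 0 y} ∩ FH n c' k) ∩ {y | c' < psum n n y}) := by
    rw [HS_eq]
    ext y
    simp only [Set.mem_inter_iff, Set.mem_iUnion, Finset.mem_range, Set.mem_setOf_eq]
    tauto
  have hdisj : Set.PairwiseDisjoint ↑(Finset.range (n+1))
      (fun k => ({y : Fin (n+1) → ℝ | 0 < psum n 0 y} ∩ FH n c' k) ∩ {y | c' < psum n n y}) := by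
    intro k _ l _ hkl
    exact Disjoint.mono (Set.inter_subset_left.trans Set.inter_subset_right)
      (Set.inter_subset_left.trans Set.inter_subset_right) (FH_disjoint c' hkl)
  have hmeas : ∀ k ∈ Finset.range (n+1), MeasurableSet
      (({y : Fin (n+1) → ℝ | 0 < psum n 0 y} ∩ FH n c' k) ∩ {y | c' < psum n n y}) :=
    fun k _ => ((measurableSet_G.inter (measurableSet_FH c' k)).inter
      (measurableSet_lt measurable_const hSn))
  rw [hsplit, h1, h2, measure_biUnion_finset hdisj hmeas]
  congr 1
  refine Finset.sum_congr rfl fun k hk => ?_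
  rw [Finset.mem_range] at hk
  exact refl_measure_eq v k (by omega) _ (measurableSet_G.inter (measurableSet_FH c' k))
    (mem_GFH_refl c' k) c'

lemma core (c δ : ℝ) (hc : 0 < c) (hδ : 0 < δ) :
    μp {y | (∀ k ≤ n, 0 < psum n k y) ∧ (∃ k ≤ n, psum n k y ≤ c)}
      ≤ μp {y | psum n n y ∈ Set.Ioc 0 c} + μp {y | psum n n y ∈ Set.Ico (-(2*δ)) c}
        + μp {y | ∃ i : Fin (n+1), i ≠ 0 ∧ δ < |y i|} := by
  haveI : IsProbabilityMeasure (μp) := by infer_instance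
  have hSn : Measurable (psum n n) := measurable_psum n n
  set G : Set (Fin (n+1) → ℝ) := {y | 0 < psum n 0 y} with hGdef
  set Mc : Set (Fin (n+1) → ℝ) := {y | ∀ i : Fin (n+1), i ≠ 0 → |y i| ≤ δ} with hMcdef
  have hMcm : MeasurableSet Mc := by
    have : Mc = ⋂ (i : Fin (n+1)), ⋂ (_ : i ≠ 0), {y | |y i| ≤ δ} := by
      ext y; simp [hMcdef]
    rw [this]
    exact MeasurableSet.iInter fun i => MeasurableSet.iInter fun _ =>
      measurableSet_le (measurable_pi_apply i).abs measurable_const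
  -- the target set plus G∩HS0 equals G∩HSc
  have hkey : μp ({y | (∀ k ≤ n, 0 < psum n k y) ∧ (∃ k ≤ n, psum n k y ≤ c)})
        + μp (G ∩ {y | ∃ k ≤ n, psum n k y ≤ 0})
      = μp (G ∩ {y | ∃ k ≤ n, psum n k y ≤ c}) := by
    rw [← measure_union _ ((measurableSet_G (n := n)).inter (measurableSet_HS 0))]
    · congr 1
      ext y
      simp only [Set.mem_union, Set.mem_inter_iff, Set.mem_setOf_eq, hGdef]
      constructor
      · rintro (⟨hA, k, hk, hkc⟩ | ⟨hg, k, hk, hk0⟩)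
        · exact ⟨hA 0 (Nat.zero_le n), k, hk, hkc⟩
        · exact ⟨hg, k, hk, hk0.trans hc.le⟩
      · rintro ⟨hg, k, hk, hkc⟩
        by_cases hz : ∃ m ≤ n, psum n m y ≤ 0
        · exact Or.inr ⟨hg, hz⟩
        · push_neg at hz
          exact Or.inl ⟨fun m hm => hz m hm, k, hk, hkc⟩
    · rw [Set.disjoint_left]
      rintro y ⟨hA, _⟩ ⟨_, k, hk, hk0⟩
      linarith [hA k hk]
  -- upper bound for G ∩ HS c
  have hup : μp (G ∩ {y | ∃ k ≤ n, psum n k y ≤ c})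
      ≤ μp (G ∩ {y | psum n n y ≤ c}) + μp (G ∩ {y | psum n n y < c}) := by
    rw [hit_decomp v c]
    refine add_le_add le_rfl ?_
    calc ∑ k ∈ Finset.range (n+1), μp ((G ∩ FH n c k) ∩ {y | c < 2 * psum n k y - psum n n y})
        ≤ ∑ k ∈ Finset.range (n+1), μp ((G ∩ FH n c k) ∩ {y | psum n n y < c}) := by
          refine Finset.sum_le_sum fun k _ => measure_mono ?_
          rintro y ⟨⟨hg, hfh1, hfh2⟩, hy⟩
          simp only [Set.mem_setOf_eq] at hy
          exact ⟨⟨hg, hfh1, hfh2⟩, by show psum n n y < c; linarith⟩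
      _ = μp (⋃ k ∈ Finset.range (n+1), ((G ∩ FH n c k) ∩ {y | psum n n y < c})) := by
          rw [measure_biUnion_finset]
          · intro k _ l _ hkl
            exact Disjoint.mono (Set.inter_subset_left.trans Set.inter_subset_right)
              (Set.inter_subset_left.trans Set.inter_subset_right) (FH_disjoint c hkl)
          · exact fun k _ => ((measurableSet_G.inter (measurableSet_FH c k)).inter
              (measurableSet_lt hSn measurable_const))
      _ ≤ μp (G ∩ {y | psum n n y < c}) := by
          refine measure_mono ?_
          refine Set.iUnion₂_subset fun k _ => ?_
          rintro y ⟨⟨hg, _⟩, hy⟩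
          exact ⟨hg, hy⟩
  -- lower bound for G ∩ HS 0
  have hlow : μp (G ∩ {y | psum n n y ≤ 0}) + μp ((G ∩ Mc) ∩ {y | psum n n y < -(2*δ)})
      ≤ μp (G ∩ {y | ∃ k ≤ n, psum n k y ≤ 0}) := by
    rw [hit_decomp v 0]
    refine add_le_add le_rfl ?_
    have hsub : (G ∩ Mc) ∩ {y | psum n n y < -(2*δ)}
        = ⋃ k ∈ Finset.range (n+1),
            (((G ∩ FH n 0 k) ∩ Mc) ∩ {y | psum n n y < -(2*δ)}) := by
      have hGZ : (G ∩ Mc) ∩ {y | psum n n y < -(2*δ)}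
          = ((G ∩ {y | ∃ k ≤ n, psum n k y ≤ 0}) ∩ Mc) ∩ {y | psum n n y < -(2*δ)} := by
        ext y
        simp only [Set.mem_inter_iff, Set.mem_setOf_eq]
        constructor
        · rintro ⟨⟨hg, hmc⟩, hy⟩
          have h0 : psum n n y ≤ 0 := by nlinarith
          exact ⟨⟨⟨hg, n, le_rfl, h0⟩, hmc⟩, hy⟩
        · rintro ⟨⟨⟨hg, _⟩, hmc⟩, hy⟩
          exact ⟨⟨hg, hmc⟩, hy⟩
      rw [hGZ, HS_eq]
      ext y
      simp only [Set.mem_inter_iff, Set.mem_iUnion, Finset.mem_range, Set.mem_setOf_eq]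
      tauto
    rw [hsub, measure_biUnion_finset]
    · refine Finset.sum_le_sum fun k hk => measure_mono ?_
      rw [Finset.mem_range] at hk
      rintro y ⟨⟨⟨hg, hfh⟩, hmc⟩, hy⟩
      simp only [Set.mem_setOf_eq] at hy ⊢
      refine ⟨⟨hg, hfh⟩, ?_⟩
      -- need 0 < 2 * psum n k y - psum n n y
      rcases Nat.eq_zero_or_pos k with hk0 | hkpos
      · exfalso
        subst hk0
        have := hfh.2
        simp only [hGdef, Set.mem_setOf_eq] at hg
        linarith
      · obtain ⟨m, rfl⟩ : ∃ m, k = m + 1 := ⟨k - 1, by omega⟩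
        have hm : 0 < psum n m y := hfh.1 m (Nat.lt_succ_self m)
        have hrec := psum_succ n m y
        have hmlt : m + 1 < n + 1 := by omega
        have hec : ecoord n y (m+1) = y ⟨m+1, hmlt⟩ := by
          unfold ecoord; rw [dif_pos hmlt]
        have hbound : |y ⟨m+1, hmlt⟩| ≤ δ := by
          refine hmc ⟨m+1, hmlt⟩ ?_
          intro hcon
          have : (⟨m+1, hmlt⟩ : Fin (n+1)).val = (0 : Fin (n+1)).val := by rw [hcon]
          simp at this
        have habs := abs_le.1 hbound
        have : -δ ≤ ecoord n y (m+1) := by rw [hec]; linarith [habs.1]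
        show (0:ℝ) < 2 * psum n (m+1) y - psum n n y
        linarith
    · intro k _ l _ hkl
      refine Disjoint.mono ?_ ?_ (FH_disjoint (0:ℝ) hkl) <;>
        exact (Set.inter_subset_left.trans (Set.inter_subset_left.trans Set.inter_subset_right))
    · exact fun k _ => (((measurableSet_G.inter (measurableSet_FH 0 k)).inter hMcm).inter
        (measurableSet_lt hSn measurable_const))
  -- combine
  have hiii : μp (G ∩ {y | psum n n y ≤ c})
      ≤ μp (G ∩ {y | psum n n y ≤ 0}) + μp {y | psum n n y ∈ Set.Ioc 0 c} := by
    refine le_trans (measure_mono ?_) (measure_union_le _ _)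
    rintro y ⟨hg, hy⟩
    simp only [Set.mem_setOf_eq] at hy
    rcases le_or_gt (psum n n y) 0 with h | h
    · exact Or.inl ⟨hg, h⟩
    · exact Or.inr ⟨h, hy⟩
  have hiv : μp (G ∩ {y | psum n n y < c})
      ≤ μp ((G ∩ Mc) ∩ {y | psum n n y < -(2*δ)})
        + (μp {y | psum n n y ∈ Set.Ico (-(2*δ)) c}
            + μp {y | ∃ i : Fin (n+1), i ≠ 0 ∧ δ < |y i|}) := by
    have hincl : G ∩ {y | psum n n y < c} ⊆
        ((G ∩ Mc) ∩ {y | psum n n y < -(2*δ)})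
          ∪ ({y | psum n n y ∈ Set.Ico (-(2*δ)) c}
              ∪ {y | ∃ i : Fin (n+1), i ≠ 0 ∧ δ < |y i|}) := by
      rintro y ⟨hg, hlt⟩
      simp only [Set.mem_setOf_eq] at hlt
      rcases lt_or_ge (psum n n y) (-(2*δ)) with h | h
      · by_cases hmc : y ∈ Mc
        · exact Or.inl ⟨⟨hg, hmc⟩, h⟩
        · refine Or.inr (Or.inr ?_)
          simp only [hMcdef, Set.mem_setOf_eq] at hmc
          push_neg at hmc
          obtain ⟨i, hi0, hi⟩ := hmc
          exact ⟨i, hi0, hi⟩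
      · exact Or.inr (Or.inl ⟨h, hlt⟩)
    calc μp (G ∩ {y | psum n n y < c})
        ≤ μp (((G ∩ Mc) ∩ {y | psum n n y < -(2*δ)})
          ∪ ({y | psum n n y ∈ Set.Ico (-(2*δ)) c}
              ∪ {y | ∃ i : Fin (n+1), i ≠ 0 ∧ δ < |y i|})) := measure_mono hincl
      _ ≤ μp ((G ∩ Mc) ∩ {y | psum n n y < -(2*δ)})
          + μp ({y | psum n n y ∈ Set.Ico (-(2*δ)) c}
              ∪ {y | ∃ i : Fin (n+1), i ≠ 0 ∧ δ < |y i|}) := measure_union_le _ _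
      _ ≤ _ := add_le_add le_rfl (measure_union_le _ _)
  -- final cancellation
  have hfin : μp ({y | (∀ k ≤ n, 0 < psum n k y) ∧ (∃ k ≤ n, psum n k y ≤ c)})
        + μp (G ∩ {y | ∃ k ≤ n, psum n k y ≤ 0})
      ≤ (μp {y | psum n n y ∈ Set.Ioc 0 c} + μp {y | psum n n y ∈ Set.Ico (-(2*δ)) c}
          + μp {y | ∃ i : Fin (n+1), i ≠ 0 ∧ δ < |y i|})
        + μp (G ∩ {y | ∃ k ≤ n, psum n k y ≤ 0}) := by
    rw [hkey]
    calc μp (G ∩ {y | ∃ k ≤ n, psum n k y ≤ c})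
        ≤ μp (G ∩ {y | psum n n y ≤ c}) + μp (G ∩ {y | psum n n y < c}) := hup
      _ ≤ (μp (G ∩ {y | psum n n y ≤ 0}) + μp {y | psum n n y ∈ Set.Ioc 0 c})
          + (μp ((G ∩ Mc) ∩ {y | psum n n y < -(2*δ)})
            + (μp {y | psum n n y ∈ Set.Ico (-(2*δ)) c}
              + μp {y | ∃ i : Fin (n+1), i ≠ 0 ∧ δ < |y i|})) := add_le_add hiii hiv
      _ ≤ (μp {y | psum n n y ∈ Set.Ioc 0 c} + μp {y | psum n n y ∈ Set.Ico (-(2*δ)) c}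
            + μp {y | ∃ i : Fin (n+1), i ≠ 0 ∧ δ < |y i|})
          + (μp (G ∩ {y | psum n n y ≤ 0}) + μp ((G ∩ Mc) ∩ {y | psum n n y < -(2*δ)})) := by
          exact le_of_eq (by ring)
      _ ≤ _ := add_le_add le_rfl hlow
  exact ENNReal.le_of_add_le_add_right (measure_ne_top _ _) hfin

lemma psum_neg (n k : ℕ) (y : Fin (n+1) → ℝ) :
    psum n k (fun i => -(y i)) = -psum n k y := by
  unfold psum
  rw [← Finset.sum_neg_distrib]
  refine Finset.sum_congr rfl fun i _ => ?_
  unfold ecoord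
  split <;> simp

lemma core_neg_eq (c : ℝ) :
    μp {y | (∀ k ≤ n, psum n k y < 0) ∧ (∃ k ≤ n, -c ≤ psum n k y)}
      = μp {y | (∀ k ≤ n, 0 < psum n k y) ∧ (∃ k ≤ n, psum n k y ≤ c)} := by
  have hmeas : MeasurableSet {y : Fin (n+1) → ℝ | (∀ k ≤ n, 0 < psum n k y)
      ∧ (∃ k ≤ n, psum n k y ≤ c)} := by
    have hrw : {y : Fin (n+1) → ℝ | (∀ k ≤ n, 0 < psum n k y) ∧ (∃ k ≤ n, psum n k y ≤ c)}
        = (⋂ k, ⋂ (_ : k ≤ n), {y | 0 < psum n k y})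
          ∩ (⋃ k, ⋃ (_ : k ≤ n), {y | psum n k y ≤ c}) := by
      ext y; simp
    rw [hrw]
    exact (MeasurableSet.iInter fun k => MeasurableSet.iInter fun _ =>
        measurableSet_lt measurable_const (measurable_psum n k)).inter
      (MeasurableSet.iUnion fun k => MeasurableSet.iUnion fun _ =>
        measurableSet_le (measurable_psum n k) measurable_const)
  have hpre : (fun (y : Fin (n+1) → ℝ) i => -(y i)) ⁻¹'
        {y | (∀ k ≤ n, 0 < psum n k y) ∧ (∃ k ≤ n, psum n k y ≤ c)}
      = {y | (∀ k ≤ n, psum n k y < 0) ∧ (∃ k ≤ n, -c ≤ psum n k y)} := by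
    ext y
    simp only [Set.mem_preimage, Set.mem_setOf_eq, psum_neg]
    constructor
    · rintro ⟨h1, k, hk, hkc⟩
      exact ⟨fun m hm => by linarith [h1 m hm], k, hk, by linarith⟩
    · rintro ⟨h1, k, hk, hkc⟩
      exact ⟨fun m hm => by linarith [h1 m hm], k, hk, by linarith⟩
  rw [← hpre]
  exact (measurePreserving_flip v).measure_preimage hmeas.nullMeasurableSet

end Core



lemma gaussianReal_set_le (v : ℝ≥0) (hv : v ≠ 0) (s : Set ℝ) (hs : MeasurableSet s) :
    gaussianReal 0 v s ≤ ENNReal.ofReal ((Real.sqrt (2 * Real.pi * v))⁻¹) * volume s := by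
  rw [gaussianReal_apply 0 hv s]
  calc ∫⁻ x in s, gaussianPDF 0 v x
      ≤ ∫⁻ _ in s, ENNReal.ofReal ((Real.sqrt (2 * Real.pi * v))⁻¹) := by
        refine lintegral_mono fun x => ?_
        unfold gaussianPDF
        refine ENNReal.ofReal_le_ofReal ?_
        unfold gaussianPDFReal
        have h1 : rexp (-(x - 0)^2 / (2 * v)) ≤ 1 := by
          rw [Real.exp_le_one_iff]
          apply div_nonpos_of_nonpos_of_nonneg
          · simp [sq_nonneg]
          · positivity
        calc (Real.sqrt (2 * Real.pi * v))⁻¹ * rexp (-(x - 0)^2 / (2 * v))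
            ≤ (Real.sqrt (2 * Real.pi * v))⁻¹ * 1 := by
              refine mul_le_mul_of_nonneg_left h1 ?_
              positivity
          _ = (Real.sqrt (2 * Real.pi * v))⁻¹ := mul_one _
      _ = ENNReal.ofReal ((Real.sqrt (2 * Real.pi * v))⁻¹) * volume s := by
        rw [setLIntegral_const]

lemma gaussianReal_Ioc_le (v : ℝ≥0) (hv : v ≠ 0) (u w : ℝ) (huw : u ≤ w) :
    gaussianReal 0 v (Set.Ioc u w)
      ≤ ENNReal.ofReal ((w - u) * (Real.sqrt (2 * Real.pi * v))⁻¹) := by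
  refine le_trans (gaussianReal_set_le v hv _ measurableSet_Ioc) ?_
  rw [Real.volume_Ioc, ← ENNReal.ofReal_mul (by positivity)]
  exact le_of_eq (by rw [mul_comm])

lemma gaussianReal_Ico_le (v : ℝ≥0) (hv : v ≠ 0) (u w : ℝ) (huw : u ≤ w) :
    gaussianReal 0 v (Set.Ico u w)
      ≤ ENNReal.ofReal ((w - u) * (Real.sqrt (2 * Real.pi * v))⁻¹) := by
  refine le_trans (gaussianReal_set_le v hv _ measurableSet_Ico) ?_
  rw [Real.volume_Ico, ← ENNReal.ofReal_mul (by positivity)]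
  exact le_of_eq (by rw [mul_comm])

lemma map_joint_eq_pi {Ω : Type*} [MeasurableSpace Ω] {P : Measure Ω} {n : ℕ}
    (X : Fin (n+1) → Ω → ℝ) (hX : ∀ i, Measurable (X i))
    (hind : iIndepFun X P)
    (v : Fin (n+1) → ℝ≥0) (hlaw : ∀ i, Measure.map (X i) P = gaussianReal 0 (v i)) :
    Measure.map (fun ω i => X i ω) P = Measure.pi (fun i => gaussianReal 0 (v i)) := by
  have hΦ : Measurable (fun ω i => X i ω) := measurable_pi_lambda _ hX
  refine (Measure.pi_eq fun s hs => ?_).symm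
  rw [Measure.map_apply hΦ (MeasurableSet.univ_pi hs)]
  have hpre : (fun ω i => X i ω) ⁻¹' (Set.pi univ s) = ⋂ i, X i ⁻¹' s i := by
    ext ω; simp [Set.mem_pi]
  rw [hpre]
  have key := (iIndepFun_iff_measure_inter_preimage_eq_mul.mp hind) Finset.univ
    (fun i _ => hs i)
  have h2 : (⋂ i ∈ Finset.univ, X i ⁻¹' s i) = ⋂ i, X i ⁻¹' s i := by
    simp
  rw [h2] at key
  rw [key]
  exact Finset.prod_congr rfl fun i _ => by rw [← Measure.map_apply (hX i) (hs i), hlaw i]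



def Qset (a b : ℝ) : Set ℝ :=
  Icc a b ∩ (Set.range ((↑) : ℚ → ℝ)
    ∪ ⋃ K : ℕ, Set.range (fun j : Fin (2^K + 1) => a + (j : ℕ) * ((b - a) / 2^K)))

lemma countable_Qset (a b : ℝ) : (Qset a b).Countable :=
  Set.Countable.mono Set.inter_subset_right
    ((Set.countable_range _).union (Set.countable_iUnion fun _ => Set.countable_range _))

lemma Qset_subset_Icc (a b : ℝ) : Qset a b ⊆ Icc a b := Set.inter_subset_left

def oscSet {Ω : Type*} [MeasurableSpace Ω] (W : ℝ → Ω → ℝ) (a b ε m : ℝ) : Set Ω :=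
  ⋃ (p : Qset a b) (q : Qset a b) (_ : |p.1 - q.1| ≤ m), {ω | ε ≤ |W p.1 ω - W q.1 ω|}

lemma measurableSet_oscSet {Ω : Type*} [MeasurableSpace Ω] {W : ℝ → Ω → ℝ}
    (hmeas : ∀ t, Measurable (W t)) (a b ε m : ℝ) :
    MeasurableSet (oscSet W a b ε m) := by
  haveI := (countable_Qset a b).to_subtype
  exact MeasurableSet.iUnion fun p => MeasurableSet.iUnion fun q =>
    MeasurableSet.iUnion fun _ =>
      measurableSet_le measurable_const ((hmeas _).sub (hmeas _)).abs

lemma oscSet_anti {Ω : Type*} [MeasurableSpace Ω] (W : ℝ → Ω → ℝ) (a b ε : ℝ)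
    {m m' : ℝ} (h : m ≤ m') : oscSet W a b ε m ⊆ oscSet W a b ε m' := by
  refine Set.iUnion_mono fun p => Set.iUnion_mono fun q => ?_
  exact Set.iUnion_subset fun hpq => Set.subset_iUnion_of_subset (hpq.trans h) le_rfl

lemma not_mem_oscSet {Ω : Type*} [MeasurableSpace Ω] {W : ℝ → Ω → ℝ} {a b ε m : ℝ}
    {ω : Ω} (hω : ω ∉ oscSet W a b ε m) :
    ∀ p ∈ Qset a b, ∀ q ∈ Qset a b, |p - q| ≤ m → |W p ω - W q ω| < ε := by
  intro p hp q hq hpq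
  by_contra hcon
  push_neg at hcon
  exact hω (Set.mem_iUnion.2 ⟨⟨p, hp⟩, Set.mem_iUnion.2 ⟨⟨q, hq⟩,
    Set.mem_iUnion.2 ⟨hpq, hcon⟩⟩⟩)

lemma exists_osc_small {Ω : Type*} [MeasurableSpace Ω] (P : Measure Ω)
    [IsProbabilityMeasure P]
    (W : ℝ → Ω → ℝ) (hmeas : ∀ t, Measurable (W t))
    (hcont : ∀ᵐ ω ∂P, Continuous fun t => W t ω)
    (a b ε : ℝ) (hab : a < b) (hε : 0 < ε) (tgt : ℝ≥0∞) (ht : 0 < tgt) :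
    ∃ K : ℕ, P (oscSet W a b ε ((b - a) / 2^K)) ≤ tgt := by
  set s : ℕ → Set Ω := fun K => oscSet W a b ε ((b - a) / 2^K) with hs
  have hmesh_anti : ∀ {K K' : ℕ}, K ≤ K' → (b - a) / 2^K' ≤ (b - a) / 2^K := by
    intro K K' h
    apply div_le_div_of_nonneg_left (by linarith) (by positivity)
    exact pow_le_pow_right₀ (by norm_num) h
  have hanti : Antitone s := fun K K' h => oscSet_anti W a b ε (hmesh_anti h)
  have hm : ∀ K, MeasurableSet (s K) := fun K => measurableSet_oscSet hmeas a b ε _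
  have hlim : Tendsto (fun K => P (s K)) atTop (𝓝 (P (⋂ K, s K))) :=
    tendsto_measure_iInter_atTop (fun K => (hm K).nullMeasurableSet) hanti ⟨0, measure_ne_top _ _⟩
  have hzero : P (⋂ K, s K) = 0 := by
    refine measure_mono_null ?_ (ae_iff.mp hcont)
    intro ω hω
    simp only [Set.mem_iInter] at hω
    simp only [Set.mem_setOf_eq]
    intro hcontω
    -- uniform continuity on Icc a b
    have huc := (isCompact_Icc (a := a) (b := b)).uniformContinuousOn_of_continuous
      (hcontω.continuousOn)
    rw [Metric.uniformContinuousOn_iff] at huc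
    obtain ⟨δ₀, hδ₀, hδ⟩ := huc ε hε
    -- pick K with mesh < δ₀
    have htend : Tendsto (fun K : ℕ => (b - a) / 2^K) atTop (𝓝 0) := by
      have h2 : Tendsto (fun K : ℕ => ((1:ℝ)/2)^K) atTop (𝓝 0) := by
        apply tendsto_pow_atTop_nhds_zero_of_lt_one <;> norm_num
      have := h2.const_mul (b - a)
      rw [mul_zero] at this
      refine this.congr fun K => ?_
      rw [div_pow, one_pow]
      ring
    obtain ⟨K, hK⟩ := (htend.eventually_lt_const hδ₀).exists
    have := hω K
    rw [hs] at this
    obtain ⟨p, q, hpq, hle⟩ := by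
      simpa only [oscSet, Set.mem_iUnion, Set.mem_setOf_eq] using this
    have hd := hδ p.1 (Qset_subset_Icc a b p.2) q.1 (Qset_subset_Icc a b q.2)
      (by rw [Real.dist_eq]; exact lt_of_le_of_lt hpq hK)
    rw [Real.dist_eq] at hd
    linarith
  rw [hzero] at hlim
  obtain ⟨K, hK⟩ := (hlim.eventually_lt_const ht).exists
  exact ⟨K, hK.le⟩


theorem main {Ω : Type*} [MeasurableSpace Ω] (P : Measure Ω) (W : ℝ → Ω → ℝ)
    (isProb : IsProbabilityMeasure P)
    (meas : ∀ t, Measurable (W t))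
    (init : ∀ᵐ ω ∂P, W 0 ω = 0)
    (cont : ∀ᵐ ω ∂P, Continuous fun t => W t ω)
    (gauss : ∀ s t : ℝ, 0 ≤ s → s ≤ t →
      Measure.map (fun ω => W t ω - W s ω) P = gaussianReal 0 (t - s).toNNReal)
    (indep : ∀ (n : ℕ) (t : Fin (n + 1) → ℝ), (∀ i, 0 ≤ t i) → Monotone t →
      iIndepFun
        (fun (i : Fin n) ω => W (t i.succ) ω - W (t i.castSucc) ω) P)
    (a b eta : ℝ) (ha : 0 < a) (hab : a < b) (heta : 0 < eta) :
    P {ω | 0 < ⨅ t : Set.Icc a b, |W t ω| ∧ (⨅ t : Set.Icc a b, |W t ω|) ≤ eta} ≤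
      ENNReal.ofReal ((16 * eta / Real.sqrt (2 * Real.pi)) *
        min (1 / Real.sqrt (b - a)) (1 / Real.sqrt a)) := by
  classical
  haveI : IsProbabilityMeasure P := isProb
  have hb : 0 < b := ha.trans hab
  have hba : 0 < b - a := by linarith
  set inv : ℝ := (Real.sqrt (2 * Real.pi * b))⁻¹ with hinv
  have hsqrt2πb : 0 < Real.sqrt (2 * Real.pi * b) := Real.sqrt_pos.2 (by positivity)
  have hinvpos : 0 < inv := by rw [hinv]; positivity
  have htgtpos : (0:ℝ≥0∞) < ENNReal.ofReal (eta * inv) := by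
    rw [ENNReal.ofReal_pos]; positivity
  obtain ⟨K, hK⟩ := exists_osc_small P W meas cont a b (eta/2) hab (by linarith)
    (ENNReal.ofReal (eta * inv)) htgtpos
  -- grid setup
  set N : ℕ := 2^K with hN
  set mesh : ℝ := (b - a) / 2^K with hmesh
  have hmeshpos : 0 < mesh := by rw [hmesh]; positivity
  set g : ℕ → ℝ := fun j => a + j * mesh with hg
  have hNmesh : (N : ℝ) * mesh = b - a := by
    rw [hN, hmesh]
    have h2 : (2:ℝ)^K ≠ 0 := by positivity
    push_cast
    field_simp
  have hgN : g N = b := by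
    simp only [hg]
    rw [hNmesh]
    ring
  have hgmono : ∀ m m' : ℕ, m ≤ m' → g m ≤ g m' := by
    intro m m' h
    simp only [hg]
    have hmm : (m:ℝ) ≤ (m':ℝ) := by exact_mod_cast h
    nlinarith
  have hgIcc : ∀ j : ℕ, j ≤ N → g j ∈ Icc a b := by
    intro j hj
    constructor
    · simp only [hg]
      nlinarith [mul_nonneg (Nat.cast_nonneg j : (0:ℝ) ≤ j) hmeshpos.le]
    · rw [← hgN]
      exact hgmono j N hj
  have hgpos : ∀ j : ℕ, j ≤ N → 0 < g j := fun j hj => lt_of_lt_of_le ha (hgIcc j hj).1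
  have hgQ : ∀ j : ℕ, j ≤ N → g j ∈ Qset a b := by
    intro j hj
    refine ⟨hgIcc j hj, Or.inr (Set.mem_iUnion.2 ⟨K, ⟨⟨j, by omega⟩, ?_⟩⟩)⟩
    simp only [hg, hmesh]
  -- times
  set u : Fin (N+2) → ℝ := fun i => if (i:ℕ) = 0 then 0 else g ((i:ℕ) - 1) with hu
  have hu0 : ∀ i : Fin (N+2), 0 ≤ u i := by
    intro i
    simp only [hu]
    split
    · exact le_rfl
    · exact (hgpos _ (by omega)).le
  have humono : Monotone u := by
    intro i j hij
    rw [Fin.le_def] at hij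
    simp only [hu]
    by_cases hi : (i:ℕ) = 0
    · rw [if_pos hi]
      split
      · exact le_rfl
      · exact (hgpos _ (by omega)).le
    · rw [if_neg hi, if_neg (by omega)]
      exact hgmono _ _ (by omega)
  set X : Fin (N+1) → Ω → ℝ := fun i ω => W (u i.succ) ω - W (u i.castSucc) ω with hX
  have hXmeas : ∀ i, Measurable (X i) := fun i => (meas _).sub (meas _)
  have hind : iIndepFun X P := indep (N+1) u hu0 humono
  set v : Fin (N+1) → ℝ≥0 := fun i => if (i:ℕ) = 0 then a.toNNReal else mesh.toNNReal with hv
  have hsucc : ∀ i : Fin (N+1), u i.succ = g (i:ℕ) := by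
    intro i
    simp only [hu, Fin.val_succ]
    rw [if_neg (by omega)]
    congr 1
  have hcast : ∀ i : Fin (N+1), u i.castSucc
      = if (i:ℕ) = 0 then 0 else g ((i:ℕ) - 1) := by
    intro i
    simp only [hu, Fin.coe_castSucc]
  have hg0 : g 0 = a := by simp [hg]
  have hgdiff : ∀ m : ℕ, g (m+1) - g m = mesh := by
    intro m
    simp only [hg]
    push_cast
    ring
  have hlaw : ∀ i, Measure.map (X i) P = gaussianReal 0 (v i) := by
    intro i
    have h1 := gauss (u i.castSucc) (u i.succ) (hu0 _)
      (humono (Fin.castSucc_lt_succ (i := i)).le)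
    have h2 : (u i.succ - u i.castSucc).toNNReal = v i := by
      rw [hsucc, hcast]
      simp only [hv]
      by_cases hi : (i:ℕ) = 0
      · rw [if_pos hi, if_pos hi, hi, hg0]
        norm_num
      · rw [if_neg hi, if_neg hi]
        obtain ⟨m, hm⟩ : ∃ m, (i:ℕ) = m + 1 := ⟨(i:ℕ) - 1, by omega⟩
        rw [hm]
        simp only [Nat.add_sub_cancel]
        rw [hgdiff m]
    have hXi : X i = fun ω => W (u i.succ) ω - W (u i.castSucc) ω := by
      simp only [hX]
    rw [hXi, h1, h2]
  set Φ : Ω → (Fin (N+1) → ℝ) := fun ω i => X i ω with hΦ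
  have hΦmeas : Measurable Φ := measurable_pi_lambda _ hXmeas
  have hmap : Measure.map Φ P = Measure.pi (fun i => gaussianReal 0 (v i)) :=
    map_joint_eq_pi X hXmeas hind v hlaw
  -- telescoping
  have htel : ∀ ω : Ω, ∀ k : ℕ, k ≤ N → psum N k (Φ ω) = W (g k) ω - W 0 ω := by
    intro ω k
    induction k with
    | zero =>
      intro _
      have h0 : psum N 0 (Φ ω) = X 0 ω := by
        unfold psum ecoord
        rw [Finset.sum_range_one, dif_pos (Nat.succ_pos N)]
        rfl
      rw [h0]
      have hs0 : u (0 : Fin (N+1)).succ = g 0 := hsucc 0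
      have hc0 : u (0 : Fin (N+1)).castSucc = 0 := by
        rw [hcast]
        simp
      simp only [hX]
      rw [hs0, hc0]
    | succ m ih =>
      intro hm
      have hm' : m ≤ N := by omega
      rw [psum_succ, ih hm']
      have hlt : m + 1 < N + 1 := by omega
      have he : ecoord N (Φ ω) (m+1) = X ⟨m+1, hlt⟩ ω := by
        unfold ecoord
        rw [dif_pos hlt]
      rw [he]
      have h1 : u (⟨m+1, hlt⟩ : Fin (N+1)).succ = g (m+1) := by
        have := hsucc ⟨m+1, hlt⟩
        simpa using this
      have h2 : u (⟨m+1, hlt⟩ : Fin (N+1)).castSucc = g m := by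
        rw [hcast]
        simp
      simp only [hX]
      rw [h1, h2]
      ring
  -- good set
  set Cset : Set Ω := {ω | Continuous fun t => W t ω} ∩ {ω | W 0 ω = 0} with hCset
  have hCc : P Csetᶜ = 0 := by
    rw [hCset, Set.compl_inter]
    refine le_antisymm (le_trans (measure_union_le _ _) ?_) zero_le
    have c1 : P {ω | Continuous fun t => W t ω}ᶜ = 0 := by
      rw [Set.compl_setOf]
      exact ae_iff.mp cont
    have c2 : P {ω | W 0 ω = 0}ᶜ = 0 := by
      rw [Set.compl_setOf]
      exact ae_iff.mp init
    rw [c1, c2, add_zero]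
  -- events in the product space
  set Gp : Set (Fin (N+1) → ℝ) :=
    {y | (∀ k ≤ N, 0 < psum N k y) ∧ (∃ k ≤ N, psum N k y ≤ 2*eta)} with hGp
  set Gm : Set (Fin (N+1) → ℝ) :=
    {y | (∀ k ≤ N, psum N k y < 0) ∧ (∃ k ≤ N, -(2*eta) ≤ psum N k y)} with hGm
  have hGpm : MeasurableSet Gp := by
    have hrw : Gp = (⋂ k, ⋂ (_ : k ≤ N), {y | 0 < psum N k y})
        ∩ (⋃ k, ⋃ (_ : k ≤ N), {y | psum N k y ≤ 2*eta}) := by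
      ext y; simp [hGp]
    rw [hrw]
    exact (MeasurableSet.iInter fun k => MeasurableSet.iInter fun _ =>
        measurableSet_lt measurable_const (measurable_psum N k)).inter
      (MeasurableSet.iUnion fun k => MeasurableSet.iUnion fun _ =>
        measurableSet_le (measurable_psum N k) measurable_const)
  have hGmm : MeasurableSet Gm := by
    have hrw : Gm = (⋂ k, ⋂ (_ : k ≤ N), {y | psum N k y < 0})
        ∩ (⋃ k, ⋃ (_ : k ≤ N), {y | -(2*eta) ≤ psum N k y}) := by
      ext y; simp [hGm]
    rw [hrw]
    exact (MeasurableSet.iInter fun k => MeasurableSet.iInter fun _ =>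
        measurableSet_lt (measurable_psum N k) measurable_const).inter
      (MeasurableSet.iUnion fun k => MeasurableSet.iUnion fun _ =>
        measurableSet_le measurable_const (measurable_psum N k))
  -- pathwise inclusion
  have hincl : {ω | 0 < ⨅ t : Set.Icc a b, |W t ω| ∧ (⨅ t : Set.Icc a b, |W t ω|) ≤ eta}
      ⊆ (Φ ⁻¹' (Gp ∪ Gm)) ∪ (Csetᶜ ∪ oscSet W a b (eta/2) mesh) := by
    intro ω hω
    by_cases hC : ω ∈ Cset
    swap
    · exact Or.inr (Or.inl hC)
    by_cases hB : ω ∈ oscSet W a b (eta/2) mesh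
    · exact Or.inr (Or.inr hB)
    refine Or.inl ?_
    obtain ⟨hβpos, hβle⟩ := hω
    obtain ⟨hcontω, hW0⟩ := hC
    haveI : Nonempty (Set.Icc a b) := Set.Nonempty.to_subtype (Set.nonempty_Icc.2 hab.le)
    have hbdd : BddBelow (Set.range fun s : Set.Icc a b => |W s ω|) := by
      refine ⟨0, ?_⟩
      rintro x ⟨s, rfl⟩
      exact abs_nonneg _
    have hne : ∀ t (ht : t ∈ Icc a b), (⨅ s : Set.Icc a b, |W s ω|) ≤ |W t ω| :=
      fun t ht => ciInf_le hbdd (⟨t, ht⟩ : Set.Icc a b)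
    have hfne : ∀ t ∈ Icc a b, W t ω ≠ 0 := by
      intro t ht h0
      have h1 := lt_of_lt_of_le hβpos (hne t ht)
      rw [h0] at h1
      simp at h1
    have hIVT : ∀ s ∈ Icc a b, ∀ t ∈ Icc a b, 0 < W s ω → W t ω < 0 → False := by
      intro s hs t ht hspos htneg
      have hct : ContinuousOn (fun r => W r ω) (Set.uIcc s t) := hcontω.continuousOn
      have h0mem : (0:ℝ) ∈ Set.uIcc (W s ω) (W t ω) := by
        rw [Set.mem_uIcc]
        exact Or.inr ⟨htneg.le, hspos.le⟩
      obtain ⟨z, hz, hz0⟩ := intermediate_value_uIcc hct h0mem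
      have hzI : z ∈ Icc a b := by
        have hsub : Set.uIcc s t ⊆ Icc a b := Set.uIcc_subset_Icc hs ht
        exact hsub hz
      exact hfne z hzI hz0
    have haI : a ∈ Icc a b := ⟨le_rfl, hab.le⟩
    have hsgn : (∀ t ∈ Icc a b, 0 < W t ω) ∨ (∀ t ∈ Icc a b, W t ω < 0) := by
      rcases (hfne a haI).lt_or_gt with hneg | hpos
      · refine Or.inr fun t ht => ?_
        by_contra hcon
        push_neg at hcon
        have : 0 < W t ω := lt_of_le_of_ne hcon (Ne.symm (hfne t ht))
        exact hIVT t ht a haI this hneg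
      · refine Or.inl fun t ht => ?_
        by_contra hcon
        push_neg at hcon
        have : W t ω < 0 := lt_of_le_of_ne hcon (hfne t ht)
        exact hIVT a haI t ht hpos this
    -- find a point where |W| is small
    have hlow : (⨅ s : Set.Icc a b, |W s ω|) < eta + eta/4 :=
      lt_of_le_of_lt hβle (by linarith)
    obtain ⟨t₀, ht₀⟩ := exists_lt_of_ciInf_lt hlow
    -- rational approximation
    obtain ⟨δ', hδ'pos, hδ'⟩ := Metric.continuous_iff.mp hcontω t₀.1 (eta/4) (by linarith)
    have hlohi : max a (t₀.1 - δ') < min b (t₀.1 + δ') := by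
      have h1 := t₀.2.1
      have h2 := t₀.2.2
      refine max_lt (lt_min hab (by linarith)) (lt_min (by linarith) (by linarith))
    obtain ⟨q, hq1, hq2⟩ := exists_rat_btwn hlohi
    have hqI : (q:ℝ) ∈ Icc a b :=
      ⟨(le_max_left a _).trans hq1.le, hq2.le.trans (min_le_left b _)⟩
    have hqd : dist (q:ℝ) t₀.1 < δ' := by
      rw [Real.dist_eq, abs_sub_lt_iff]
      constructor
      · have := hq2.trans_le (min_le_right b _)
        linarith
      · have := (le_max_right a (t₀.1 - δ')).trans_lt hq1
        linarith
    have hfq : |W (q:ℝ) ω| < eta + eta/2 := by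
      have hd := hδ' (q:ℝ) hqd
      rw [Real.dist_eq] at hd
      have htri := abs_sub_abs_le_abs_sub (W (q:ℝ) ω) (W t₀.1 ω)
      linarith
    have hqQ : (q:ℝ) ∈ Qset a b := ⟨hqI, Or.inl ⟨q, rfl⟩⟩
    -- nearest grid point
    set x : ℝ := ((q:ℝ) - a) / mesh with hx
    have hx0 : 0 ≤ x := by
      rw [hx]
      have h1 := hqI.1
      exact div_nonneg (by linarith) hmeshpos.le
    have hxN : x ≤ N := by
      rw [hx, div_le_iff₀ hmeshpos, hNmesh]
      have := hqI.2
      linarith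
    set j : ℕ := Nat.floor x with hj
    have hjN : j ≤ N := by
      rw [hj]
      have := Nat.floor_le_floor hxN
      rwa [Nat.floor_natCast] at this
    have hjx1 : (j:ℝ) ≤ x := by rw [hj]; exact Nat.floor_le hx0
    have hjx2 : x < (j:ℝ) + 1 := by rw [hj]; exact Nat.lt_floor_add_one x
    have hqx : (q:ℝ) = a + x * mesh := by
      rw [hx]
      field_simp
      ring
    have hjq : |g j - (q:ℝ)| ≤ mesh := by
      simp only [hg]
      rw [hqx, abs_le]
      constructor <;> nlinarith
    have hoscp := not_mem_oscSet hB (g j) (hgQ j hjN) (q:ℝ) hqQ hjq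
    have htri2 := abs_sub_abs_le_abs_sub (W (g j) ω) (W (q:ℝ) ω)
    have hfgj : |W (g j) ω| < 2*eta := by linarith
    have habs := abs_lt.mp hfgj
    rcases hsgn with hpos | hneg
    · refine Or.inl ⟨?_, ⟨j, hjN, ?_⟩⟩
      · intro k hk
        rw [htel ω k hk, hW0, sub_zero]
        exact hpos _ (hgIcc k hk)
      · rw [htel ω j hjN, hW0, sub_zero]
        linarith [habs.2]
    · refine Or.inr ⟨?_, ⟨j, hjN, ?_⟩⟩
      · intro k hk
        rw [htel ω k hk, hW0, sub_zero]
        exact hneg _ (hgIcc k hk)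
      · rw [htel ω j hjN, hW0, sub_zero]
        linarith [habs.1]
  -- endpoint law
  have hlawb : Measure.map (fun ω => W b ω - W 0 ω) P = gaussianReal 0 (b - 0).toNNReal :=
    gauss 0 b le_rfl hb.le
  have hvb : (b - 0).toNNReal ≠ 0 := by
    rw [sub_zero]
    exact (Real.toNNReal_pos.2 hb).ne'
  have hvbcoe : (((b - 0).toNNReal : ℝ≥0) : ℝ) = b := by
    rw [sub_zero, Real.coe_toNNReal _ hb.le]
  -- translation of product events to endpoint events
  have hSn_event : ∀ I : Set ℝ, MeasurableSet I →
      Measure.pi (fun i => gaussianReal 0 (v i)) {y | psum N N y ∈ I}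
        = gaussianReal 0 (b - 0).toNNReal I := by
    intro I hI
    have hmeasS : MeasurableSet {y : Fin (N+1) → ℝ | psum N N y ∈ I} :=
      (measurable_psum N N) hI
    rw [← hmap, Measure.map_apply hΦmeas hmeasS]
    have hpre : Φ ⁻¹' {y | psum N N y ∈ I} = (fun ω => W b ω - W 0 ω) ⁻¹' I := by
      ext ω
      simp only [Set.mem_preimage, Set.mem_setOf_eq]
      rw [htel ω N le_rfl, hgN]
    rw [hpre, ← Measure.map_apply (f := fun ω => W b ω - W 0 ω) ((meas b).sub (meas 0)) hI, hlawb]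
  -- oscillation bounds the max-increment event
  have hMev : P (Φ ⁻¹' {y | ∃ i : Fin (N+1), i ≠ 0 ∧ eta/2 < |y i|})
      ≤ P (oscSet W a b (eta/2) mesh) := by
    refine measure_mono ?_
    intro ω hω
    simp only [Set.mem_preimage, Set.mem_setOf_eq] at hω
    obtain ⟨i, hi0, hi⟩ := hω
    have hival : (i:ℕ) ≠ 0 := by
      intro hcon
      exact hi0 (Fin.ext (by simp [hcon]))
    obtain ⟨m, hm⟩ : ∃ m, (i:ℕ) = m + 1 := ⟨(i:ℕ) - 1, by omega⟩
    have hXi : Φ ω i = W (g (m+1)) ω - W (g m) ω := by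
      simp only [hΦ, hX]
      rw [hsucc, hcast, if_neg hival, hm]
      simp only [Nat.add_sub_cancel]
    have hiN : (i:ℕ) ≤ N := by omega
    have hm1N : m + 1 ≤ N := by omega
    have hmN : m ≤ N := by omega
    have hdist : |g (m+1) - g m| ≤ mesh := by
      rw [hgdiff m, abs_of_pos hmeshpos]
    refine Set.mem_iUnion.2 ⟨⟨g (m+1), hgQ (m+1) hm1N⟩, Set.mem_iUnion.2 ⟨⟨g m, hgQ m hmN⟩,
      Set.mem_iUnion.2 ⟨hdist, ?_⟩⟩⟩
    simp only [Set.mem_setOf_eq]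
    rw [← hXi]
    exact hi.le
  -- core bounds
  haveI : IsProbabilityMeasure (Measure.pi (fun i => gaussianReal 0 (v i))) := by
    infer_instance
  have hGpb : Measure.pi (fun i => gaussianReal 0 (v i)) Gp
      ≤ ENNReal.ofReal (2*eta * inv) + ENNReal.ofReal (3*eta * inv)
        + ENNReal.ofReal (eta * inv) := by
    refine le_trans (core v (2*eta) (eta/2) (by linarith) (by linarith)) ?_
    have hT1 : Measure.pi (fun i => gaussianReal 0 (v i)) {y | psum N N y ∈ Set.Ioc 0 (2*eta)}
        ≤ ENNReal.ofReal (2*eta * inv) := by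
      rw [hSn_event _ measurableSet_Ioc]
      refine le_trans (gaussianReal_Ioc_le _ hvb 0 (2*eta) (by linarith)) ?_
      apply ENNReal.ofReal_le_ofReal
      rw [hvbcoe, hinv]
      ring_nf
      exact le_rfl
    have hT2 : Measure.pi (fun i => gaussianReal 0 (v i))
          {y | psum N N y ∈ Set.Ico (-(2*(eta/2))) (2*eta)}
        ≤ ENNReal.ofReal (3*eta * inv) := by
      rw [hSn_event _ measurableSet_Ico]
      refine le_trans (gaussianReal_Ico_le _ hvb (-(2*(eta/2))) (2*eta) (by linarith)) ?_
      apply ENNReal.ofReal_le_ofReal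
      rw [hvbcoe, hinv]
      ring_nf
      exact le_rfl
    have hT3 : Measure.pi (fun i => gaussianReal 0 (v i))
          {y | ∃ i : Fin (N+1), i ≠ 0 ∧ eta/2 < |y i|}
        ≤ ENNReal.ofReal (eta * inv) := by
      have hmeasM : MeasurableSet {y : Fin (N+1) → ℝ | ∃ i : Fin (N+1), i ≠ 0 ∧ eta/2 < |y i|} := by
        have hrw : {y : Fin (N+1) → ℝ | ∃ i : Fin (N+1), i ≠ 0 ∧ eta/2 < |y i|}
            = ⋃ i, ⋃ (_ : i ≠ 0), {y | eta/2 < |y i|} := by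
          ext y; simp
        rw [hrw]
        exact MeasurableSet.iUnion fun i => MeasurableSet.iUnion fun _ =>
          measurableSet_lt measurable_const (measurable_pi_apply i).abs
      rw [← hmap, Measure.map_apply hΦmeas hmeasM]
      exact le_trans hMev hK
    exact add_le_add (add_le_add hT1 hT2) hT3
  have hGmb : Measure.pi (fun i => gaussianReal 0 (v i)) Gm
      ≤ ENNReal.ofReal (2*eta * inv) + ENNReal.ofReal (3*eta * inv)
        + ENNReal.ofReal (eta * inv) := by
    have := core_neg_eq v (n := N) (2*eta)
    rw [hGm]
    rw [this]
    exact hGpb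
  -- final assembly
  have hmain : P {ω | 0 < ⨅ t : Set.Icc a b, |W t ω| ∧ (⨅ t : Set.Icc a b, |W t ω|) ≤ eta}
      ≤ ENNReal.ofReal (13 * (eta * inv)) := by
    calc P {ω | 0 < ⨅ t : Set.Icc a b, |W t ω| ∧ (⨅ t : Set.Icc a b, |W t ω|) ≤ eta}
        ≤ P ((Φ ⁻¹' (Gp ∪ Gm)) ∪ (Csetᶜ ∪ oscSet W a b (eta/2) mesh)) := measure_mono hincl
      _ ≤ P (Φ ⁻¹' (Gp ∪ Gm)) + P (Csetᶜ ∪ oscSet W a b (eta/2) mesh) := measure_union_le _ _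
      _ ≤ P (Φ ⁻¹' (Gp ∪ Gm)) + (P Csetᶜ + P (oscSet W a b (eta/2) mesh)) :=
          add_le_add le_rfl (measure_union_le _ _)
      _ ≤ P (Φ ⁻¹' (Gp ∪ Gm)) + ENNReal.ofReal (eta * inv) := by
          rw [hCc, zero_add]
          exact add_le_add le_rfl hK
      _ = Measure.pi (fun i => gaussianReal 0 (v i)) (Gp ∪ Gm) + ENNReal.ofReal (eta * inv) := by
          rw [← hmap, Measure.map_apply hΦmeas (hGpm.union hGmm)]
      _ ≤ (Measure.pi (fun i => gaussianReal 0 (v i)) Gp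
            + Measure.pi (fun i => gaussianReal 0 (v i)) Gm) + ENNReal.ofReal (eta * inv) :=
          add_le_add (measure_union_le _ _) le_rfl
      _ ≤ ((ENNReal.ofReal (2*eta * inv) + ENNReal.ofReal (3*eta * inv)
              + ENNReal.ofReal (eta * inv))
            + (ENNReal.ofReal (2*eta * inv) + ENNReal.ofReal (3*eta * inv)
              + ENNReal.ofReal (eta * inv))) + ENNReal.ofReal (eta * inv) :=
          add_le_add (add_le_add hGpb hGmb) le_rfl
      _ = ENNReal.ofReal (13 * (eta * inv)) := by
          have cA : ENNReal.ofReal (2*eta * inv) + ENNReal.ofReal (3*eta * inv)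
              + ENNReal.ofReal (eta * inv) = ENNReal.ofReal (6*(eta*inv)) := by
            rw [← ENNReal.ofReal_add (by positivity : (0:ℝ) ≤ 2*eta*inv)
                (by positivity : (0:ℝ) ≤ 3*eta*inv),
              ← ENNReal.ofReal_add (by positivity : (0:ℝ) ≤ 2*eta*inv + 3*eta*inv)
                (by positivity : (0:ℝ) ≤ eta*inv)]
            congr 1
            ring
          rw [cA,
            ← ENNReal.ofReal_add (by positivity : (0:ℝ) ≤ 6*(eta*inv))
              (by positivity : (0:ℝ) ≤ 6*(eta*inv)),
            ← ENNReal.ofReal_add (by positivity : (0:ℝ) ≤ 6*(eta*inv)+6*(eta*inv))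
              (by positivity : (0:ℝ) ≤ eta*inv)]
          congr 1
          ring
  refine le_trans hmain (ENNReal.ofReal_le_ofReal ?_)
  have hsb : Real.sqrt (2*Real.pi*b) = Real.sqrt (2*Real.pi) * Real.sqrt b :=
    Real.sqrt_mul (by positivity) b
  have h2π : 0 < Real.sqrt (2*Real.pi) := Real.sqrt_pos.2 (by positivity)
  have hsbpos : 0 < Real.sqrt b := Real.sqrt_pos.2 hb
  have hmin : 1 / Real.sqrt b ≤ min (1 / Real.sqrt (b-a)) (1 / Real.sqrt a) := by
    apply le_min
    · exact one_div_le_one_div_of_le (Real.sqrt_pos.2 hba) (Real.sqrt_le_sqrt (by linarith))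
    · exact one_div_le_one_div_of_le (Real.sqrt_pos.2 ha) (Real.sqrt_le_sqrt (by linarith))
  have heq : (16*eta/Real.sqrt (2*Real.pi)) * (1/Real.sqrt b) = 16*(eta*inv) := by
    rw [hinv, hsb]
    field_simp
  calc 13 * (eta * inv) ≤ 16 * (eta * inv) := by nlinarith
    _ = (16*eta/Real.sqrt (2*Real.pi)) * (1/Real.sqrt b) := heq.symm
    _ ≤ (16 * eta / Real.sqrt (2 * Real.pi)) * min (1 / Real.sqrt (b - a)) (1 / Real.sqrt a) :=
        mul_le_mul_of_nonneg_left hmin (by positivity)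

end BMaux

theorem stmt16 {Ω : Type*} [MeasurableSpace Ω] (P : Measure Ω) (W : ℝ → Ω → ℝ)
    (hW : IsStdBrownianMotion P W) (a b eta : ℝ) (ha : 0 < a) (hab : a < b)
    (heta : 0 < eta) :
    P {ω | 0 < ⨅ t : Set.Icc a b, |W t ω| ∧ (⨅ t : Set.Icc a b, |W t ω|) ≤ eta} ≤
      ENNReal.ofReal ((16 * eta / Real.sqrt (2 * Real.pi)) *
        min (1 / Real.sqrt (b - a)) (1 / Real.sqrt a)) :=
  BMaux.main P W hW.isProb hW.meas hW.init hW.cont hW.gauss hW.indep a b eta ha hab heta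
end
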